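/- arXiv:2508.14290 — 13 statements merged into one kernel-verified Lean document; each statement's English description precedes it below -/
import Mathlib

section
/- Let (X,+) be a magma (a set with a binary operation +, no axioms assumed) with a summation system Σ satisfying: (i) invariance under permutations of ℕ: for every summable family a : ℕ → X and every permutation φ of ℕ, the family i ↦ a(φ(i)) is summable with the same sum; (ii) prefix associativity: if a : ℕ → X is summable, then the shifted family i ↦ a(i+1) is summable and Σa = a(0) + Σ(i ↦ a(i+1)); (iii) ℕ-totality: every family ℕ → X is summable. Then for every sequence x : ℕ → X there exists y ∈ X such that x(n) + y = y for every n ∈ ℕ. -/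
/-- A magma `(X,+)` with a summation system on `ℕ`-indexed families
that is invariant under permutations of `ℕ`, satisfies prefix associativity, and is
`ℕ`-total: for every sequence `x : ℕ → X` there exists `y` with `x n + y = y` for all `n`. -/
theorem stmt_1 {X : Type*} (add : X → X → X)
    (S : (ℕ → X) → X → Prop)
    (hfun : ∀ a x y, S a x → S a y → x = y)
    (hperm : ∀ (a : ℕ → X) (x : X) (φ : Equiv.Perm ℕ),
      S a x → S (fun i => a (φ i)) x)
    (hprefix : ∀ (a : ℕ → X) (x : X), S a x →
      ∃ y, S (fun i => a (i + 1)) y ∧ x = add (a 0) y)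
    (htotal : ∀ a : ℕ → X, ∃ x, S a x) :
    ∀ x : ℕ → X, ∃ y : X, ∀ n : ℕ, add (x n) y = y := by
  intro x
  set a : ℕ → X := fun i => x (Nat.unpair i).1 with ha
  obtain ⟨y, hy⟩ := htotal a
  refine ⟨y, fun n => ?_⟩
  -- the "insert one copy of x n at the front" permutation
  set f : ℕ → ℕ := fun j =>
    match j with
    | 0 => Nat.pair n 0
    | j + 1 => if (Nat.unpair j).1 = n then Nat.pair n ((Nat.unpair j).2 + 1) else j
    with hf
  have hinj : Function.Injective f := by
    intro i j hij
    match i, j with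
    | 0, 0 => rfl
    | 0, j + 1 =>
      simp only [hf] at hij
      split at hij
      · have := congrArg (fun m => (Nat.unpair m).2) hij
        simp [Nat.unpair_pair] at this
      · rename_i h
        have := congrArg (fun m => (Nat.unpair m).1) hij
        simp [Nat.unpair_pair] at this
        exact absurd this.symm h
    | i + 1, 0 =>
      simp only [hf] at hij
      split at hij
      · have := congrArg (fun m => (Nat.unpair m).2) hij
        simp [Nat.unpair_pair] at this
      · rename_i h
        have := congrArg (fun m => (Nat.unpair m).1) hij
        simp [Nat.unpair_pair] at this
        exact absurd this h
    | i + 1, j + 1 =>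
      simp only [hf] at hij
      split at hij <;> split at hij <;> rename_i h1 h2
      · have h2' := congrArg (fun m => (Nat.unpair m).2) hij
        simp [Nat.unpair_pair] at h2'
        have : i = j := by
          have := Nat.pair_unpair i
          rw [← this, h1, h2', ← h2, Nat.pair_unpair]
        omega
      · have := congrArg (fun m => (Nat.unpair m).1) hij
        simp [Nat.unpair_pair] at this
        exact absurd this.symm h2
      · have := congrArg (fun m => (Nat.unpair m).1) hij
        simp [Nat.unpair_pair] at this
        exact absurd this h1
      · omega
  have hsurj : Function.Surjective f := by
    intro m
    by_cases h1 : (Nat.unpair m).1 = n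
    · by_cases h2 : (Nat.unpair m).2 = 0
      · refine ⟨0, ?_⟩
        simp only [hf]
        rw [← Nat.pair_unpair m, h1, h2]
      · refine ⟨Nat.pair n ((Nat.unpair m).2 - 1) + 1, ?_⟩
        have he : f (Nat.pair n ((Nat.unpair m).2 - 1) + 1)
            = Nat.pair n ((Nat.unpair m).2 - 1 + 1) := by
          simp [hf, Nat.unpair_pair]
        rw [he, Nat.sub_add_cancel (Nat.one_le_iff_ne_zero.mpr h2), ← h1, Nat.pair_unpair]
    · exact ⟨m + 1, by simp only [hf, if_neg h1]⟩
  let φ : Equiv.Perm ℕ := Equiv.ofBijective f ⟨hinj, hsurj⟩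
  have hφ : ∀ j, φ j = f j := fun j => rfl
  have hyφ : S (fun i => a (φ i)) y := hperm a y φ hy
  obtain ⟨z, hz, hyz⟩ := hprefix _ _ hyφ
  have hshift : (fun i => a (φ (i + 1))) = a := by
    funext i
    simp only [hφ, hf, ha]
    split <;> rename_i h
    · rw [Nat.unpair_pair]
      simp [h]
    · rfl
  rw [hshift] at hz
  have hzy : z = y := hfun a z y hz hy
  have h0 : a (φ 0) = x n := by simp [hφ, hf, ha, Nat.unpair_pair]
  rw [hzy, h0] at hyz
  exact hyz.symm
end

section
/- (Eilenberg–Mazur swindle.) Let (X,+) be a magma with a two-sided additive identity 0 (0 + x = x + 0 = x for all x), and let Σ be a summation system on X such that whenever the constant family (a+b)_{i∈ℕ} is summable and the constant family (b+a)_{i∈ℕ} is summable, one has Σ(a+b)_{i∈ℕ} = a + Σ(b+a)_{i∈ℕ}. Assume the constant family (0)_{i∈ℕ} is summable with sum 0. Then the only element of X possessing a two-sided additive inverse is 0; that is, if a, b ∈ X satisfy a + b = 0 and b + a = 0, then a = 0. -/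
/-- Eilenberg–Mazur swindle.  Let `(X,+)` be a magma with two-sided
identity `zero` and a summation system in which
`Σ(a+b)_{i∈ℕ} = a + Σ(b+a)_{i∈ℕ}` whenever both constant sums exist, and the constant
zero family sums to `zero`.  If `a + b = zero` and `b + a = zero` then `a = zero`. -/
theorem stmt_2 {X : Type*} (add : X → X → X) (zero : X)
    (hzl : ∀ x, add zero x = x) (hzr : ∀ x, add x zero = x)
    (S : (ℕ → X) → X → Prop)
    (hfun : ∀ a x y, S a x → S a y → x = y)
    (hshift : ∀ a b s t : X,
      S (fun _ => add a b) s → S (fun _ => add b a) t → s = add a t)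
    (h0 : S (fun _ => zero) zero)
    (a b : X) (hab : add a b = zero) (hba : add b a = zero) :
    a = zero := by
  have h1 : S (fun _ => add a b) zero := by rw [hab]; exact h0
  have h2 : S (fun _ => add b a) zero := by rw [hba]; exact h0
  have := hshift a b zero zero h1 h2
  rw [hzr] at this
  exact this.symm
end

section
/- Let X be a set with a summation system Σ such that the empty family is summable, and assume that any two summable families with the same core have the same sum. Define Σ' to be the relation consisting of all pairs (x, s), where x is a family in X and s ∈ X, such that some core-extension of x is Σ-summable with sum s. Then: (1) Σ' is a partial function, hence a summation system on X; (2) Σ' extends Σ; (3) Σ' satisfies: if b is in the domain of Σ' and b is a core-extension of a, then a is in the domain of Σ' and Σ'a = Σ'b; and (4) Σ' is contained in every summation system extending Σ that satisfies property (3). -/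
/-! Families over a fixed universe `Ω` of indices are encoded as partial functions
`Ω → Option X`; the index set of a family is its domain `{ω | a ω ≠ none}`, and a
subfamily is a restriction of the partial function. -/

open Classical in
/-- The core of a family: the restriction of `a` to the indices whose entry differs
from the empty sum `z = Σ()`. -/
noncomputable def coreOf {X Ω : Type*} (z : X) (a : Ω → Option X) : Ω → Option X :=
  fun ω => if a ω = some z then none else a ω

/-- `b` is a core-extension of `a`: `a` is a restriction (subfamily) of `b` and the two
families have the same core. -/
def IsCoreExtension {X Ω : Type*} (z : X) (b a : Ω → Option X) : Prop :=
  (∀ ω, a ω ≠ none → b ω = a ω) ∧ coreOf z b = coreOf z a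

/-- If the empty family is `S`-summable with sum `z`, and any two
summable families with the same core have the same sum, then
`S' a s := ∃ b, b core-extension of a ∧ S b s` is a summation system extending `S`,
it satisfies the forward implication of the "zero means nothing" axiom, and it is
contained in every summation system extending `S` with that property. -/
theorem stmt_4 {X Ω : Type*}
    (S : (Ω → Option X) → X → Prop)
    (hfun : ∀ a x y, S a x → S a y → x = y)
    (z : X) (hz : S (fun _ => none) z)
    (hcore : ∀ a b x y, S a x → S b y → coreOf z a = coreOf z b → x = y) :
    (∀ a x y, (∃ b, IsCoreExtension z b a ∧ S b x) →
      (∃ b, IsCoreExtension z b a ∧ S b y) → x = y) ∧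
    (∀ a x, S a x → ∃ b, IsCoreExtension z b a ∧ S b x) ∧
    (∀ a b x, IsCoreExtension z b a → (∃ c, IsCoreExtension z c b ∧ S c x) →
      ∃ c, IsCoreExtension z c a ∧ S c x) ∧
    (∀ T : (Ω → Option X) → X → Prop,
      (∀ a x y, T a x → T a y → x = y) →
      (∀ a x, S a x → T a x) →
      (∀ a b x, IsCoreExtension z b a → T b x → T a x) →
      ∀ a x, (∃ b, IsCoreExtension z b a ∧ S b x) → T a x) := by
  refine ⟨?_, ?_, ?_, ?_⟩
  · rintro a x y ⟨b, ⟨_, hb⟩, hSb⟩ ⟨c, ⟨_, hc⟩, hSc⟩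
    exact hcore b c x y hSb hSc (hb.trans hc.symm)
  · exact fun a x h => ⟨a, ⟨fun _ _ => rfl, rfl⟩, h⟩
  · rintro a b x ⟨hba, hbc⟩ ⟨c, ⟨hcb, hcc⟩, hSc⟩
    refine ⟨c, ⟨fun ω hω => ?_, hcc.trans hbc⟩, hSc⟩
    rw [hcb ω (by rw [hba ω hω]; exact hω), hba ω hω]
  · rintro T _ hST hT a x ⟨b, hba, hSb⟩
    exact hT a b x hba (hST b x hSb)
end

section
/- Let X be a set with a summation system Σ that is nonempty (as a relation) and satisfies the monoid merger axiom. Let Y be the image of Σ and let Σ' be the restriction of Σ to families with values in Y. Then Σ', as a summation system on Y, satisfies: (i) every singleton family from Y is summable and sums to its unique member; (ii) reindexing invariance: if φ : I' → I is a bijection and (a_i)_{i∈I} is summable, then (a_{φ(i')})_{i'∈I'} is summable with the same sum; (iii) the empty family is summable, and if b is a core-extension of a then b is summable if and only if a is summable, in which case Σ'a = Σ'b; and (iv) every subfamily (restriction) of a summable family is summable. -/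
/-- The monoid merger axiom for a summation system `S` on `X` (families indexed by
types in the fixed universe `Type`): if `a : I → X` is summable with sum `x` and
`ψ : K → 𝒫(I)` is such that each `i ∈ I` lies in `ψ k` for exactly one `k`, then each
inner family `(a i)_{i ∈ ψ k}` is summable, and for any choice `t` of the inner sums,
the family `t : K → X` is summable with sum `x`. -/
def Merger {X : Type*} (S : (I : Type) → (I → X) → X → Prop) : Prop :=
  ∀ (I K : Type) (a : I → X) (x : X), S I a x →
    ∀ ψ : K → Set I, (∀ i : I, ∃! k : K, i ∈ ψ k) →
      (∀ k : K, ∃ s, S {i : I // i ∈ ψ k} (fun i => a i.1) s) ∧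
      (∀ t : K → X,
        (∀ k : K, S {i : I // i ∈ ψ k} (fun i => a i.1) (t k)) → S K t x)

/-- Let `S` be a nonempty summation system on `X` satisfying the
monoid merger axiom, let `Y` be the image of `S`, and let `S'` be the restriction of
`S` to families with values in `Y`.  Then `S'` satisfies: (i) singletons sum simply;
(ii) reindexing invariance; (iii) the empty family is summable with sum `z`, and a
family is summable iff any of its core-restrictions is, with the same sum; and
(iv) subfamilies of summable families are summable. -/
theorem stmt_5 {X : Type*}
    (S : (I : Type) → (I → X) → X → Prop)
    (hfun : ∀ (I : Type) (a : I → X) (x y : X), S I a x → S I a y → x = y)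
    (hne : ∃ (I : Type) (a : I → X) (x : X), S I a x)
    (hmerge : Merger S)
    (Y : Set X) (hY : Y = {x | ∃ (I : Type) (a : I → X), S I a x})
    (S' : (I : Type) → (I → Y) → Y → Prop)
    (hS' : ∀ (I : Type) (a : I → Y) (y : Y),
      S' I a y ↔ S I (fun i => (a i : X)) (y : X)) :
    (∀ (I : Type) (i₀ : I), (∀ i, i = i₀) → ∀ a : I → Y, S' I a (a i₀)) ∧
    (∀ (I I' : Type) (φ : I' → I), Function.Bijective φ →
      ∀ (a : I → Y) (y : Y), S' I a y → S' I' (fun i' => a (φ i')) y) ∧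
    (∃ z : Y, (∀ (I : Type), IsEmpty I → ∀ a : I → Y, S' I a z) ∧
      ∀ (J : Type) (b : J → Y) (s : Set J), (∀ j : J, b j ≠ z → j ∈ s) →
        ∀ y : Y, (S' J b y ↔ S' {j : J // j ∈ s} (fun j => b j.1) y)) ∧
    (∀ (I : Type) (a : I → Y) (y : Y), S' I a y →
      ∀ s : Set I, ∃ y', S' {i : I // i ∈ s} (fun i => a i.1) y') := by
  classical
  obtain ⟨Iw, aw, xw, hw⟩ := hne
  -- an empty family is summable; call its sum `z`
  obtain ⟨z, hz⟩ := (hmerge Iw Bool aw xw hw (fun b => cond b Set.univ ∅)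
    (fun i => ⟨true, trivial, fun k hk => by
      cases k with
      | false => exact absurd hk id
      | true => rfl⟩)).1 false
  have hzE : IsEmpty {i : Iw // i ∈ ((fun b => (cond b Set.univ ∅ : Set Iw)) false)} :=
    ⟨fun i => i.2⟩
  -- every family over an empty type sums to `z`
  have hempty : ∀ (E : Type), IsEmpty E → ∀ t : E → X, S E t z := by
    intro E hE t
    exact (hmerge _ E _ z hz (fun _ => ∅) (fun i => (hzE.false i).elim)).2 t
      (fun k => (hE.false k).elim)
  have hzY : z ∈ Y := by rw [hY]; exact ⟨_, _, hz⟩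
  -- singleton lemma: constants from `Y` over one-point types sum to themselves
  have hsing : ∀ c : X, c ∈ Y → ∀ (J : Type) (j₀ : J), (∀ j, j = j₀) →
      S J (fun _ => c) c := by
    intro c hc J j₀ hJ
    rw [hY] at hc
    obtain ⟨I, a, ha⟩ := hc
    have key : ∃ u, ∀ (K : Type) (k₀ : K), (∀ k, k = k₀) → S K (fun _ => u) c := by
      obtain ⟨u, hu⟩ := (hmerge I Unit a c ha (fun _ => Set.univ)
        (fun i => ⟨(), trivial, fun _ _ => rfl⟩)).1 ()
      exact ⟨u, fun K k₀ hK => (hmerge I K a c ha (fun _ => Set.univ)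
        (fun i => ⟨k₀, trivial, fun k _ => hK k⟩)).2 (fun _ => u) (fun _ => hu)⟩
    obtain ⟨u, hu⟩ := key
    have h1 : S Unit (fun _ => u) c := hu Unit () (fun _ => rfl)
    exact (hmerge Unit J (fun _ => u) c h1 (fun _ => Set.univ)
      (fun i => ⟨j₀, trivial, fun j _ => hJ j⟩)).2 (fun _ => c)
      (fun j => hu {p : Unit // p ∈ (Set.univ : Set Unit)} ⟨(), trivial⟩
        (fun k => Subtype.ext rfl))
  -- reindexing at the level of `X`
  have hreind : ∀ (I I' : Type) (φ : I' → I), Function.Bijective φ →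
      ∀ (a : I → X), (∀ i, a i ∈ Y) → ∀ x, S I a x → S I' (fun i' => a (φ i')) x := by
    intro I I' φ hφ a haY x hx
    refine (hmerge I I' a x hx (fun k => {φ k}) (fun i => ?_)).2
      (fun k => a (φ k)) (fun k => ?_)
    · obtain ⟨k, hk⟩ := hφ.2 i
      exact ⟨k, hk.symm, fun k' hk' => hφ.1 (hk'.symm.trans hk.symm)⟩
    · have hpt : ∀ m : {i : I // i ∈ ({φ k} : Set I)}, m = ⟨φ k, rfl⟩ :=
        fun m => Subtype.ext m.2
      have h := hsing (a (φ k)) (haY _) _ _ hpt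
      have heq : (fun (m : {i : I // i ∈ ({φ k} : Set I)}) => a m.1) =
          (fun _ => a (φ k)) := funext fun m => congrArg a m.2
      rw [heq]; exact h
  -- core-extension: filling in `z`'s outside `s` preserves sums
  have hext : ∀ (J : Type) (b : J → X), (∀ j, b j ∈ Y) → ∀ s : Set J,
      (∀ j, j ∉ s → b j = z) → ∀ y,
      S {j : J // j ∈ s} (fun j => b j.1) y → S J b y := by
    intro J b hbY s hbs y hy
    refine (hmerge _ J _ y hy (fun j => {k : {j' : J // j' ∈ s} | k.1 = j})
      (fun k => ⟨k.1, rfl, fun j hj => hj.symm⟩)).2 b (fun j => ?_)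
    by_cases hj : j ∈ s
    · have hpt : ∀ m : {k : {j' : J // j' ∈ s} //
          k ∈ {k' : {j' : J // j' ∈ s} | k'.1 = j}}, m = ⟨⟨j, hj⟩, rfl⟩ :=
        fun m => Subtype.ext (Subtype.ext m.2)
      have h := hsing (b j) (hbY j) _ _ hpt
      have heq : (fun (m : {k : {j' : J // j' ∈ s} //
          k ∈ {k' : {j' : J // j' ∈ s} | k'.1 = j}}) => b m.1.1) = (fun _ => b j) :=
        funext fun m => congrArg b m.2
      rw [heq]; exact h
    · have hE : IsEmpty {k : {j' : J // j' ∈ s} //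
          k ∈ {k' : {j' : J // j' ∈ s} | k'.1 = j}} :=
        ⟨fun m => hj (m.2 ▸ m.1.2)⟩
      rw [hbs j hj]
      exact hempty _ hE _
  -- subfamilies of summable families are summable
  have hsub : ∀ (J : Type) (b : J → X) (y : X), S J b y → ∀ s : Set J,
      ∃ y', S {j : J // j ∈ s} (fun j => b j.1) y' := by
    intro J b y hby s
    have hψ : ∀ j : J, ∃! k : Bool, j ∈ (cond k s sᶜ : Set J) := by
      intro j
      by_cases hj : j ∈ s
      · exact ⟨true, hj, fun k hk => by
          cases k with
          | false => exact absurd hj hk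
          | true => rfl⟩
      · exact ⟨false, hj, fun k hk => by
          cases k with
          | false => rfl
          | true => exact absurd hk hj⟩
    exact (hmerge J Bool b y hby (fun k => cond k s sᶜ) hψ).1 true
  refine ⟨?_, ?_, ?_, ?_⟩
  · -- (i) singletons
    intro I i₀ hI a
    rw [hS']
    have h := hsing (a i₀) (a i₀).2 I i₀ hI
    have heq : (fun i => ((a i : X))) = fun _ => ((a i₀ : X)) :=
      funext fun i => by rw [hI i]
    rw [heq]; exact h
  · -- (ii) reindexing
    intro I I' φ hφ a y h
    rw [hS'] at h ⊢
    exact hreind I I' φ hφ (fun i => (a i : X)) (fun i => (a i).2) y h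
  · -- (iii) empty sums and core-extensions
    refine ⟨⟨z, hzY⟩, fun I hI a => ?_, fun J b s hbs y => ?_⟩
    · rw [hS']; exact hempty I hI _
    · have hbs' : ∀ j, j ∉ s → ((b j : X)) = z := by
        intro j hj
        by_contra hne'
        exact hj (hbs j (fun h => hne' (congrArg Subtype.val h)))
      constructor
      · intro h
        rw [hS'] at h
        obtain ⟨y', hy'⟩ := hsub J (fun j => (b j : X)) y h s
        have h2 : S J (fun j => (b j : X)) y' :=
          hext J _ (fun j => (b j).2) s hbs' y' hy'
        have hyy : y' = (y : X) := hfun _ _ _ _ h2 h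
        rw [hS']
        exact hyy ▸ hy'
      · intro h
        rw [hS'] at h ⊢
        exact hext J _ (fun j => (b j).2) s hbs' _ h
  · -- (iv) subfamilies
    intro I a y h s
    rw [hS'] at h
    obtain ⟨y', hy'⟩ := hsub I (fun i => (a i : X)) y h s
    have hy'Y : y' ∈ Y := by rw [hY]; exact ⟨_, _, hy'⟩
    exact ⟨⟨y', hy'Y⟩, (hS' _ _ _).mpr hy'⟩
end

section
/- Let (X,+) be an abelian group with a summation system Σ that is surjective and satisfies the monoid merger axiom and additive extension closure. Then Σ satisfies addition functoriality — for all summable families a and b, the zero-extended componentwise sum a + b is summable with Σ(a+b) = Σa + Σb — if and only if a + b is summable whenever a and b are summable families with distinct index sets. -/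
/-! Families over a fixed universe `Ω` of indices are encoded as partial functions
`Ω → Option X`; the index set of a family is its domain `{ω | a ω ≠ none}`. -/

open Classical in
/-- The restriction of a family to a subset `s` of the index universe. -/
noncomputable def restrictFam {X Ω : Type*} (a : Ω → Option X) (s : Set Ω) :
    Ω → Option X :=
  fun ω => if ω ∈ s then a ω else none

/-- The componentwise sum of two families, defined on the union of their index sets,
each family being extended by `0` outside its own index set. -/
def addFam {X Ω : Type*} [Add X] (a b : Ω → Option X) : Ω → Option X :=
  fun ω =>
    match a ω, b ω with
    | none, none => none
    | some x, none => some x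
    | none, some y => some y
    | some x, some y => some (x + y)

open Classical in
/-- The extension of a family by a single new entry `x` at an index `ℓ`. -/
noncomputable def extendFam {X Ω : Type*} (a : Ω → Option X) (ℓ : Ω) (x : X) :
    Ω → Option X :=
  fun ω => if ω = ℓ then some x else a ω

open Classical in
/-- The family with index set `K` and entries given by `t`. -/
noncomputable def maskFam {X Ω : Type*} (K : Set Ω) (t : Ω → X) : Ω → Option X :=
  fun ω => if ω ∈ K then some (t ω) else none

/-- The monoid merger axiom: if `a` is summable with sum `x` and `ψ` assigns to each
`k ∈ K` a subset of the index set of `a` so that each index of `a` lies in `ψ k` for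
exactly one `k ∈ K`, then each inner restriction is summable, and for any choice `t`
of the inner sums the family `(t k)_{k ∈ K}` is summable with sum `x`. -/
def MergerOpt {X Ω : Type*} (S : (Ω → Option X) → X → Prop) : Prop :=
  ∀ (a : Ω → Option X) (x : X), S a x →
    ∀ (K : Set Ω) (ψ : Ω → Set Ω),
      (∀ k ∈ K, ψ k ⊆ {ω | a ω ≠ none}) →
      (∀ ω, a ω ≠ none → ∃! k, k ∈ K ∧ ω ∈ ψ k) →
      (∀ k ∈ K, ∃ s, S (restrictFam a (ψ k)) s) ∧
      (∀ t : Ω → X, (∀ k ∈ K, S (restrictFam a (ψ k)) (t k)) →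
        S (maskFam K t) x)
section AuxFam
variable {X Ω : Type*}

lemma addFam_none_iff [Add X] (a b : Ω → Option X) (ω : Ω) :
    addFam a b ω = none ↔ a ω = none ∧ b ω = none := by
  cases ha : a ω <;> cases hb : b ω <;> simp [addFam, ha, hb]

lemma addFam_dom [Add X] (a b : Ω → Option X) :
    {ω | addFam a b ω ≠ none} = {ω | a ω ≠ none} ∪ {ω | b ω ≠ none} := by
  ext ω
  simp only [Set.mem_setOf_eq, Set.mem_union, ne_eq, addFam_none_iff]
  tauto

lemma addFam_comm [AddCommMonoid X] (a b : Ω → Option X) :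
    addFam a b = addFam b a := by
  funext ω; cases ha : a ω <;> cases hb : b ω <;> simp [addFam, ha, hb, add_comm]

lemma restrictFam_eq_self (a : Ω → Option X) (s : Set Ω)
    (h : ∀ ω, a ω ≠ none → ω ∈ s) : restrictFam a s = a := by
  funext ω
  by_cases hω : ω ∈ s
  · simp [restrictFam, hω]
  · have : a ω = none := by
      by_contra hne; exact hω (h ω hne)
    simp [restrictFam, hω, this]

lemma restrictFam_dom (a : Ω → Option X) (s : Set Ω) :
    {ω | restrictFam a s ω ≠ none} = {ω | a ω ≠ none} ∩ s := by
  ext ω; by_cases hω : ω ∈ s <;> simp [restrictFam, hω]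

lemma maskFam_dom (K : Set Ω) (t : Ω → X) :
    {ω | maskFam K t ω ≠ none} = K := by
  ext ω; by_cases hω : ω ∈ K <;> simp [maskFam, hω]

end AuxFam
open scoped Classical

set_option linter.unusedSectionVars false

section AuxS
variable {X Ω : Type*} [AddCommGroup X] {S : (Ω → Option X) → X → Prop}

lemma sum_single (hsurj : ∀ x : X, ∃ a, S a x) (hmerge : MergerOpt S)
    (k : Ω) (v : X) : S (maskFam {k} (fun _ => v)) v := by
  obtain ⟨a, ha⟩ := hsurj v
  have h := hmerge a v ha {k} (fun _ => {ω | a ω ≠ none})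
    (fun _ _ => le_refl _)
    (fun ω hω => ⟨k, ⟨rfl, hω⟩, fun k' h' => h'.1⟩)
  have hre : restrictFam a {ω | a ω ≠ none} = a := restrictFam_eq_self a _ (fun ω h => h)
  have h2 := h.2 (fun _ => v) (by
    intro k' _
    show S (restrictFam a {ω | a ω ≠ none}) v
    rw [hre]
    exact ha)
  exact h2

lemma empty_sum_zero [Nonempty Ω]
    (hfun : ∀ a x y, S a x → S a y → x = y)
    (hsurj : ∀ x : X, ∃ a, S a x) (hmerge : MergerOpt S)
    (hext : ∀ (a : Ω → Option X) (x : X), S a x →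
      ∀ (ℓ : Ω) (y : X), a ℓ = none → S (extendFam a ℓ y) (x + y))
    {z : X} (hz : S (fun _ => none) z) : z = 0 := by
  obtain ⟨ω0⟩ := ‹Nonempty Ω›
  have h1 := hext _ _ hz ω0 0 rfl
  have h2 : extendFam (fun _ => (none : Option X)) ω0 (0:X)
      = maskFam {ω0} (fun _ => (0:X)) := by
    funext ω; by_cases hω : ω = ω0 <;> simp [extendFam, maskFam, hω]
  rw [h2] at h1
  have h3 := sum_single hsurj hmerge ω0 (0:X)
  have := hfun _ _ _ h1 h3
  simpa using this

lemma sum_pair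
    (hsurj : ∀ x : X, ∃ a, S a x) (hmerge : MergerOpt S)
    (hext : ∀ (a : Ω → Option X) (x : X), S a x →
      ∀ (ℓ : Ω) (y : X), a ℓ = none → S (extendFam a ℓ y) (x + y))
    {k1 k2 : Ω} (hne : k1 ≠ k2) (p q : X) :
    S (maskFam {k1, k2} (fun k => if k = k1 then p else q)) (p + q) := by
  have h1 := sum_single hsurj hmerge k1 p
  have h2 := hext _ _ h1 k2 q (by
    simp [maskFam, Set.mem_singleton_iff, Ne.symm hne])
  have h3 : extendFam (maskFam {k1} fun _ => p) k2 q
      = maskFam {k1, k2} (fun k => if k = k1 then p else q) := by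
    funext ω
    by_cases hω2 : ω = k2
    · subst hω2
      simp [extendFam, maskFam, Ne.symm hne]
    · by_cases hω1 : ω = k1
      · subst hω1
        simp [extendFam, maskFam, hne]
      · simp [extendFam, maskFam, hω1, hω2]
  rw [h3] at h2
  exact h2

lemma sum_split
    (hfun : ∀ a x y, S a x → S a y → x = y)
    (hsurj : ∀ x : X, ∃ a, S a x) (hmerge : MergerOpt S)
    (hext : ∀ (a : Ω → Option X) (x : X), S a x →
      ∀ (ℓ : Ω) (y : X), a ℓ = none → S (extendFam a ℓ y) (x + y))
    {k1 k2 : Ω} (hkk : k1 ≠ k2)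
    {c : Ω → Option X} {z : X} (hc : S c z) {P Q : Set Ω}
    (hP : P ⊆ {ω | c ω ≠ none}) (hQ : Q ⊆ {ω | c ω ≠ none})
    (hPQ : ∀ ω, ω ∈ P → ω ∉ Q) (hcov : ∀ ω, c ω ≠ none → ω ∈ P ∨ ω ∈ Q) :
    ∃ p q, S (restrictFam c P) p ∧ S (restrictFam c Q) q ∧ p + q = z := by
  set ψ : Ω → Set Ω := fun k => if k = k1 then P else Q with hψ
  have hψ1 : ψ k1 = P := by simp [hψ]
  have hψ2 : ψ k2 = Q := by simp [hψ, Ne.symm hkk]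
  have hsub : ∀ k ∈ ({k1, k2} : Set Ω), ψ k ⊆ {ω | c ω ≠ none} := by
    intro k _
    by_cases h : k = k1 <;> simp [hψ, h, hP, hQ]
  have huniq : ∀ ω, c ω ≠ none → ∃! k, k ∈ ({k1,k2} : Set Ω) ∧ ω ∈ ψ k := by
    intro ω hω
    rcases hcov ω hω with h | h
    · refine ⟨k1, ⟨Set.mem_insert _ _, by rw [hψ1]; exact h⟩, ?_⟩
      rintro k ⟨hk, hmem⟩
      simp only [Set.mem_insert_iff, Set.mem_singleton_iff] at hk
      rcases hk with rfl | rfl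
      · rfl
      · by_cases e : k = k1
        · exact e
        · exfalso
          rw [show ψ k = Q by simp [hψ, e]] at hmem
          exact hPQ ω h hmem
    · refine ⟨k2, ⟨Set.mem_insert_iff.mpr (Or.inr rfl), by rw [hψ2]; exact h⟩, ?_⟩
      rintro k ⟨hk, hmem⟩
      simp only [Set.mem_insert_iff, Set.mem_singleton_iff] at hk
      rcases hk with rfl | rfl
      · exfalso
        rw [hψ1] at hmem
        exact hPQ ω hmem h
      · rfl
  obtain ⟨hin, hout⟩ := hmerge c z hc {k1, k2} ψ hsub huniq
  obtain ⟨p, hp⟩ := hin k1 (Set.mem_insert _ _)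
  obtain ⟨q, hq⟩ := hin k2 (Set.mem_insert_iff.mpr (Or.inr rfl))
  rw [hψ1] at hp
  rw [hψ2] at hq
  refine ⟨p, q, hp, hq, ?_⟩
  have ht := hout (fun k => if k = k1 then p else q) (by
    intro k hk
    simp only [Set.mem_insert_iff, Set.mem_singleton_iff] at hk
    rcases hk with rfl | rfl
    · rw [hψ1]; simpa using hp
    · rw [hψ2]; simpa [Ne.symm hkk] using hq)
  exact hfun _ _ _ (sum_pair hsurj hmerge hext hkk p q) ht

end AuxS
section AuxS2
variable {X Ω : Type*} [AddCommGroup X] {S : (Ω → Option X) → X → Prop}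

lemma sum_absorb_single
    (hfun : ∀ a x y, S a x → S a y → x = y)
    (hsurj : ∀ x : X, ∃ a, S a x) (hmerge : MergerOpt S)
    (hext : ∀ (a : Ω → Option X) (x : X), S a x →
      ∀ (ℓ : Ω) (y : X), a ℓ = none → S (extendFam a ℓ y) (x + y))
    {k1 k2 : Ω} (hkk : k1 ≠ k2)
    {c : Ω → Option X} {z : X} (hc : S c z) {ω1 : Ω} {u : X}
    (hu : c ω1 = some u) (v : X) :
    S (addFam c (maskFam {ω1} (fun _ => v))) (z + v) := by
  obtain ⟨p, q, hp, hq, hpq⟩ := sum_split hfun hsurj hmerge hext hkk hc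
    (P := {ω | c ω ≠ none} \ {ω1}) (Q := {ω1})
    (fun ω hω => hω.1)
    (by intro ω hω; rw [Set.mem_singleton_iff] at hω; subst hω; simp [hu])
    (fun ω hω => hω.2)
    (by intro ω hω; by_cases h : ω = ω1
        · exact Or.inr h
        · exact Or.inl ⟨hω, h⟩)
  have hres : restrictFam c {ω1} = maskFam {ω1} (fun _ => u) := by
    funext ω
    by_cases h : ω = ω1 <;> simp [restrictFam, maskFam, h, hu]
  rw [hres] at hq
  have hqu : q = u := hfun _ _ _ hq (sum_single hsurj hmerge ω1 u)
  have h1 := hext _ _ hp ω1 (u + v) (by simp [restrictFam])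
  have h2 : extendFam (restrictFam c ({ω | c ω ≠ none} \ {ω1})) ω1 (u + v)
      = addFam c (maskFam {ω1} (fun _ => v)) := by
    funext ω
    by_cases h : ω = ω1
    · subst h
      simp [extendFam, addFam, maskFam, hu]
    · cases hcω : c ω <;>
        simp [extendFam, addFam, maskFam, restrictFam, Set.mem_diff,
          Set.mem_setOf_eq, Set.mem_singleton_iff, h, hcω]
  rw [h2] at h1
  have h3 : z + v = p + (u + v) := by rw [← hpq, hqu]; abel
  rw [h3]
  exact h1

lemma sum_reindex
    (hsurj : ∀ x : X, ∃ a, S a x) (hmerge : MergerOpt S)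
    {a : Ω → Option X} {x : X} (ha : S a x) (K : Set Ω) (σ : Ω → Ω) (t : Ω → X)
    (hval : ∀ k ∈ K, a (σ k) = some (t k))
    (huniq : ∀ ω, a ω ≠ none → ∃! k, k ∈ K ∧ σ k = ω) :
    S (maskFam K t) x := by
  have h := hmerge a x ha K (fun k => {σ k})
    (by intro k hk ω hω
        rw [Set.mem_singleton_iff] at hω
        subst hω
        simp [hval k hk])
    (by intro ω hω
        obtain ⟨k, ⟨hk, hσ⟩, hu⟩ := huniq ω hω
        exact ⟨k, ⟨hk, by simp [hσ]⟩,
          fun k' hk' => hu k' ⟨hk'.1, by simpa using (hk'.2 : ω ∈ {σ k'}).symm⟩⟩)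
  refine h.2 t ?_
  intro k hk
  have hres : restrictFam a {σ k} = maskFam {σ k} (fun _ => t k) := by
    funext ω
    by_cases h' : ω = σ k <;> simp [restrictFam, maskFam, h', hval k hk]
  show S (restrictFam a {σ k}) (t k)
  rw [hres]
  exact sum_single hsurj hmerge _ _

lemma sum_disjoint
    (hfun : ∀ a x y, S a x → S a y → x = y)
    (hsurj : ∀ x : X, ∃ a, S a x) (hmerge : MergerOpt S)
    (hext : ∀ (a : Ω → Option X) (x : X), S a x →
      ∀ (ℓ : Ω) (y : X), a ℓ = none → S (extendFam a ℓ y) (x + y))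
    (H : ∀ (a b : Ω → Option X) (x y : X), S a x → S b y →
      {ω | a ω ≠ none} ≠ {ω | b ω ≠ none} → ∃ z, S (addFam a b) z)
    {k1 k2 : Ω} (hkk : k1 ≠ k2)
    {a b : Ω → Option X} {x y : X} (ha : S a x) (hb : S b y)
    (hdisj : ∀ ω, a ω ≠ none → b ω = none) :
    S (addFam a b) (x + y) := by
  have : Nonempty Ω := ⟨k1⟩
  by_cases heq : {ω | a ω ≠ none} = {ω | b ω ≠ none}
  · have hae : ∀ ω, a ω = none := by
      intro ω; by_contra h
      have hbω : ω ∈ {ω | b ω ≠ none} := heq ▸ h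
      exact hbω (hdisj ω h)
    have hbe : ∀ ω, b ω = none := by
      intro ω; by_contra h
      have haω : ω ∈ {ω | a ω ≠ none} := heq.symm ▸ h
      exact (h : b ω ≠ none) (hdisj ω haω)
    have haeq : a = fun _ => none := funext hae
    have hbeq : b = fun _ => none := funext hbe
    have hx0 : x = 0 := empty_sum_zero hfun hsurj hmerge hext (haeq ▸ ha)
    have hy0 : y = 0 := empty_sum_zero hfun hsurj hmerge hext (hbeq ▸ hb)
    have hab : addFam a b = a := by
      funext ω; simp [addFam, hae ω, hbe ω]
    rw [hab, hx0, hy0, add_zero]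
    rw [hx0] at ha
    exact ha
  · obtain ⟨z, hz⟩ := H a b x y ha hb heq
    have hdom := addFam_dom a b
    obtain ⟨p, q, hp, hq, hpq⟩ := sum_split hfun hsurj hmerge hext hkk hz
      (P := {ω | a ω ≠ none}) (Q := {ω | b ω ≠ none})
      (by rw [hdom]; exact Set.subset_union_left)
      (by rw [hdom]; exact Set.subset_union_right)
      (by intro ω hω hω'; exact hω' (hdisj ω hω))
      (by intro ω hω
          have h' : ω ∈ {ω | addFam a b ω ≠ none} := hω
          rw [hdom] at h'
          exact h')
    have hra : restrictFam (addFam a b) {ω | a ω ≠ none} = a := by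
      funext ω
      by_cases h : a ω = none
      · simp [restrictFam, h]
      · have hbω := hdisj ω h
        cases haω : a ω with
        | none => exact absurd haω h
        | some u => simp [restrictFam, addFam, haω, hbω, h]
    have hrb : restrictFam (addFam a b) {ω | b ω ≠ none} = b := by
      funext ω
      by_cases h : b ω = none
      · simp [restrictFam, h]
      · have haω : a ω = none := by
          by_contra h'
          exact h (hdisj ω h')
        cases hbω : b ω with
        | none => exact absurd hbω h
        | some v => simp [restrictFam, addFam, haω, hbω, h]
    rw [hra] at hp
    rw [hrb] at hq
    rw [hfun _ _ _ ha hp, hfun _ _ _ hb hq]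
    rw [hpq]
    exact hz

end AuxS2
section AuxS3
variable {X Ω : Type*} [AddCommGroup X] {S : (Ω → Option X) → X → Prop}

lemma addFam_empty_right (a b : Ω → Option X) (hb : ∀ ω, b ω = none) :
    addFam a b = a := by
  funext ω
  cases ha : a ω <;> simp [addFam, ha, hb ω]

lemma addFam_single_of_none {c : Ω → Option X} {ω1 : Ω} (h : c ω1 = none) (v : X) :
    extendFam c ω1 v = addFam c (maskFam {ω1} (fun _ => v)) := by
  funext ω
  by_cases hω : ω = ω1
  · subst hω
    simp [extendFam, addFam, maskFam, h]
  · cases hc : c ω <;> simp [extendFam, addFam, maskFam, hω, hc]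

lemma sum_add_finite
    (hfun : ∀ a x y, S a x → S a y → x = y)
    (hsurj : ∀ x : X, ∃ a, S a x) (hmerge : MergerOpt S)
    (hext : ∀ (a : Ω → Option X) (x : X), S a x →
      ∀ (ℓ : Ω) (y : X), a ℓ = none → S (extendFam a ℓ y) (x + y))
    {k1 k2 : Ω} (hkk : k1 ≠ k2) :
    ∀ (n : ℕ) (a b : Ω → Option X) (x y : X), S a x → S b y →
      ∀ (hfin : {ω | b ω ≠ none}.Finite), hfin.toFinset.card = n →
      S (addFam a b) (x + y) := by
  have hne : Nonempty Ω := ⟨k1⟩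
  intro n
  induction n with
  | zero =>
    intro a b x y ha hb hfin hcard
    have hbe : ∀ ω, b ω = none := by
      intro ω
      by_contra h
      have : ω ∈ hfin.toFinset := by simpa using h
      rw [Finset.card_eq_zero.mp hcard] at this
      exact absurd this (Finset.notMem_empty ω)
    have hy0 : y = 0 := empty_sum_zero hfun hsurj hmerge hext ((funext hbe) ▸ hb)
    rw [addFam_empty_right a b hbe, hy0, add_zero]
    exact ha
  | succ n ih =>
    intro a b x y ha hb hfin hcard
    have hpos : 0 < hfin.toFinset.card := by omega
    obtain ⟨ω1, hω1⟩ := Finset.card_pos.mp hpos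
    have hω1' : b ω1 ≠ none := by simpa using hω1
    obtain ⟨v, hv⟩ : ∃ v, b ω1 = some v := by
      cases hb1 : b ω1 with
      | none => exact absurd hb1 hω1'
      | some v => exact ⟨v, rfl⟩
    obtain ⟨y', v', hy', hv', hsum⟩ := sum_split hfun hsurj hmerge hext hkk hb
      (P := {ω | b ω ≠ none} \ {ω1}) (Q := {ω1})
      (fun ω hω => hω.1)
      (by intro ω hω; rw [Set.mem_singleton_iff] at hω; subst hω; simpa using hω1')
      (fun ω hω => hω.2)
      (by intro ω hω; by_cases h : ω = ω1
          · exact Or.inr h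
          · exact Or.inl ⟨hω, h⟩)
    have hres : restrictFam b {ω1} = maskFam {ω1} (fun _ => v) := by
      funext ω
      by_cases h : ω = ω1 <;> simp [restrictFam, maskFam, h, hv]
    rw [hres] at hv'
    have hvv : v' = v := hfun _ _ _ hv' (sum_single hsurj hmerge ω1 v)
    set b' := restrictFam b ({ω | b ω ≠ none} \ {ω1}) with hb'def
    have hb'dom : {ω | b' ω ≠ none} = {ω | b ω ≠ none} \ {ω1} := by
      rw [hb'def, restrictFam_dom]
      ext ω
      simp only [Set.mem_inter_iff, Set.mem_diff, Set.mem_setOf_eq,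
        Set.mem_singleton_iff]
      tauto
    have hfin' : {ω | b' ω ≠ none}.Finite := by
      rw [hb'dom]; exact hfin.diff
    have htoF : hfin'.toFinset = hfin.toFinset.erase ω1 := by
      ext ω
      simp [Set.Finite.mem_toFinset, hb'dom, Set.mem_diff, Finset.mem_erase,
        and_comm]
    have hcard' : hfin'.toFinset.card = n := by
      rw [htoF, Finset.card_erase_of_mem hω1, hcard]
      rfl
    have hIH := ih a b' x y' ha hy' hfin' hcard'
    have hb'ω1 : b' ω1 = none := by
      rw [hb'def]
      simp [restrictFam]
    have key : addFam (addFam a b') (maskFam {ω1} (fun _ => v)) = addFam a b := by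
      funext ω
      by_cases h : ω = ω1
      · subst h
        cases haω : a ω <;>
          simp [addFam, maskFam, haω, hb'ω1, hv]
      · have hb'ω : b' ω = b ω := by
          rw [hb'def]
          by_cases hP : ω ∈ {ω | b ω ≠ none} \ {ω1}
          · simp [restrictFam, hP]
          · have : b ω = none := by
              by_contra hbn
              exact hP ⟨hbn, h⟩
            simp [restrictFam, hP, this]
        cases haω : a ω <;> cases hbω : b ω <;>
          simp [addFam, maskFam, haω, hbω, h, hb'ω]
    have hfinal : S (addFam (addFam a b') (maskFam {ω1} (fun _ => v))) ((x + y') + v) := by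
      cases hc1 : (addFam a b') ω1 with
      | none =>
        have := hext _ _ hIH ω1 v hc1
        rwa [addFam_single_of_none hc1 v] at this
      | some u =>
        exact sum_absorb_single hfun hsurj hmerge hext hkk hIH hc1 v
    rw [key] at hfinal
    have : x + y = (x + y') + v := by
      rw [← hsum, hvv]
      abel
    rw [this]
    exact hfinal

end AuxS3
section AuxS4
variable {X Ω : Type*} [AddCommGroup X] {S : (Ω → Option X) → X → Prop}

lemma sum_add_infinite
    (hfun : ∀ a x y, S a x → S a y → x = y)
    (hsurj : ∀ x : X, ∃ a, S a x) (hmerge : MergerOpt S)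
    (hext : ∀ (a : Ω → Option X) (x : X), S a x →
      ∀ (ℓ : Ω) (y : X), a ℓ = none → S (extendFam a ℓ y) (x + y))
    (H : ∀ (a b : Ω → Option X) (x y : X), S a x → S b y →
      {ω | a ω ≠ none} ≠ {ω | b ω ≠ none} → ∃ z, S (addFam a b) z)
    {a b : Ω → Option X} {x y : X} (ha : S a x) (hb : S b y)
    (hinf : {ω | b ω ≠ none}.Infinite) :
    S (addFam a b) (x + y) := by
  have hΩinf : Infinite Ω := Set.infinite_univ_iff.mp (hinf.mono (Set.subset_univ _))
  obtain ⟨k1, k2, hkk⟩ := exists_pair_ne Ω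
  obtain ⟨e⟩ : Nonempty ((Ω ⊕ Ω) ≃ Ω) := by
    rw [← Cardinal.eq]
    simp [Cardinal.mk_sum, Cardinal.add_eq_self (Cardinal.aleph0_le_mk Ω)]
  set α : Ω → Ω := fun ω => e (Sum.inl ω) with hα
  set β : Ω → Ω := fun ω => e (Sum.inr ω) with hβ
  have hαβ : ∀ ω ω', α ω ≠ β ω' := by
    intro ω ω' h
    have := e.injective h
    simp at this
  have hαinj : ∀ ω ω', α ω = α ω' → ω = ω' := by
    intro ω ω' h
    have := e.injective h
    simpa using this
  have hβinj : ∀ ω ω', β ω = β ω' → ω = ω' := by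
    intro ω ω' h
    have := e.injective h
    simpa using this
  set A := {ω | a ω ≠ none} with hA
  set B := {ω | b ω ≠ none} with hB
  set σ : Ω → Ω := fun γ => Sum.elim id id (e.symm γ) with hσ
  have hσα : ∀ ω, σ (α ω) = ω := by intro ω; simp [hσ, hα]
  have hσβ : ∀ ω, σ (β ω) = ω := by intro ω; simp [hσ, hβ]
  set t0 : Ω → X := fun γ => (a (σ γ)).getD 0 with ht0
  set t1 : Ω → X := fun γ => (b (σ γ)).getD 0 with ht1
  have hsome : ∀ (c : Ω → Option X) (ω : Ω), c ω ≠ none → c ω = some ((c ω).getD 0) := by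
    intro c ω h
    cases hc : c ω with
    | none => exact absurd hc h
    | some u => rfl
  have ha' : S (maskFam (α '' A) t0) x := by
    refine sum_reindex hsurj hmerge ha _ σ t0 ?_ ?_
    · rintro γ ⟨ω, hω, rfl⟩
      rw [hσα]
      have : t0 (α ω) = (a ω).getD 0 := by rw [ht0]; simp [hσα]
      rw [this]
      exact hsome a ω hω
    · intro ω hω
      refine ⟨α ω, ⟨⟨ω, hω, rfl⟩, hσα ω⟩, ?_⟩
      rintro γ ⟨⟨ω', hω', rfl⟩, hσγ⟩
      rw [hσα] at hσγ
      rw [hσγ]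
  have hb' : S (maskFam (β '' B) t1) y := by
    refine sum_reindex hsurj hmerge hb _ σ t1 ?_ ?_
    · rintro γ ⟨ω, hω, rfl⟩
      rw [hσβ]
      have : t1 (β ω) = (b ω).getD 0 := by rw [ht1]; simp [hσβ]
      rw [this]
      exact hsome b ω hω
    · intro ω hω
      refine ⟨β ω, ⟨⟨ω, hω, rfl⟩, hσβ ω⟩, ?_⟩
      rintro γ ⟨⟨ω', hω', rfl⟩, hσγ⟩
      rw [hσβ] at hσγ
      rw [hσγ]
  have hdisj : ∀ γ, maskFam (α '' A) t0 γ ≠ none → maskFam (β '' B) t1 γ = none := by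
    intro γ h
    have h1 : γ ∈ α '' A := by
      by_contra hn
      exact h (by simp [maskFam, hn])
    have h2 : γ ∉ β '' B := by
      rintro ⟨ω', _, rfl⟩
      obtain ⟨ω, _, hαω⟩ := h1
      exact hαβ ω ω' hαω
    simp [maskFam, h2]
  set c := addFam (maskFam (α '' A) t0) (maskFam (β '' B) t1) with hc
  have hcsum : S c (x + y) := sum_disjoint hfun hsurj hmerge hext H hkk ha' hb' hdisj
  have hcdom : {γ | c γ ≠ none} = α '' A ∪ β '' B := by
    rw [hc, addFam_dom, maskFam_dom, maskFam_dom]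
  have hcα : ∀ ω ∈ A, c (α ω) = some ((a ω).getD 0) := by
    intro ω hω
    have h2 : α ω ∉ β '' B := by
      rintro ⟨ω', _, h'⟩
      exact hαβ ω ω' h'.symm
    have hmem1 : α ω ∈ α '' A := ⟨ω, hω, rfl⟩
    have m1 : maskFam (α '' A) t0 (α ω) = some ((a ω).getD 0) := by
      simp [maskFam, hmem1, ht0, hσα]
    have m2 : maskFam (β '' B) t1 (α ω) = none := by
      simp only [maskFam]
      rw [if_neg h2]
    rw [hc]
    simp [addFam, m1, m2]
  have hcβ : ∀ ω ∈ B, c (β ω) = some ((b ω).getD 0) := by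
    intro ω hω
    have h2 : β ω ∉ α '' A := by
      rintro ⟨ω', _, h'⟩
      exact hαβ ω' ω h'
    have hmem1 : β ω ∈ β '' B := ⟨ω, hω, rfl⟩
    have m1 : maskFam (β '' B) t1 (β ω) = some ((b ω).getD 0) := by
      simp [maskFam, hmem1, ht1, hσβ]
    have m2 : maskFam (α '' A) t0 (β ω) = none := by
      simp only [maskFam]
      rw [if_neg h2]
    rw [hc]
    simp [addFam, m1, m2]
  set t : Ω → X := fun ω => (a ω).getD 0 + (b ω).getD 0 with ht
  set ψ : Ω → Set Ω := fun ω => {γ | (ω ∈ A ∧ γ = α ω) ∨ (ω ∈ B ∧ γ = β ω)} with hψ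
  have hsub : ∀ k ∈ A ∪ B, ψ k ⊆ {γ | c γ ≠ none} := by
    intro k _ γ hγ
    rw [hcdom]
    rcases hγ with ⟨hk, rfl⟩ | ⟨hk, rfl⟩
    · exact Or.inl ⟨k, hk, rfl⟩
    · exact Or.inr ⟨k, hk, rfl⟩
  have huniq : ∀ γ, c γ ≠ none → ∃! k, k ∈ A ∪ B ∧ γ ∈ ψ k := by
    intro γ hγ
    have hmem : γ ∈ α '' A ∪ β '' B := by rw [← hcdom]; exact hγ
    rcases hmem with ⟨ω0, hω0, rfl⟩ | ⟨ω0, hω0, rfl⟩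
    · refine ⟨ω0, ⟨Or.inl hω0, Or.inl ⟨hω0, rfl⟩⟩, ?_⟩
      rintro k ⟨_, hmem'⟩
      rcases hmem' with ⟨_, hγ'⟩ | ⟨_, hγ'⟩
      · exact (hαinj ω0 k hγ').symm
      · exact absurd hγ' (hαβ ω0 k)
    · refine ⟨ω0, ⟨Or.inr hω0, Or.inr ⟨hω0, rfl⟩⟩, ?_⟩
      rintro k ⟨_, hmem'⟩
      rcases hmem' with ⟨_, hγ'⟩ | ⟨_, hγ'⟩
      · exact absurd hγ'.symm (hαβ k ω0)
      · exact (hβinj ω0 k hγ').symm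
  obtain ⟨hin, hout⟩ := hmerge c (x + y) hcsum (A ∪ B) ψ hsub huniq
  have hinner : ∀ k ∈ A ∪ B, S (restrictFam c (ψ k)) (t k) := by
    intro k hk
    have htk : t k = (a k).getD 0 + (b k).getD 0 := rfl
    by_cases hkA : k ∈ A <;> by_cases hkB : k ∈ B
    · have hψk : ψ k = {α k, β k} := by
        ext γ
        simp [hψ, hkA, hkB]
      have hres : restrictFam c (ψ k) = maskFam {α k, β k}
          (fun γ => if γ = α k then (a k).getD 0 else (b k).getD 0) := by
        funext γ
        by_cases h1 : γ = α k
        · subst h1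
          have hm : α k ∈ ψ k := by rw [hψk]; exact Set.mem_insert _ _
          simp only [restrictFam, if_pos hm]
          rw [hcα k hkA]
          simp [maskFam]
        · by_cases h2 : γ = β k
          · subst h2
            have hm : β k ∈ ψ k := by
              rw [hψk]; exact Set.mem_insert_iff.mpr (Or.inr rfl)
            have hne2 : ¬(β k = α k) := fun h => hαβ k k h.symm
            simp only [restrictFam, if_pos hm]
            rw [hcβ k hkB]
            simp [maskFam, hne2]
          · have hm : γ ∉ ψ k := by rw [hψk]; simp [h1, h2]
            simp [restrictFam, hm, maskFam, h1, h2]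
      rw [hres, htk]
      exact sum_pair hsurj hmerge hext (fun h => hαβ k k h) _ _
    · have hψk : ψ k = {α k} := by
        ext γ
        simp [hψ, hkA, hkB]
      have hres : restrictFam c (ψ k) = maskFam {α k} (fun _ => (a k).getD 0) := by
        funext γ
        by_cases h1 : γ = α k
        · subst h1
          have hm : α k ∈ ψ k := by rw [hψk]; exact rfl
          simp only [restrictFam, if_pos hm]
          rw [hcα k hkA]
          simp [maskFam]
        · have hm : γ ∉ ψ k := by rw [hψk]; simpa using h1
          simp [restrictFam, hm, maskFam, h1]
      have hbk : (b k).getD 0 = 0 := by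
        have hbn : b k = none := by
          by_contra h
          exact hkB h
        simp [hbn]
      rw [hres, htk, hbk, add_zero]
      exact sum_single hsurj hmerge _ _
    · have hψk : ψ k = {β k} := by
        ext γ
        simp [hψ, hkA, hkB]
      have hres : restrictFam c (ψ k) = maskFam {β k} (fun _ => (b k).getD 0) := by
        funext γ
        by_cases h1 : γ = β k
        · subst h1
          have hm : β k ∈ ψ k := by rw [hψk]; exact rfl
          simp only [restrictFam, if_pos hm]
          rw [hcβ k hkB]
          simp [maskFam]
        · have hm : γ ∉ ψ k := by rw [hψk]; simpa using h1
          simp [restrictFam, hm, maskFam, h1]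
      have hak : (a k).getD 0 = 0 := by
        have han : a k = none := by
          by_contra h
          exact hkA h
        simp [han]
      rw [hres, htk, hak, zero_add]
      exact sum_single hsurj hmerge _ _
    · exact absurd hk (by simp [hkA, hkB])
  have hfinal := hout t hinner
  have hmask : maskFam (A ∪ B) t = addFam a b := by
    funext ω
    have htω : t ω = (a ω).getD 0 + (b ω).getD 0 := rfl
    cases hau : a ω <;> cases hbu : b ω
    · have hm : ω ∉ A ∪ B := by
        simp [hA, hB, hau, hbu]
      simp [maskFam, hm, addFam, hau, hbu]
    · have hm : ω ∈ A ∪ B := Or.inr (by simp [hB, hbu])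
      simp [maskFam, hm, addFam, hau, hbu, htω]
    · have hm : ω ∈ A ∪ B := Or.inl (by simp [hA, hau])
      simp [maskFam, hm, addFam, hau, hbu, htω]
    · have hm : ω ∈ A ∪ B := Or.inl (by simp [hA, hau])
      simp [maskFam, hm, addFam, hau, hbu, htω]
  rw [hmask] at hfinal
  exact hfinal

end AuxS4
/-- Let `(X,+)` be an abelian group with a surjective summation
system `S` satisfying the monoid merger axiom and additive extension closure.  Then
addition functoriality holds iff `a + b` is summable whenever `a` and `b` are summable
families with distinct index sets. -/
theorem stmt_6 {X Ω : Type*} [AddCommGroup X]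
    (S : (Ω → Option X) → X → Prop)
    (hfun : ∀ a x y, S a x → S a y → x = y)
    (hsurj : ∀ x : X, ∃ a, S a x)
    (hmerge : MergerOpt S)
    (hext : ∀ (a : Ω → Option X) (x : X), S a x →
      ∀ (ℓ : Ω) (y : X), a ℓ = none → S (extendFam a ℓ y) (x + y)) :
    (∀ (a b : Ω → Option X) (x y : X), S a x → S b y →
      S (addFam a b) (x + y)) ↔
    (∀ (a b : Ω → Option X) (x y : X), S a x → S b y →
      {ω | a ω ≠ none} ≠ {ω | b ω ≠ none} → ∃ z, S (addFam a b) z) := by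
  constructor
  · intro h a b x y ha hb _
    exact ⟨x + y, h a b x y ha hb⟩
  · intro H a b x y ha hb
    by_cases hΩ : ∃ k1 k2 : Ω, k1 ≠ k2
    · obtain ⟨k1, k2, hkk⟩ := hΩ
      by_cases hfin : {ω | b ω ≠ none}.Finite
      · exact sum_add_finite hfun hsurj hmerge hext hkk hfin.toFinset.card
          a b x y ha hb hfin rfl
      · exact sum_add_infinite hfun hsurj hmerge hext H ha hb hfin
    · push_neg at hΩ
      by_cases hne : Nonempty Ω
      · obtain ⟨ω0⟩ := hne
        haveI : Nonempty Ω := ⟨ω0⟩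
        have hall : ∀ ω : Ω, ω = ω0 := fun ω => hΩ ω ω0
        cases hb0 : b ω0 with
        | none =>
          have hbe : ∀ ω, b ω = none := fun ω => by rw [hall ω]; exact hb0
          have hy0 : y = 0 := empty_sum_zero hfun hsurj hmerge hext ((funext hbe) ▸ hb)
          rw [addFam_empty_right a b hbe, hy0, add_zero]
          exact ha
        | some v =>
          cases ha0 : a ω0 with
          | none =>
            have hae : ∀ ω, a ω = none := fun ω => by rw [hall ω]; exact ha0
            have hx0 : x = 0 := empty_sum_zero hfun hsurj hmerge hext ((funext hae) ▸ ha)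
            have hab : addFam a b = b := by
              rw [addFam_comm]
              exact addFam_empty_right b a hae
            rw [hab, hx0, zero_add]
            exact hb
          | some u =>
            have haeq : a = maskFam {ω0} (fun _ => u) := by
              funext ω
              rw [hall ω]
              simp [maskFam, ha0]
            have hbeq : b = maskFam {ω0} (fun _ => v) := by
              funext ω
              rw [hall ω]
              simp [maskFam, hb0]
            have hx : x = u := hfun _ _ _ (haeq ▸ ha) (sum_single hsurj hmerge ω0 u)
            have hy : y = v := hfun _ _ _ (hbeq ▸ hb) (sum_single hsurj hmerge ω0 v)
            have habeq : addFam a b = maskFam {ω0} (fun _ => u + v) := by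
              funext ω
              rw [hall ω]
              simp [addFam, maskFam, ha0, hb0]
            rw [habeq, hx, hy]
            exact sum_single hsurj hmerge ω0 (u + v)
      · obtain ⟨c, hc⟩ := hsurj (x + y)
        have : c = addFam a b := funext (fun ω => (hne ⟨ω⟩).elim)
        exact this ▸ hc
end

section
/- Let (X,+) be an abelian group with a summation system Σ whose index sets are sets of ordinals. Fix a family a : I → X (I a set of ordinals) all of whose proper initial segments (a_j)_{j∈I_{<i}} (i ∈ I) are summable, and define for each i ∈ I the partial sum s_i := Σ(a_j)_{j∈I_{<i}} + a_i and the partial sum family p(a) := (s_i)_{i∈I}. Then p(a) has a Σ-limit if and only if a is summable, and in that case lim p(a) = Σa. Moreover, the difference-family map d and the partial-sum map p are mutually inverse bijections between the collection of families all of whose initial segments are summable and the collection of families having Σ-limits. -/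
/-- The `Σ`-limit relation for a summation system `S` on families indexed by sets of
ordinals, defined by transfinite recursion: `x` is the `Σ`-limit of `s` on `I` iff the
limits `l i` of all proper initial segments exist and the difference family
`i ↦ s i - l i` is `S`-summable with sum `x`. -/
inductive SigmaLim {X : Type*} [AddCommGroup X]
    (S : Set Ordinal.{0} → (Ordinal.{0} → X) → X → Prop) :
    Set Ordinal.{0} → (Ordinal.{0} → X) → X → Prop where
  | intro (I : Set Ordinal.{0}) (s l : Ordinal.{0} → X) (x : X)
      (hl : ∀ i ∈ I, SigmaLim S (I ∩ Set.Iio i) s (l i))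
      (hd : S I (fun i => s i - l i) x) :
      SigmaLim S I s x

lemma inter_Iio_Iio {I : Set Ordinal.{0}} {i j : Ordinal.{0}} (hj : j < i) :
    (I ∩ Set.Iio i) ∩ Set.Iio j = I ∩ Set.Iio j := by
  rw [Set.inter_assoc, Set.inter_eq_self_of_subset_right (Set.Iio_subset_Iio hj.le)]

lemma sigmaLim_unique {X : Type*} [AddCommGroup X]
    {S : Set Ordinal.{0} → (Ordinal.{0} → X) → X → Prop}
    (hfun : ∀ I a x y, S I a x → S I a y → x = y)
    (hext : ∀ I a b x, (∀ i ∈ I, a i = b i) → S I a x → S I b x)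
    {J : Set Ordinal.{0}} {s : Ordinal.{0} → X} {x : X}
    (h : SigmaLim S J s x) : ∀ y, SigmaLim S J s y → x = y := by
  induction h with
  | intro J s l x hl hd ih =>
    intro y hy
    cases hy with
    | intro _ _ l' _ hl' hd' =>
      have he : ∀ i ∈ J, s i - l' i = s i - l i := by
        intro i hi
        rw [ih i hi (l' i) (hl' i hi)]
      exact hfun J _ x y hd (hext J _ _ y he hd')

lemma sigmaLim_of_sum {X : Type*} [AddCommGroup X]
    {S : Set Ordinal.{0} → (Ordinal.{0} → X) → X → Prop}
    (hfun : ∀ I a x y, S I a x → S I a y → x = y)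
    (hext : ∀ I a b x, (∀ i ∈ I, a i = b i) → S I a x → S I b x)
    {I : Set Ordinal.{0}} {a t : Ordinal.{0} → X}
    (ht : ∀ i ∈ I, S (I ∩ Set.Iio i) a (t i)) :
    ∀ i : Ordinal.{0}, ∀ x, S (I ∩ Set.Iio i) a x →
      SigmaLim S (I ∩ Set.Iio i) (fun j => t j + a j) x := by
  intro i
  induction i using Ordinal.induction with
  | h i IH =>
    intro x hx
    refine SigmaLim.intro _ _ t x ?_ ?_
    · rintro j ⟨hjI, hji⟩
      rw [inter_Iio_Iio hji]
      exact IH j hji (t j) (ht j hjI)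
    · exact hext _ _ _ x (fun j hj => by abel) hx

lemma sigmaLim_of_sum_top {X : Type*} [AddCommGroup X]
    {S : Set Ordinal.{0} → (Ordinal.{0} → X) → X → Prop}
    (hfun : ∀ I a x y, S I a x → S I a y → x = y)
    (hext : ∀ I a b x, (∀ i ∈ I, a i = b i) → S I a x → S I b x)
    {I : Set Ordinal.{0}} {a t : Ordinal.{0} → X}
    (ht : ∀ i ∈ I, S (I ∩ Set.Iio i) a (t i))
    {x : X} (hx : S I a x) : SigmaLim S I (fun j => t j + a j) x := by
  refine SigmaLim.intro _ _ t x ?_ ?_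
  · intro i hi
    exact sigmaLim_of_sum hfun hext ht i (t i) (ht i hi)
  · exact hext _ _ _ x (fun j hj => by abel) hx

/-- Let `(X,+)` be an abelian group with a summation system `S` on
ordinal-indexed families, and let `a` be a family on `I` all of whose proper initial
segments are summable, with sums `t i = Σ (a_j)_{j ∈ I_{<i}}`.  Then the partial-sum
family `p(a) = (t i + a i)_{i ∈ I}` has a `Σ`-limit iff `a` is summable, in which case
the limit equals `Σ a`; moreover the difference-family and partial-sum constructions
are mutually inverse (`d(p(a)) = a` and `p(d(s)) = s` on the relevant index sets). -/
theorem stmt_7 {X : Type*} [AddCommGroup X]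
    (S : Set Ordinal.{0} → (Ordinal.{0} → X) → X → Prop)
    (hfun : ∀ I a x y, S I a x → S I a y → x = y)
    (hext : ∀ I a b x, (∀ i ∈ I, a i = b i) → S I a x → S I b x)
    (I : Set Ordinal.{0}) (a t : Ordinal.{0} → X)
    (ht : ∀ i ∈ I, S (I ∩ Set.Iio i) a (t i)) :
    ((∃ l, SigmaLim S I (fun i => t i + a i) l) ↔ ∃ x, S I a x) ∧
    (∀ x, S I a x → SigmaLim S I (fun i => t i + a i) x) ∧
    (∀ l x, SigmaLim S I (fun i => t i + a i) l → S I a x → l = x) ∧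
    (∀ i ∈ I, ∀ l, SigmaLim S (I ∩ Set.Iio i) (fun j => t j + a j) l →
      t i + a i - l = a i) ∧
    (∀ (s l : Ordinal.{0} → X),
      (∀ i ∈ I, SigmaLim S (I ∩ Set.Iio i) s (l i)) →
      (∃ y, SigmaLim S I s y) →
      ∀ i ∈ I, ∀ v, S (I ∩ Set.Iio i) (fun j => s j - l j) v →
        v + (s i - l i) = s i) := by
  have lim_t : ∀ i ∈ I, SigmaLim S (I ∩ Set.Iio i) (fun j => t j + a j) (t i) :=
    fun i hi => sigmaLim_of_sum hfun hext ht i (t i) (ht i hi)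
  refine ⟨?_, fun x hx => sigmaLim_of_sum_top hfun hext ht hx, ?_, ?_, ?_⟩
  · constructor
    · rintro ⟨l, hlim⟩
      cases hlim with
      | intro _ _ l₀ _ hl hd =>
        refine ⟨l, hext _ _ _ l ?_ hd⟩
        intro i hi
        have h1 : l₀ i = t i := sigmaLim_unique hfun hext (hl i hi) (t i) (lim_t i hi)
        simp only [h1]; abel
    · rintro ⟨x, hx⟩
      exact ⟨x, sigmaLim_of_sum_top hfun hext ht hx⟩
  · intro l x hlim hx
    exact sigmaLim_unique hfun hext hlim x (sigmaLim_of_sum_top hfun hext ht hx)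
  · intro i hi l hlim
    have h1 : l = t i := sigmaLim_unique hfun hext hlim (t i) (lim_t i hi)
    rw [h1]; abel
  · rintro s l hl - i hi v hv
    have hlim := hl i hi
    cases hlim with
    | intro _ _ l₀ _ hl₀ hd₀ =>
      have he : ∀ j ∈ I ∩ Set.Iio i, s j - l₀ j = s j - l j := by
        rintro j ⟨hjI, hji⟩
        have h0 := hl₀ j ⟨hjI, hji⟩
        rw [inter_Iio_Iio hji] at h0
        rw [sigmaLim_unique hfun hext h0 (l j) (hl j hjI)]
      have hli : S (I ∩ Set.Iio i) (fun j => s j - l j) (l i) := hext _ _ _ _ he hd₀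
      rw [hfun _ _ v (l i) hv hli]
      abel
end

section
/- Let (X, τ) be a topological space and let φ(τ) denote the finest topology on X in which, for every nonempty ordinal-indexed sequence s : I → X all of whose nonempty initial segments (including s itself) have unique τ-limits, the unique τ-limit x of s is a topological limit of s. Then: (1) φ(τ) is T1 (every singleton is φ(τ)-closed); (2) every τ-open set is φ(τ)-open; and (3) φ(φ(τ)) = φ(τ). -/
open Topology

/-- `x` is a topological limit (in the topology `τ`) of the ordinal-indexed sequence
`s` with index set `I`. -/
def IsLimOn {X : Type*} (τ : TopologicalSpace X) (I : Set Ordinal.{0})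
    (s : Ordinal.{0} → X) (x : X) : Prop :=
  ∀ U : Set X, IsOpen[τ] U → x ∈ U → ∃ i ∈ I, ∀ j ∈ I, i ≤ j → s j ∈ U

/-- The pair `(s, x)` (with `s` a nonempty ordinal-indexed sequence on `I`) is such
that every nonempty initial segment of `s` (including `s` itself) has a unique
`τ`-limit, and `x` is the (unique) `τ`-limit of `s`. -/
def GaplessUnique {X : Type*} (τ : TopologicalSpace X) (I : Set Ordinal.{0})
    (s : Ordinal.{0} → X) (x : X) : Prop :=
  I.Nonempty ∧
  (∀ α : Ordinal.{0}, (I ∩ Set.Iio α).Nonempty →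
    ∃! y, IsLimOn τ (I ∩ Set.Iio α) s y) ∧
  IsLimOn τ I s x

/-- `phiTop τ` is the finest topology in which, for every `(s,x)` as above, `x` is a
topological limit of `s`; concretely it is generated by the sets `U` such that any
such sequence with limit in `U` has a tail in `U`. -/
def phiTop {X : Type*} (τ : TopologicalSpace X) : TopologicalSpace X :=
  TopologicalSpace.generateFrom
    {U | ∀ (I : Set Ordinal.{0}) (s : Ordinal.{0} → X) (x : X),
      GaplessUnique τ I s x → x ∈ U → ∃ i ∈ I, ∀ j ∈ I, i ≤ j → s j ∈ U}

/- ### Auxiliary material -/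

/-- The tail predicate defining `phiTop`. -/
def PhiPred {X : Type*} (τ : TopologicalSpace X) (U : Set X) : Prop :=
  ∀ (I : Set Ordinal.{0}) (s : Ordinal.{0} → X) (x : X),
    GaplessUnique τ I s x → x ∈ U → ∃ i ∈ I, ∀ j ∈ I, i ≤ j → s j ∈ U

/-- The tail predicate already defines a topology. -/
def phiTop' {X : Type*} (τ : TopologicalSpace X) : TopologicalSpace X where
  IsOpen := PhiPred τ
  isOpen_univ := fun _ _ _ h _ =>
    ⟨h.1.choose, h.1.choose_spec, fun _ _ _ => trivial⟩
  isOpen_inter := fun U V hU hV I s x h hx => by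
    obtain ⟨i₁, hi₁, h₁⟩ := hU I s x h hx.1
    obtain ⟨i₂, hi₂, h₂⟩ := hV I s x h hx.2
    rcases le_total i₁ i₂ with hle | hle
    · exact ⟨i₂, hi₂, fun j hj hij => ⟨h₁ j hj (hle.trans hij), h₂ j hj hij⟩⟩
    · exact ⟨i₁, hi₁, fun j hj hij => ⟨h₁ j hj hij, h₂ j hj (hle.trans hij)⟩⟩
  isOpen_sUnion := fun 𝒮 hS I s x h hx => by
    obtain ⟨U, hU, hxU⟩ := hx
    obtain ⟨i, hi, ht⟩ := hS U hU I s x h hxU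
    exact ⟨i, hi, fun j hj hij => ⟨U, hU, ht j hj hij⟩⟩

theorem phiTop_eq_phiTop' {X : Type*} (τ : TopologicalSpace X) :
    phiTop τ = phiTop' τ :=
  TopologicalSpace.generateFrom_setOf_isOpen (phiTop' τ)

theorem isOpen_phiTop_iff {X : Type*} (τ : TopologicalSpace X) (U : Set X) :
    IsOpen[phiTop τ] U ↔ PhiPred τ U := by
  rw [phiTop_eq_phiTop']; rfl

theorem isLimOn_mono {X : Type*} {τ σ : TopologicalSpace X}
    (h : ∀ U : Set X, IsOpen[τ] U → IsOpen[σ] U)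
    {I : Set Ordinal.{0}} {s : Ordinal.{0} → X} {x : X}
    (hl : IsLimOn σ I s x) : IsLimOn τ I s x :=
  fun U hU hx => hl U (h U hU) hx

theorem isOpen_phiTop_of_isOpen {X : Type*} (τ : TopologicalSpace X)
    {U : Set X} (hU : IsOpen[τ] U) : IsOpen[phiTop τ] U := by
  rw [isOpen_phiTop_iff]
  exact fun I s x h hx => h.2.2 U hU hx

theorem isLimOn_phiTop {X : Type*} (τ : TopologicalSpace X)
    {I : Set Ordinal.{0}} {s : Ordinal.{0} → X} {x : X}
    (h : GaplessUnique τ I s x) : IsLimOn (phiTop τ) I s x := by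
  intro U hU hx
  exact (isOpen_phiTop_iff τ U).1 hU I s x h hx

/-- Key step for T1: under `GaplessUnique`, if `x` occurs cofinally in `s` then any
specialization-style point equal to a limit must be `x`; in particular the limit is `x`. -/
theorem gapless_cofinal_eq {X : Type*} (τ : TopologicalSpace X)
    {I : Set Ordinal.{0}} {s : Ordinal.{0} → X} {y x : X}
    (h : GaplessUnique τ I s y)
    (hcof : ∀ i ∈ I, ∃ j ∈ I, i ≤ j ∧ s j = x) : y = x := by
  -- a point `z` all of whose τ-neighbourhoods contain `x` must equal `x`
  have key : ∀ z : X, (∀ U : Set X, IsOpen[τ] U → z ∈ U → x ∈ U) → z = x := by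
    intro z hz
    obtain ⟨i₀, hi₀⟩ := h.1
    obtain ⟨j, hjI, -, hjx⟩ := hcof i₀ hi₀
    have hjmem : j ∈ I ∩ Set.Iio (Order.succ j) := ⟨hjI, Order.lt_succ j⟩
    obtain ⟨w, -, hw⟩ := h.2.1 (Order.succ j) ⟨j, hjmem⟩
    have hxlim : IsLimOn τ (I ∩ Set.Iio (Order.succ j)) s x := by
      intro U hU hxU
      refine ⟨j, hjmem, fun k hk hjk => ?_⟩
      have : k = j := le_antisymm (Order.lt_succ_iff.1 hk.2) hjk
      rw [this, hjx]; exact hxU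
    have hzlim : IsLimOn τ (I ∩ Set.Iio (Order.succ j)) s z := by
      intro U hU hzU
      refine ⟨j, hjmem, fun k hk hjk => ?_⟩
      have : k = j := le_antisymm (Order.lt_succ_iff.1 hk.2) hjk
      rw [this, hjx]; exact hz U hU hzU
    rw [hw z hzlim, hw x hxlim]
  refine key y fun U hU hyU => ?_
  obtain ⟨i, hiI, ht⟩ := h.2.2 U hU hyU
  obtain ⟨j, hjI, hij, hjx⟩ := hcof i hiI
  have := ht j hjI hij
  rwa [hjx] at this

theorem phiTop_t1 {X : Type*} (τ : TopologicalSpace X) (x : X) :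
    IsClosed[phiTop τ] {x} := by
  rw [← @isOpen_compl_iff _ _ (phiTop τ), isOpen_phiTop_iff]
  intro I s y h hy
  by_contra hcon
  push_neg at hcon
  have hcof : ∀ i ∈ I, ∃ j ∈ I, i ≤ j ∧ s j = x := by
    intro i hi
    obtain ⟨j, hjI, hij, hjx⟩ := hcon i hi
    exact ⟨j, hjI, hij, by simpa using hjx⟩
  exact hy (gapless_cofinal_eq τ h hcof)

theorem gaplessUnique_phiTop {X : Type*} (τ : TopologicalSpace X)
    {I : Set Ordinal.{0}} {s : Ordinal.{0} → X} {x : X}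
    (h : GaplessUnique τ I s x) : GaplessUnique (phiTop τ) I s x := by
  refine ⟨h.1, ?_, isLimOn_phiTop τ h⟩
  intro α hne
  obtain ⟨y, hy, hyu⟩ := h.2.1 α hne
  have hgu : GaplessUnique τ (I ∩ Set.Iio α) s y := by
    refine ⟨hne, ?_, hy⟩
    intro β hβ
    have hset : I ∩ Set.Iio α ∩ Set.Iio β = I ∩ Set.Iio (min α β) := by
      ext k; simp [Set.mem_Iio, lt_min_iff, and_assoc]
    rw [hset] at hβ ⊢
    exact h.2.1 (min α β) hβ
  refine ⟨y, isLimOn_phiTop τ hgu, fun z hz => ?_⟩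
  exact hyu z (isLimOn_mono (fun U hU => isOpen_phiTop_of_isOpen τ hU) hz)

/-- `phiTop τ` is exactly the topology whose open sets are those
satisfying the tail condition, it has all the prescribed limits and is the finest such
topology; moreover (1) `phiTop τ` is T1, (2) it refines `τ`, and (3) `phiTop` is
idempotent. -/
theorem stmt_8 {X : Type*} (τ : TopologicalSpace X) :
    (∀ U : Set X, IsOpen[phiTop τ] U ↔
      ∀ (I : Set Ordinal.{0}) (s : Ordinal.{0} → X) (x : X),
        GaplessUnique τ I s x → x ∈ U → ∃ i ∈ I, ∀ j ∈ I, i ≤ j → s j ∈ U) ∧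
    (∀ (I : Set Ordinal.{0}) (s : Ordinal.{0} → X) (x : X),
      GaplessUnique τ I s x → IsLimOn (phiTop τ) I s x) ∧
    (∀ T : TopologicalSpace X,
      (∀ (I : Set Ordinal.{0}) (s : Ordinal.{0} → X) (x : X),
        GaplessUnique τ I s x → IsLimOn T I s x) →
      ∀ U : Set X, IsOpen[T] U → IsOpen[phiTop τ] U) ∧
    (∀ x : X, IsClosed[phiTop τ] {x}) ∧
    (∀ U : Set X, IsOpen[τ] U → IsOpen[phiTop τ] U) ∧
    phiTop (phiTop τ) = phiTop τ := by
  refine ⟨isOpen_phiTop_iff τ, fun I s x h => isLimOn_phiTop τ h, ?_, phiTop_t1 τ,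
    fun U hU => isOpen_phiTop_of_isOpen τ hU, ?_⟩
  · intro T hT U hU
    rw [isOpen_phiTop_iff]
    exact fun I s x h hx => hT I s x h U hU hx
  · refine TopologicalSpace.ext_iff.2 fun U => ?_
    rw [isOpen_phiTop_iff, isOpen_phiTop_iff]
    constructor
    · intro hU I s x h hx
      exact hU I s x (gaplessUnique_phiTop τ h) hx
    · intro hU I s x h hx
      exact h.2.2 U ((isOpen_phiTop_iff τ U).2 hU) hx
end

section
/- Let (X,+) be an abelian group and 𝒜 a collection of subsets of X such that for each S ∈ 𝒜 there exist T, U ∈ 𝒜 with T − U ⊆ S. Let a : I → X be a family with unconditional sum x ∈ X, let P be a partition of I, and assume that for each block J ∈ P the restricted family (a_i)_{i∈J} has unconditional sum s_J ∈ X. Then x is an unconditional sum of the family (s_J)_{J∈P} indexed by P. -/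
/-- `x` is an unconditional sum of the family `a : I → X` relative to the collection
`A` of subsets of `X`. -/
def UncondSum {X : Type*} [AddCommGroup X] (A : Set (Set X)) {I : Type*}
    (a : I → X) (x : X) : Prop :=
  ∀ S ∈ A, ∃ F : Finset I, ∀ F' : Finset I, F ⊆ F' → (∑ i ∈ F', a i) - x ∈ S

/-- Sum splitting lemma: for any `U ∈ A` and finite index set `F`, there are sets
`V k ∈ A` such that any sum of elements `v k ∈ V k` over `F` lies in `U`. -/
lemma stmt11_sum_lemma {X : Type*} [AddCommGroup X] (A : Set (Set X))
    (h2 : ∀ S ∈ A, ∃ T ∈ A, ∃ U ∈ A, ∀ t ∈ T, ∀ u ∈ U, t - u ∈ S)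
    (hzero : ∀ S ∈ A, (0 : X) ∈ S)
    {ι : Type*} (F : Finset ι) :
    ∀ U ∈ A, ∃ V : ι → Set X, (∀ k, V k ∈ A) ∧
      ∀ v : ι → X, (∀ k ∈ F, v k ∈ V k) → (∑ k ∈ F, v k) ∈ U := by
  classical
  induction F using Finset.induction with
  | empty =>
    intro U hU
    exact ⟨fun _ => U, fun _ => hU, fun v _ => by simpa using hzero U hU⟩
  | @insert a F ha ih =>
    intro U hU
    obtain ⟨T, hT, U', hU', hTU⟩ := h2 U hU
    obtain ⟨T₂, hT₂, U₂, hU₂, hTU₂⟩ := h2 U' hU'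
    obtain ⟨V', hV'A, hV'⟩ := ih U₂ hU₂
    refine ⟨Function.update V' a T, ?_, ?_⟩
    · intro k
      by_cases hk : k = a
      · subst hk; simpa using hT
      · rw [Function.update_of_ne hk]; exact hV'A k
    · intro v hv
      rw [Finset.sum_insert ha]
      have h1 : v a ∈ T := by
        have := hv a (Finset.mem_insert_self a F)
        simpa using this
      have h2' : (∑ k ∈ F, v k) ∈ U₂ := by
        refine hV' v fun k hk => ?_
        have := hv k (Finset.mem_insert_of_mem hk)
        rwa [Function.update_of_ne (by rintro rfl; exact ha hk)] at this
      have hneg : -(∑ k ∈ F, v k) ∈ U' := by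
        have := hTU₂ 0 (hzero T₂ hT₂) _ h2'
        simpa using this
      have := hTU _ h1 _ hneg
      simpa using this

/-- Assume for each `S ∈ A` there are `T, U ∈ A` with `T - U ⊆ S`.
If `a : I → X` has unconditional sum `x`, `P` is a partition of `I`, and each block
`J ∈ P` has unconditional sum `s J`, then `x` is an unconditional sum of the family
`(s J)_{J ∈ P}`. -/
theorem stmt_11 {X : Type*} [AddCommGroup X] (A : Set (Set X))
    (h2 : ∀ S ∈ A, ∃ T ∈ A, ∃ U ∈ A, ∀ t ∈ T, ∀ u ∈ U, t - u ∈ S)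
    (I : Type) (a : I → X) (x : X) (hx : UncondSum A a x)
    (P : Set (Set I))
    (hne : ∀ J ∈ P, J.Nonempty)
    (hpart : ∀ i : I, ∃! J, J ∈ P ∧ i ∈ J)
    (s : Set I → X)
    (hs : ∀ J ∈ P, UncondSum A (fun j : J => a j.1) (s J)) :
    UncondSum A (fun J : P => s J.1) x := by
  classical
  have hzero : ∀ S ∈ A, (0 : X) ∈ S := by
    intro S hS
    obtain ⟨T, hT, U, hU, hTU⟩ := h2 S hS
    obtain ⟨F₁, h₁⟩ := hx T hT
    obtain ⟨F₂, h₂⟩ := hx U hU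
    have ht := h₁ (F₁ ∪ F₂) Finset.subset_union_left
    have hu := h₂ (F₁ ∪ F₂) Finset.subset_union_right
    have := hTU _ ht _ hu
    simpa using this
  intro S hS
  obtain ⟨T, hT, U, hU, hTU⟩ := h2 S hS
  obtain ⟨FT, hFT⟩ := hx T hT
  have hpart' : ∀ i : I, ∃ J, J ∈ P ∧ i ∈ J := fun i => (hpart i).exists
  choose B hBP hBi using hpart'
  refine ⟨FT.image (fun i => (⟨B i, hBP i⟩ : P)), ?_⟩
  intro F' hFF'
  obtain ⟨V, hVA, hV⟩ := stmt11_sum_lemma A h2 hzero F' U hU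
  have hblock : ∀ J : P, ∃ H0 : Finset J.1, ∀ H : Finset J.1, H0 ⊆ H →
      (∑ j ∈ H, a j.1) - s J.1 ∈ V J := fun J => hs J.1 J.2 (V J) (hVA J)
  choose H0 hH0 using hblock
  set HJ : ∀ J : P, Finset J.1 := fun J =>
    H0 J ∪ FT.preimage Subtype.val Subtype.val_injective.injOn with hHJ
  set G : Finset I := F'.biUnion (fun J => (HJ J).image Subtype.val) with hG
  have hGT : FT ⊆ G := by
    intro i hi
    rw [hG, Finset.mem_biUnion]
    refine ⟨⟨B i, hBP i⟩, hFF' (Finset.mem_image.mpr ⟨i, hi, rfl⟩), ?_⟩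
    rw [Finset.mem_image]
    refine ⟨⟨i, hBi i⟩, ?_, rfl⟩
    exact Finset.mem_union_right _ (Finset.mem_preimage.mpr hi)
  have hdisj : ∀ J ∈ F', ∀ K ∈ F', J ≠ K →
      Disjoint ((HJ J).image Subtype.val) ((HJ K).image Subtype.val) := by
    intro J _ K _ hJK
    rw [Finset.disjoint_left]
    rintro i hiJ hiK
    rw [Finset.mem_image] at hiJ hiK
    obtain ⟨⟨i1, hi1⟩, _, rfl⟩ := hiJ
    obtain ⟨⟨i2, hi2⟩, _, hi2eq⟩ := hiK
    obtain ⟨W, _, hW⟩ := hpart i1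
    have hJW : J.1 = W := hW J.1 ⟨J.2, hi1⟩
    have hi2eq' : i2 = i1 := hi2eq
    have hi2' : i1 ∈ K.1 := hi2eq' ▸ hi2
    have hKW : K.1 = W := hW K.1 ⟨K.2, hi2'⟩
    exact hJK (Subtype.ext (hJW.trans hKW.symm))
  have hsum_eq : (∑ i ∈ G, a i) = ∑ J ∈ F', ∑ j ∈ HJ J, a j.1 := by
    rw [hG, Finset.sum_biUnion hdisj]
    refine Finset.sum_congr rfl fun J _ => ?_
    rw [Finset.sum_image (fun _ _ _ _ h => Subtype.ext h)]
  have hT' : (∑ i ∈ G, a i) - x ∈ T := hFT G hGT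
  have hU' : (∑ i ∈ G, a i) - (∑ J ∈ F', s J.1) ∈ U := by
    rw [hsum_eq, ← Finset.sum_sub_distrib]
    exact hV _ fun J _ => hH0 J (HJ J) Finset.subset_union_left
  have := hTU _ hT' _ hU'
  convert this using 1
  abel
end

section
/- Let (X,+) be an abelian group and 𝒜 a collection of subsets of X such that for each S ∈ 𝒜 there exist T, U ∈ 𝒜 with T − U ⊆ S. Call a family a : I → X sum-Cauchy if for each S ∈ 𝒜 there is a finite set F ⊆ I such that for every finite set F' ⊆ I with F ∩ F' = ∅ one has ∑_{i∈F'} a i ∈ S. Then: (1) every family possessing an unconditional sum relative to 𝒜 is sum-Cauchy; and (2) every sum-Cauchy family possesses an unconditional sum if and only if every restriction of a family possessing an unconditional sum to a subset of its index set again possesses an unconditional sum. -/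
/-- The family `a` is sum-Cauchy relative to `A`: for each `S ∈ A` there is a finite
`F ⊆ I` such that every finite `F' ⊆ I` disjoint from `F` has `∑_{i ∈ F'} a i ∈ S`. -/
def SumCauchy {X : Type*} [AddCommGroup X] (A : Set (Set X)) {I : Type*}
    (a : I → X) : Prop :=
  ∀ S ∈ A, ∃ F : Finset I, ∀ F' : Finset I, Disjoint F F' → (∑ i ∈ F', a i) ∈ S

lemma uncond_equiv {X : Type*} [AddCommGroup X] {A : Set (Set X)} {I J : Type*}
    (e : I ≃ J) {b : J → X} {x : X} (h : UncondSum A b x) :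
    UncondSum A (fun i => b (e i)) x := by
  intro S hS
  obtain ⟨F, hF⟩ := h S hS
  refine ⟨F.map e.symm.toEmbedding, fun F' hsub => ?_⟩
  have h1 := hF (F'.map e.toEmbedding) ?_
  · rwa [Finset.sum_map] at h1
  · intro j hj
    rw [Finset.mem_map]
    refine ⟨e.symm j, hsub ?_, e.apply_symm_apply j⟩
    exact Finset.mem_map_of_mem _ hj

lemma uncond_to_cauchy {X : Type*} [AddCommGroup X] {A : Set (Set X)}
    (h2 : ∀ S ∈ A, ∃ T ∈ A, ∃ U ∈ A, ∀ t ∈ T, ∀ u ∈ U, t - u ∈ S)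
    {I : Type*} {a : I → X} {x : X} (hx : UncondSum A a x) : SumCauchy A a := by
  classical
  intro S hS
  obtain ⟨T, hT, U, hU, hTU⟩ := h2 S hS
  obtain ⟨F₁, h₁⟩ := hx T hT
  obtain ⟨F₂, h₂⟩ := hx U hU
  refine ⟨F₁ ∪ F₂, fun F' hd => ?_⟩
  have hA : (∑ i ∈ (F₁ ∪ F₂) ∪ F', a i) - x ∈ T :=
    h₁ _ (Finset.subset_union_left.trans Finset.subset_union_left)
  have hB : (∑ i ∈ F₁ ∪ F₂, a i) - x ∈ U := h₂ _ Finset.subset_union_right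
  have := hTU _ hA _ hB
  rw [Finset.sum_union hd] at this
  simpa using this

/-- Assume for each `S ∈ A` there are `T, U ∈ A` with `T - U ⊆ S`.
Then (1) every unconditionally summable family is sum-Cauchy, and (2) every sum-Cauchy
family is unconditionally summable iff every restriction of an unconditionally
summable family is unconditionally summable. -/
theorem stmt_12 {X : Type*} [AddCommGroup X] (A : Set (Set X))
    (h2 : ∀ S ∈ A, ∃ T ∈ A, ∃ U ∈ A, ∀ t ∈ T, ∀ u ∈ U, t - u ∈ S) :
    (∀ (I : Type) (a : I → X) (x : X), UncondSum A a x → SumCauchy A a) ∧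
    ((∀ (I : Type) (a : I → X), SumCauchy A a → ∃ x, UncondSum A a x) ↔
      (∀ (I : Type) (a : I → X), (∃ x, UncondSum A a x) →
        ∀ s : Set I, ∃ y, UncondSum A (fun i : s => a i.1) y)) := by
  classical
  refine ⟨fun I a x hx => uncond_to_cauchy h2 hx, ?_, ?_⟩
  · -- forward: sum-Cauchy ⇒ summable implies restrictions summable
    intro H I a ⟨x, hx⟩ s
    apply H
    intro S hS
    obtain ⟨F, hF⟩ := uncond_to_cauchy h2 hx S hS
    refine ⟨F.subtype (· ∈ s), fun G hd => ?_⟩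
    have key := hF (G.map (Function.Embedding.subtype (· ∈ s))) ?_
    · rwa [Finset.sum_map] at key
    · rw [Finset.disjoint_left]
      intro i hiF hiG
      rw [Finset.mem_map] at hiG
      obtain ⟨j, hjG, rfl⟩ := hiG
      exact Finset.disjoint_left.1 hd (by simpa [Finset.mem_subtype] using hiF) hjG
  · -- backward: restrictions summable implies sum-Cauchy ⇒ summable
    intro H I a hca
    set b : I ⊕ I → X := Sum.elim a (fun i => -a i) with hb
    have hb0 : UncondSum A b 0 := by
      intro S hS
      obtain ⟨T, hT, U, hU, hTU⟩ := h2 S hS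
      obtain ⟨F₁, h₁⟩ := hca T hT
      obtain ⟨F₂, h₂⟩ := hca U hU
      set F₀ : Finset I := F₁ ∪ F₂ with hF₀
      refine ⟨F₀.disjSum F₀, fun F' hsub => ?_⟩
      set G₁ := F'.toLeft
      set G₂ := F'.toRight
      have hsub1 : F₀ ⊆ G₁ := fun i hi =>
        Finset.mem_toLeft.2 (hsub (Finset.inl_mem_disjSum.2 hi))
      have hsub2 : F₀ ⊆ G₂ := fun i hi =>
        Finset.mem_toRight.2 (hsub (Finset.inr_mem_disjSum.2 hi))
      have hsum : ∑ j ∈ F', b j = (∑ i ∈ G₁, a i) - ∑ i ∈ G₂, a i := by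
        rw [← Finset.toLeft_disjSum_toRight (u := F'), Finset.sum_disjSum]
        simp [b, sub_eq_add_neg]
        rfl
      have hd1 : Disjoint F₁ (G₁ \ G₂) :=
        Finset.disjoint_left.2 fun i hi h' =>
          (Finset.mem_sdiff.1 h').2 (hsub2 (Finset.mem_union_left _ hi))
      have hd2 : Disjoint F₂ (G₂ \ G₁) :=
        Finset.disjoint_left.2 fun i hi h' =>
          (Finset.mem_sdiff.1 h').2 (hsub1 (Finset.mem_union_right _ hi))
      have hmem := hTU _ (h₁ _ hd1) _ (h₂ _ hd2)
      have hrw : (∑ i ∈ G₁ \ G₂, a i) - ∑ i ∈ G₂ \ G₁, a i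
          = (∑ i ∈ G₁, a i) - ∑ i ∈ G₂, a i := by
        have e1 := Finset.sum_inter_add_sum_sdiff G₁ G₂ a
        have e2 := Finset.sum_inter_add_sum_sdiff G₂ G₁ a
        rw [← e1, ← e2, Finset.inter_comm]
        abel
      rw [hsum, ← hrw]
      simpa using hmem
    obtain ⟨y, hy⟩ := H (I ⊕ I) b ⟨0, hb0⟩ (Set.range Sum.inl)
    refine ⟨y, ?_⟩
    have h3 := uncond_equiv (Equiv.ofInjective _ Sum.inl_injective) hy
    have hfun : (fun i : I => b (Equiv.ofInjective (Sum.inl : I → I ⊕ I) Sum.inl_injective i).1) = a := by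
      funext i
      rw [Equiv.ofInjective_apply]
      rfl
    rwa [hfun] at h3
end

section
/- Let (X,+) be an abelian group. For 𝒜 ⊆ 𝒫(X), let Σ_𝒜 be the collection of pairs (a, x) such that x is the unique unconditional sum of the family a relative to 𝒜, and let ψ(𝒜) be the largest collection 𝒞 ⊆ 𝒫(X) such that every pair in Σ_𝒜 is an unconditional sum relative to 𝒞 (namely 𝒞 = {S ⊆ X : each pair in Σ_𝒜 satisfies the unconditional summability condition for S}). Then: (1) 𝒜 ⊆ ψ(𝒜) and ψ(ψ(𝒜)) = ψ(𝒜); (2) Σ_𝒜 ⊆ Σ_{ψ(𝒜)}; and (3) if unconditional sums relative to 𝒜 are unique whenever they exist, then Σ_𝒜 = Σ_{ψ(𝒜)}, and for every ℬ with 𝒜 ⊆ ℬ ⊆ 𝒫(X) one has ψ(𝒜) ⊆ ψ(ℬ). -/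
/-- `x` is the unique unconditional sum of `a` relative to `A` (membership in the
unconditional summation system `Σ_A`). -/
def UniqueUncond {X : Type*} [AddCommGroup X] (A : Set (Set X)) {I : Type*}
    (a : I → X) (x : X) : Prop :=
  UncondSum A a x ∧ ∀ y, UncondSum A a y → y = x

/-- `psiColl A` is the largest collection of subsets of `X` relative to which every
pair of `Σ_A` is an unconditional sum. -/
def psiColl {X : Type*} [AddCommGroup X] (A : Set (Set X)) : Set (Set X) :=
  {S | ∀ (I : Type) (a : I → X) (x : X), UniqueUncond A a x →
    ∃ F : Finset I, ∀ F' : Finset I, F ⊆ F' → (∑ i ∈ F', a i) - x ∈ S}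

/-- (1) `ψ` is extensive and idempotent; (2) `Σ_A ⊆ Σ_{ψ(A)}`;
(3) if unconditional sums relative to `A` are unique whenever they exist, then
`Σ_A = Σ_{ψ(A)}` and `ψ` is monotone above `A`. -/
theorem stmt_14 {X : Type*} [AddCommGroup X] (A : Set (Set X)) :
    (A ⊆ psiColl A ∧ psiColl (psiColl A) = psiColl A) ∧
    (∀ (I : Type) (a : I → X) (x : X),
      UniqueUncond A a x → UniqueUncond (psiColl A) a x) ∧
    ((∀ (I : Type) (a : I → X) (x y : X),
        UncondSum A a x → UncondSum A a y → x = y) →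
      (∀ (I : Type) (a : I → X) (x : X),
        UniqueUncond A a x ↔ UniqueUncond (psiColl A) a x) ∧
      (∀ B : Set (Set X), A ⊆ B → psiColl A ⊆ psiColl B)) := by
  have hext : A ⊆ psiColl A := fun S hS I a x hx => hx.1 S hS
  have hsub : ∀ (I : Type) (a : I → X) (x : X),
      UniqueUncond A a x → UniqueUncond (psiColl A) a x := by
    intro I a x hx
    exact ⟨fun S hS => hS I a x hx, fun y hy => hx.2 y (fun S hS => hy S (hext hS))⟩
  refine ⟨⟨hext, ?_⟩, hsub, ?_⟩
  · ext S
    constructor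
    · intro hS I a x hx
      exact hS I a x (hsub I a x hx)
    · intro hS I a x hx
      exact hx.1 S hS
  · intro huniq
    constructor
    · intro I a x
      refine ⟨hsub I a x, fun hx => ?_⟩
      have hux : UncondSum A a x := fun S hS => hx.1 S (hext hS)
      exact ⟨hux, fun y hy => huniq I a y x hy hux⟩
    · intro B hAB S hS I a x hx
      have hx' : UncondSum A a x := fun T hT => hx.1 T (hAB hT)
      exact hS I a x ⟨hx', fun y hy => huniq I a y x hy hx'⟩
end

section
/- Let (X, ·, 1) be a (multiplicative) monoid with a summation system Σ such that: (i) Σ satisfies left reorderability; (ii) Σ is surjective (every element of X is the sum of some summable family); (iii) every singleton family whose sole member is 1 is summable with sum 1; and (iv) the empty family is summable and there is an element m ∈ X such that the two-entry family (1, m) is summable with sum Σ(). Then the induced addition a ⊞ b := Σ(a, b) (the sum of the family with entries a and b on a fixed two-element index set) is defined for all a, b ∈ X, and X equipped with addition ⊞, additive identity Σ(), and the given multiplication is a ring: ⊞ is total, associative, and commutative, Σ() is a two-sided identity for ⊞, every element of X has an additive inverse with respect to ⊞, and the multiplication distributes over ⊞ on both sides. -/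
/-- Left reorderability of a summation system `S` over a multiplicative structure `X`:
if `(a_i)_{i∈I}` is summable, `(r_k)_{k∈K}` is arbitrary, `ψ : K → 𝒫(I)`, and the
family `(r_k)_{k∈ψ'(i)}` is summable (with sum `t i`) for each `i`, then the family
`(t i * a i)_{i∈I}` is summable, each `(a_i)_{i∈ψ(k)}` is summable, and for any choice
`u` of those inner sums, `(r k * u k)_{k∈K}` is summable with the same sum as
`(t i * a i)_{i∈I}`. -/
def LeftReorderable {X : Type*} [Mul X]
    (S : (I : Type) → (I → X) → X → Prop) : Prop :=
  ∀ (I K : Type) (a : I → X) (x : X) (r : K → X) (ψ : K → Set I) (t : I → X),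
    S I a x →
    (∀ i : I, S {k : K // i ∈ ψ k} (fun k => r k.1) (t i)) →
    (∃ L, S I (fun i => t i * a i) L) ∧
    (∀ k : K, ∃ s, S {i : I // i ∈ ψ k} (fun i => a i.1) s) ∧
    (∀ u : K → X,
      (∀ k : K, S {i : I // i ∈ ψ k} (fun i => a i.1) (u k)) →
      ∃ R, S K (fun k => r k * u k) R ∧
        ∀ L, S I (fun i => t i * a i) L → L = R)

/-- Let `(X,·,1)` be a monoid with a summation system `S` that is
left reorderable and surjective, in which singleton families with sole member `1` sum
to `1`, the empty family is summable with sum `z = Σ()`, and some two-entry family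
`(1, m)` sums to `z`.  Then the induced addition `a ⊞ b := Σ(a, b)` is total, and `X`
with `⊞`, additive identity `z`, and the given multiplication is a ring. -/
theorem stmt_16 {X : Type*} [Monoid X]
    (S : (I : Type) → (I → X) → X → Prop)
    (hfun : ∀ (I : Type) (a : I → X) (x y : X), S I a x → S I a y → x = y)
    (hreord : LeftReorderable S)
    (hsurj : ∀ x : X, ∃ (I : Type) (a : I → X), S I a x)
    (hone : ∀ (I : Type) (i₀ : I), (∀ i, i = i₀) → S I (fun _ => (1 : X)) 1)
    (z : X) (hz : S PEmpty (fun i => i.elim) z)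
    (hm : ∃ m : X, S Bool (fun b => if b then m else (1 : X)) z) :
    ∃ add : X → X → X,
      (∀ a b : X, S Bool (fun i => if i then b else a) (add a b)) ∧
      (∀ a b c : X, add (add a b) c = add a (add b c)) ∧
      (∀ a b : X, add a b = add b a) ∧
      (∀ a : X, add z a = a) ∧ (∀ a : X, add a z = a) ∧
      (∀ a : X, ∃ b : X, add a b = z ∧ add b a = z) ∧
      (∀ a b c : X, a * add b c = add (a * b) (a * c)) ∧
      (∀ a b c : X, add a b * c = add (a * c) (b * c)) := by
  classical
  obtain ⟨m, hm⟩ := hm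
  -- transport a summability fact along a pointwise equality of families
  have scast : ∀ (I : Type) (a b : I → X) (x : X), S I a x → (∀ i, a i = b i) → S I b x := by
    intro I a b x h e
    rwa [funext e] at h
  -- singleton families of constant value 1 sum to 1 (any presentation of the family)
  have hone1 : ∀ (T : Type) (i₀ : T), (∀ i, i = i₀) → ∀ (f : T → X), (∀ i, f i = 1) → S T f 1 := by
    intro T i₀ hT f hf
    exact scast T _ f 1 (hone T i₀ hT) (fun i => (hf i).symm)
  -- all sums over empty index types agree
  have empty_eq : ∀ (I₁ I₂ : Type) (f₁ : I₁ → X) (f₂ : I₂ → X) (e₁ e₂ : X),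
      (I₁ → False) → (I₂ → False) → S I₁ f₁ e₁ → S I₂ f₂ e₂ → e₁ = e₂ := by
    intro I₁ I₂ f₁ f₂ e₁ e₂ h₁ h₂ hS₁ hS₂
    obtain ⟨-, -, h3⟩ := hreord I₁ I₂ f₁ e₁ f₂ (fun _ => Set.univ) (fun i => (h₁ i).elim) hS₁
      (fun i => (h₁ i).elim)
    obtain ⟨R, hR, hLR⟩ := h3 (fun k => (h₂ k).elim) (fun k => (h₂ k).elim)
    have hL := hLR e₁ (scast I₁ f₁ _ e₁ hS₁ (fun i => (h₁ i).elim))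
    have hR' : R = e₂ := hfun I₂ _ _ e₂ (scast I₂ _ f₂ R hR (fun k => (h₂ k).elim)) hS₂
    exact hL.trans hR'
  -- any family over an empty subtype of a summable-carrying type sums to z
  have empty_sum : ∀ (K : Type) (g : K → X) (y : X), S K g y → ∀ (A : Set K), (∀ k, k ∉ A) →
      ∀ (f : {k : K // k ∈ A} → X), S {k : K // k ∈ A} f z := by
    intro K g y hg A hA f
    have ht : ∀ i : K, S {k : Bool // i ∈ cond k A Set.univ} (fun k => (fun _ : Bool => (1:X)) k.1) 1 := by
      intro i
      refine hone1 _ ⟨false, Set.mem_univ i⟩ ?_ _ (fun _ => rfl)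
      rintro ⟨k, hk⟩
      cases k with
      | false => rfl
      | true => exact absurd hk (hA i)
    obtain ⟨-, h2, -⟩ := hreord K Bool g y (fun _ => 1) (fun b => cond b A Set.univ) (fun _ => 1) hg ht
    obtain ⟨s, hs⟩ := h2 true
    have hsz : s = z := empty_eq _ PEmpty _ (fun i => i.elim) s z
      (fun i => hA i.1 i.2) (fun i => i.elim) hs hz
    rw [hsz] at hs
    exact scast _ _ f z hs (fun i => (hA i.1 i.2).elim)
  -- uniform singleton sums: if `S I a x` then some `s` has `S T (const s) x` for all singletons T
  have unif : ∀ (I : Type) (a : I → X) (x : X), S I a x →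
      ∃ s : X, S {i : I // i ∈ (Set.univ : Set I)} (fun i => a i.1) s ∧
        ∀ (T : Type) (i₀ : T), (∀ i, i = i₀) → S T (fun _ => s) x := by
    intro I a x ha
    have inner : ∀ (T : Type) (i₀ : T), (∀ i, i = i₀) →
        ∃ s : X, S {i : I // i ∈ (Set.univ : Set I)} (fun i => a i.1) s ∧ S T (fun _ => s) x := by
      intro T i₀ hT
      obtain ⟨-, h2, h3⟩ := hreord I T a x (fun _ => 1) (fun _ => Set.univ) (fun _ => 1) ha
        (fun i => hone1 _ ⟨i₀, Set.mem_univ i⟩ (fun j => Subtype.ext (hT j.1)) _ (fun _ => rfl))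
      obtain ⟨s, hs⟩ := h2 i₀
      obtain ⟨R, hR, hLR⟩ := h3 (fun _ => s) (fun _ => hs)
      have hx : x = R := hLR x (scast I a _ x ha (fun i => (one_mul (a i)).symm))
      refine ⟨s, hs, ?_⟩
      have h' := scast T _ (fun _ => s) R hR (fun _ => one_mul s)
      rwa [← hx] at h'
    obtain ⟨s, hsub, hs⟩ := inner Unit Unit.unit (fun _ => rfl)
    refine ⟨s, hsub, ?_⟩
    intro T i₀ hT
    obtain ⟨s', hsub', hs'⟩ := inner T i₀ hT
    rwa [show s' = s from hfun _ _ _ _ hsub' hsub] at hs'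
  -- the singleton lemma: constant singleton families sum to their value
  have sing : ∀ (v : X) (T : Type) (i₀ : T), (∀ i, i = i₀) → S T (fun _ => v) v := by
    intro v T i₀ hT
    obtain ⟨I, a, ha⟩ := hsurj v
    obtain ⟨s, -, hs⟩ := unif I a v ha
    have h1 : S Unit (fun _ => s) v := hs Unit Unit.unit (fun _ => rfl)
    obtain ⟨s₂, hsub₂, hs₂⟩ := unif Unit (fun _ => s) v h1
    have hlift : S {i : Unit // i ∈ (Set.univ : Set Unit)} (fun _ => s) v :=
      hs _ ⟨Unit.unit, Set.mem_univ _⟩ (fun i => Subtype.ext rfl)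
    have hs₂v : s₂ = v := hfun _ _ _ _ hsub₂ hlift
    have h2 := hs₂ T i₀ hT
    rwa [hs₂v] at h2
  -- singleton sums of arbitrary families
  have sing_sum : ∀ (T : Type) (i₀ : T), (∀ i, i = i₀) → ∀ (f : T → X), S T f (f i₀) := by
    intro T i₀ hT f
    exact scast T _ f (f i₀) (sing (f i₀) T i₀ hT) (fun i => congrArg f (hT i).symm)
  have sing_sum' : ∀ (T : Type) (f : T → X) (v : X) (i₀ : T), (∀ i, i = i₀) → f i₀ = v →
      S T f v := by
    intro T f v i₀ hT hv
    rw [← hv]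
    exact sing_sum T i₀ hT f
  -- reindexing along a bijection
  have reindex : ∀ (J I : Type) (e : J ≃ I) (a : I → X) (x : X), S I a x →
      ∀ (b : J → X), (∀ j, b j = a (e j)) → S J b x := by
    intro J I e a x ha b hb
    have ht : ∀ i : I, S {k : J // i ∈ {i' : I | i' = e k}} (fun k => (fun _ : J => (1:X)) k.1) 1 := by
      intro i
      refine hone1 _ ⟨e.symm i, (e.apply_symm_apply i).symm⟩ ?_ _ (fun _ => rfl)
      rintro ⟨j, hj⟩
      have h' : e.symm i = j := by rw [show i = e j from hj]; exact e.symm_apply_apply j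
      exact Subtype.ext h'.symm
    obtain ⟨-, -, h3⟩ := hreord I J a x (fun _ => 1) (fun j => {i' : I | i' = e j}) (fun _ => 1) ha ht
    obtain ⟨R, hR, hLR⟩ := h3 (fun j => a (e j))
      (fun j => sing_sum {i : I // i ∈ {i' : I | i' = e j}} ⟨e j, rfl⟩ (fun i => Subtype.ext i.2) _)
    have hx : x = R := hLR x (scast I a _ x ha (fun i => (one_mul (a i)).symm))
    have h' := scast J _ b R hR (fun j => (one_mul _).trans (hb j).symm)
    rwa [← hx] at h'
  -- a full subtype carries the same sum
  have subfull : ∀ (I : Type) (a : I → X) (x : X) (A : Set I), S I a x → (∀ i, i ∈ A) →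
      S {i : I // i ∈ A} (fun i => a i.1) x := by
    intro I a x A ha hA
    exact reindex _ I ⟨Subtype.val, fun i => ⟨i, hA i⟩, fun j => Subtype.ext rfl, fun i => rfl⟩
      a x ha _ (fun j => rfl)
  -- multiplication by z
  have cmulz : ∀ c : X, c * z = z := by
    intro c
    obtain ⟨-, h2, h3⟩ := hreord PEmpty Unit (fun i => i.elim) z (fun _ => c)
      (fun _ => Set.univ) (fun i => i.elim) hz (fun i => i.elim)
    obtain ⟨w, hw⟩ := h2 Unit.unit
    have hwz : w = z := empty_eq _ PEmpty _ (fun i => i.elim) w z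
      (fun i => i.1.elim) (fun i => i.elim) hw hz
    obtain ⟨R, hR, hLR⟩ := h3 (fun _ => w) (fun _ => hw)
    have hzR : z = R := hLR z (scast _ _ _ z hz (fun i => i.elim))
    have hcw : c * w = R := hfun Unit _ _ R (sing_sum Unit Unit.unit (fun _ => rfl) (fun _ => c * w)) hR
    rw [hwz] at hcw
    exact hcw.trans hzR.symm
  have zmulc : ∀ c : X, z * c = z := by
    intro c
    have ht : ∀ i : Unit, S {k : PEmpty.{1} // i ∈ (∅ : Set Unit)}
        (fun k => (fun _ : PEmpty.{1} => (1 : X)) k.1) z := by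
      intro i
      exact empty_sum PEmpty.{1} (fun i' => i'.elim) z hz (fun _ => i ∈ (∅ : Set Unit))
        (fun k h => h) _
    obtain ⟨-, -, h3⟩ := hreord Unit PEmpty.{1} (fun _ => c) c (fun _ => 1)
      (fun _ => (∅ : Set Unit)) (fun _ => z) (sing c Unit Unit.unit fun _ => rfl) ht
    obtain ⟨R, hR, hLR⟩ := h3 (fun k => k.elim) (fun k => k.elim)
    have hRz : R = z := hfun PEmpty.{1} _ _ z (scast _ _ _ R hR (fun k => k.elim)) hz
    have hL := hLR (z * c) (sing_sum Unit Unit.unit (fun _ => rfl) (fun _ => z * c))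
    exact hL.trans hRz
  -- left and right multiplication of a summable family
  have lmul : ∀ (I : Type) (a : I → X) (x c : X), S I a x → S I (fun i => c * a i) (c * x) := by
    intro I a x c ha
    obtain ⟨h1, -, h3⟩ := hreord I Unit a x (fun _ => c) (fun _ => Set.univ) (fun _ => c) ha
      (fun i => sing c _ ⟨Unit.unit, Set.mem_univ i⟩ (fun j => Subtype.ext rfl))
    obtain ⟨L, hL⟩ := h1
    obtain ⟨R, hR, hLR⟩ := h3 (fun _ => x) (fun _ => subfull I a x Set.univ ha (fun i => Set.mem_univ i))
    have h4 : R = c * x := hfun Unit _ _ (c * x) hR (sing_sum Unit Unit.unit (fun _ => rfl) (fun _ => c * x))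
    have h5 : L = R := hLR L hL
    rw [h5, h4] at hL
    exact hL
  have rmul : ∀ (I : Type) (a : I → X) (x c : X), S I a x → S I (fun i => a i * c) (x * c) := by
    intro I a x c ha
    obtain ⟨-, -, h3⟩ := hreord Unit I (fun _ => c) c a (fun _ => Set.univ) (fun _ => x)
      (sing c Unit Unit.unit fun _ => rfl)
      (fun i => subfull I a x (fun _ => i ∈ (Set.univ : Set Unit)) ha (fun k => Set.mem_univ i))
    obtain ⟨R, hR, hLR⟩ := h3 (fun _ => c)
      (fun k => sing c _ ⟨Unit.unit, Set.mem_univ Unit.unit⟩ (fun j => Subtype.ext rfl))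
    have hL := hLR (x * c) (sing_sum Unit Unit.unit (fun _ => rfl) (fun _ => x * c))
    rw [← hL] at hR
    exact hR
  -- z is neutral in two-element families
  have zneutR : ∀ a : X, S Bool (fun i : Bool => if i then z else a) a := by
    intro a
    have ht : ∀ i : Unit, S {k : Bool // i ∈ cond k (∅ : Set Unit) Set.univ}
        (fun k => (fun _ : Bool => (1:X)) k.1) 1 := by
      intro i
      refine hone1 _ ⟨false, Set.mem_univ i⟩ ?_ _ (fun _ => rfl)
      rintro ⟨k, hk⟩
      cases k with
      | false => rfl
      | true => exact absurd hk (fun h => h)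
    obtain ⟨-, -, h3⟩ := hreord Unit Bool (fun _ => a) a (fun _ => 1)
      (fun b => cond b (∅ : Set Unit) Set.univ) (fun _ => 1)
      (sing a Unit Unit.unit fun _ => rfl) ht
    have hu : ∀ k : Bool, S {i : Unit // i ∈ cond k (∅ : Set Unit) Set.univ}
        (fun i => (fun _ : Unit => a) i.1) (cond k z a) := by
      intro k
      cases k with
      | false => exact sing a _ ⟨Unit.unit, Set.mem_univ _⟩ (fun j => Subtype.ext rfl)
      | true =>
          exact empty_sum Unit (fun _ => a) a (sing a Unit Unit.unit fun _ => rfl)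
            (∅ : Set Unit) (fun _ h => h) _
    obtain ⟨R, hR, hLR⟩ := h3 (fun k => cond k z a) hu
    have hL := hLR a (scast Unit _ _ a (sing a Unit Unit.unit fun _ => rfl)
      (fun i => (one_mul a).symm))
    rw [← hL] at hR
    refine scast Bool _ _ a hR ?_
    intro k
    cases k
    · exact one_mul a
    · exact one_mul z
  have pswap : ∀ (a b s : X), S Bool (fun i : Bool => if i then b else a) s →
      S Bool (fun i : Bool => if i then a else b) s := by
    intro a b s h
    refine reindex Bool Bool ⟨Bool.not, Bool.not, Bool.not_not, Bool.not_not⟩ _ s h _ ?_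
    intro j
    cases j <;> rfl
  have zneutL : ∀ a : X, S Bool (fun i : Bool => if i then a else z) a :=
    fun a => pswap a z a (zneutR a)
  -- grouping a (Bool × Bool)-indexed family into two parts
  have group2' : ∀ (F : Bool × Bool → X) (w : X), S (Bool × Bool) F w →
      ∀ (κ : Bool × Bool → Bool) (p : X),
      S {x : Bool × Bool // x ∈ {y : Bool × Bool | κ y = false}} (fun x => F x.1) p →
      ∃ q, S {x : Bool × Bool // x ∈ {y : Bool × Bool | κ y = true}} (fun x => F x.1) q ∧
        S Bool (fun i : Bool => if i then q else p) w := by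
    intro F w hF κ p hp
    obtain ⟨-, h2, h3⟩ := hreord (Bool × Bool) Bool F w (fun _ => 1)
      (fun k => {y : Bool × Bool | κ y = k}) (fun _ => 1) hF
      (fun i => hone1 _ ⟨κ i, rfl⟩ (fun j => Subtype.ext j.2.symm) _ (fun _ => rfl))
    obtain ⟨q, hq⟩ := h2 true
    have hu : ∀ k : Bool, S {x : Bool × Bool // x ∈ {y : Bool × Bool | κ y = k}}
        (fun x => F x.1) (cond k q p) := by
      intro k
      cases k with
      | false => exact hp
      | true => exact hq
    obtain ⟨R, hR, hLR⟩ := h3 (fun k => cond k q p) hu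
    have hL := hLR w (scast _ F _ w hF (fun i => (one_mul (F i)).symm))
    refine ⟨q, hq, ?_⟩
    rw [← hL] at hR
    refine scast Bool _ _ w hR ?_
    intro k
    cases k
    · exact one_mul p
    · exact one_mul q
  have group2 : ∀ (F : Bool × Bool → X) (w : X), S (Bool × Bool) F w →
      ∀ (κ : Bool × Bool → Bool) (p q : X),
      S {x : Bool × Bool // x ∈ {y : Bool × Bool | κ y = false}} (fun x => F x.1) p →
      S {x : Bool × Bool // x ∈ {y : Bool × Bool | κ y = true}} (fun x => F x.1) q →
      S Bool (fun i : Bool => if i then q else p) w := by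
    intro F w hF κ p q hp hq
    obtain ⟨q', hq', hS⟩ := group2' F w hF κ p hp
    rwa [show q' = q from hfun _ _ _ _ hq' hq] at hS
  -- a two-element subtype family sums like the corresponding pair
  have subpair : ∀ (A : Set (Bool × Bool)) (x0 x1 : Bool × Bool), x0 ∈ A → x1 ∈ A → x0 ≠ x1 →
      (∀ y, y ∈ A → y = x0 ∨ y = x1) → ∀ (F : Bool × Bool → X) (s : X),
      S Bool (fun i : Bool => if i then F x1 else F x0) s →
      S {x : Bool × Bool // x ∈ A} (fun x => F x.1) s := by
    intro A x0 x1 h0 h1 hne hA F s hs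
    refine reindex _ Bool ⟨fun k => decide (k.1 = x1), fun b => cond b ⟨x1, h1⟩ ⟨x0, h0⟩, ?_, ?_⟩
      _ s hs _ ?_
    · rintro ⟨y, hy⟩
      rcases hA y hy with h | h <;> subst h
      · simp [hne]
      · simp
    · intro b
      cases b
      · simp [hne]
      · simp
    · rintro ⟨y, hy⟩
      rcases hA y hy with h | h <;> subst h
      · simp [hne]
      · simp
  have subrev : ∀ (A : Set (Bool × Bool)) (x0 x1 : Bool × Bool), x0 ∈ A → x1 ∈ A → x0 ≠ x1 →
      (∀ y, y ∈ A → y = x0 ∨ y = x1) → ∀ (F : Bool × Bool → X) (s : X),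
      S {x : Bool × Bool // x ∈ A} (fun x => F x.1) s →
      S Bool (fun i : Bool => if i then F x1 else F x0) s := by
    intro A x0 x1 h0 h1 hne hA F s hs
    refine reindex Bool _ ⟨fun b => cond b ⟨x1, h1⟩ ⟨x0, h0⟩, fun k => decide (k.1 = x1), ?_, ?_⟩
      _ s hs _ ?_
    · intro b
      cases b
      · simp [hne]
      · simp
    · rintro ⟨y, hy⟩
      rcases hA y hy with h | h <;> subst h
      · simp [hne]
      · simp
    · intro j
      cases j
      · rfl
      · rfl
  -- the overlapping-fibers trick: multiply a two-element family spread over Bool × Bool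
  have gtrick : ∀ (base : Bool → X) (s : X), S Bool base s → ∀ (r : Bool × Bool → X) (t : Bool → X),
      (∀ i : Bool, S Bool (fun j : Bool => if j then r (i, true) else r (!i, false)) (t i)) →
      ∃ R, S (Bool × Bool) (fun k => r k * cond k.2 (base k.1) (base (!k.1))) R ∧
        ∀ L, S Bool (fun i => t i * base i) L → L = R := by
    intro base s hbase r t ht
    have ht' : ∀ i : Bool, S {k : Bool × Bool // i ∈ {j : Bool | cond k.2 (j = k.1) (¬ j = k.1)}}
        (fun k => r k.1) (t i) := by
      intro i
      have hmem2 : i ∈ {j : Bool | cond (!i, false).2 (j = (!i, false).1) (¬ j = (!i, false).1)} :=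
        (by cases i <;> decide : ¬ i = !i)
      refine reindex _ Bool ⟨fun k => k.1.2, fun b => cond b ⟨(i, true), rfl⟩ ⟨(!i, false), hmem2⟩,
        ?_, ?_⟩ _ (t i) (ht i) _ ?_
      · rintro ⟨⟨p, q⟩, hpq⟩
        cases q
        · have hpq' : ¬ i = p := hpq
          refine Subtype.ext ?_
          show ((!i, false) : Bool × Bool) = (p, false)
          revert hpq'
          cases i <;> cases p <;> decide
        · have hpq' : i = p := hpq
          refine Subtype.ext ?_
          show ((i, true) : Bool × Bool) = (p, true)
          rw [hpq']
      · intro b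
        cases b
        · rfl
        · rfl
      · rintro ⟨⟨p, q⟩, hpq⟩
        cases q
        · have hpq' : ¬ i = p := hpq
          have hp : (p, false) = (!i, false) := by
            revert hpq'
            cases i <;> cases p <;> decide
          exact congrArg r hp
        · have hpq' : i = p := hpq
          exact congrArg r (congrArg (fun v => (v, true)) hpq'.symm)
    obtain ⟨-, -, h3⟩ := hreord Bool (Bool × Bool) base s r
      (fun k => {j : Bool | cond k.2 (j = k.1) (¬ j = k.1)}) t hbase ht'
    have hu : ∀ k : Bool × Bool, S {j : Bool // j ∈ {j : Bool | cond k.2 (j = k.1) (¬ j = k.1)}}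
        (fun j => base j.1) (cond k.2 (base k.1) (base (!k.1))) := by
      rintro ⟨p, q⟩
      cases q
      · have hmem : ¬ (!p) = p := by cases p <;> decide
        show S {j : Bool // j ∈ {j : Bool | ¬ j = p}} (fun j => base j.1) (base (!p))
        refine sing_sum {j : Bool // j ∈ {j : Bool | ¬ j = p}} ⟨!p, hmem⟩ ?_ _
        rintro ⟨j, hj⟩
        have hj' : ¬ j = p := hj
        refine Subtype.ext ?_
        show j = !p
        revert hj'
        cases p <;> cases j <;> decide
      · show S {j : Bool // j ∈ {j : Bool | j = p}} (fun j => base j.1) (base p)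
        refine sing_sum {j : Bool // j ∈ {j : Bool | j = p}} ⟨p, rfl⟩ ?_ _
        rintro ⟨j, hj⟩
        exact Subtype.ext hj
    obtain ⟨R, hR, hLR⟩ := h3 (fun k => cond k.2 (base k.1) (base (!k.1))) hu
    exact ⟨R, hR, hLR⟩
  -- the fundamental 4-element family (m, m, 1, m*m) with sum z
  have hGf : S (Bool × Bool) (fun k : Bool × Bool => cond k.1 (cond k.2 (m * m) 1) m) z := by
    obtain ⟨R, hR, hLR⟩ := gtrick (fun i : Bool => if i then m else 1) z hm
      (fun k => if k.2 then m else 1) (fun _ => z)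
      (fun i => scast Bool _ _ z hm (by intro j; cases j <;> rfl))
    have hz' : z = R := by
      refine hLR z (scast Bool _ _ z (zneutR z) ?_)
      intro i
      cases i
      · exact (mul_one z).symm
      · exact (zmulc m).symm
    rw [← hz'] at hR
    refine scast _ _ _ z hR ?_
    rintro ⟨p, q⟩
    cases p <;> cases q
    · exact one_mul m
    · exact mul_one m
    · exact one_mul 1
    · rfl
  -- m + m*m = 0
  have stepA : S Bool (fun i : Bool => if i then m * m else m) z := by
    have hA1 : ∀ y : Bool × Bool, y ∈ {y : Bool × Bool | (y.1 == y.2) = false} →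
        y = (false, true) ∨ y = (true, false) := by
      rintro ⟨p, q⟩ h
      have h' : (p == q) = false := h
      revert h'
      cases p <;> cases q <;> decide
    have hA2 : ∀ y : Bool × Bool, y ∈ {y : Bool × Bool | (y.1 == y.2) = true} →
        y = (false, false) ∨ y = (true, true) := by
      rintro ⟨p, q⟩ h
      have h' : (p == q) = true := h
      revert h'
      cases p <;> cases q <;> decide
    obtain ⟨q, hq, hS⟩ := group2' _ z hGf (fun x => x.1 == x.2) z
      (subpair {y : Bool × Bool | (y.1 == y.2) = false} (false, true) (true, false) rfl rfl
        (by decide) hA1 (fun k : Bool × Bool => cond k.1 (cond k.2 (m * m) 1) m) z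
        (scast _ _ _ z (pswap 1 m z hm) (by intro i; cases i <;> rfl)))
    have hqz : q = z := (hfun _ _ _ _ hS (zneutL q)).symm
    rw [hqz] at hq
    have h2 := subrev {y : Bool × Bool | (y.1 == y.2) = true} (false, false) (true, true) rfl rfl
      (by decide) hA2 (fun k : Bool × Bool => cond k.1 (cond k.2 (m * m) 1) m) z hq
    exact scast _ _ _ z h2 (by intro i; cases i <;> rfl)
  -- a 4-element family (1, m, m*m, z) whose groupings pin m*m = 1
  have mm1 : m * m = 1 := by
    have ht : ∀ i : Bool × Bool, S {k : Bool × Bool // i ∈ {y : Bool × Bool |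
        (cond k.1 (cond k.2 false (y == (false, true)))
          (cond k.2 (y == (false, false)) (y == (true, false)))) = true}}
        (fun k => (fun k' : Bool × Bool => cond k'.1 (cond k'.2 (1 : X) m) 1) k.1)
        ((fun i' : Bool × Bool => cond i'.1 (cond i'.2 z 1) (cond i'.2 m 1)) i) := by
      rintro ⟨p, q⟩
      cases p <;> cases q
      · -- i = (f,f) : unique k = (f,t), value 1
        refine sing_sum' _ _ _ ⟨(false, true), by decide⟩ ?_ rfl
        rintro ⟨⟨p', q'⟩, h⟩
        refine Subtype.ext ?_
        show ((p', q') : Bool × Bool) = (false, true)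
        revert h
        cases p' <;> cases q' <;> decide
      · -- i = (f,t) : unique k = (t,f), value m
        refine sing_sum' _ _ _ ⟨(true, false), by decide⟩ ?_ rfl
        rintro ⟨⟨p', q'⟩, h⟩
        refine Subtype.ext ?_
        show ((p', q') : Bool × Bool) = (true, false)
        revert h
        cases p' <;> cases q' <;> decide
      · -- i = (t,f) : unique k = (f,f), value 1
        refine sing_sum' _ _ _ ⟨(false, false), by decide⟩ ?_ rfl
        rintro ⟨⟨p', q'⟩, h⟩
        refine Subtype.ext ?_
        show ((p', q') : Bool × Bool) = (false, false)
        revert h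
        cases p' <;> cases q' <;> decide
      · -- i = (t,t) : empty fiber, value z
        refine empty_sum (Bool × Bool) _ z hGf _ ?_ _
        rintro ⟨p', q'⟩ h
        have h' : (cond p' (cond q' false (((true, true) : Bool × Bool) == (false, true)))
          (cond q' (((true, true) : Bool × Bool) == (false, false))
            (((true, true) : Bool × Bool) == (true, false)))) = true := h
        revert h'
        cases p' <;> cases q' <;> decide
    obtain ⟨-, -, h3⟩ := hreord (Bool × Bool) (Bool × Bool)
      (fun k : Bool × Bool => cond k.1 (cond k.2 (m * m) 1) m) z
      (fun k' : Bool × Bool => cond k'.1 (cond k'.2 (1 : X) m) 1)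
      (fun k => {y : Bool × Bool | (cond k.1 (cond k.2 false (y == (false, true)))
        (cond k.2 (y == (false, false)) (y == (true, false)))) = true})
      (fun i' : Bool × Bool => cond i'.1 (cond i'.2 z 1) (cond i'.2 m 1))
      hGf ht
    have hu : ∀ k : Bool × Bool, S {i : Bool × Bool // i ∈ {y : Bool × Bool |
        (cond k.1 (cond k.2 false (y == (false, true)))
          (cond k.2 (y == (false, false)) (y == (true, false)))) = true}}
        (fun i => (fun k' : Bool × Bool => cond k'.1 (cond k'.2 (m * m) 1) m) i.1)
        ((fun k' : Bool × Bool => cond k'.1 (cond k'.2 z m) (cond k'.2 m 1)) k) := by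
      rintro ⟨p, q⟩
      cases p <;> cases q
      · -- part {(t,f)} ↦ 1
        refine sing_sum' _ _ _ ⟨(true, false), by decide⟩ ?_ rfl
        rintro ⟨⟨p', q'⟩, h⟩
        refine Subtype.ext ?_
        show ((p', q') : Bool × Bool) = (true, false)
        revert h
        cases p' <;> cases q' <;> decide
      · -- part {(f,f)} ↦ m
        refine sing_sum' _ _ _ ⟨(false, false), by decide⟩ ?_ rfl
        rintro ⟨⟨p', q'⟩, h⟩
        refine Subtype.ext ?_
        show ((p', q') : Bool × Bool) = (false, false)
        revert h
        cases p' <;> cases q' <;> decide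
      · -- part {(f,t)} ↦ m
        refine sing_sum' _ _ _ ⟨(false, true), by decide⟩ ?_ rfl
        rintro ⟨⟨p', q'⟩, h⟩
        refine Subtype.ext ?_
        show ((p', q') : Bool × Bool) = (false, true)
        revert h
        cases p' <;> cases q' <;> decide
      · -- empty part ↦ z
        refine empty_sum (Bool × Bool) _ z hGf _ ?_ _
        rintro ⟨p', q'⟩ h
        exact Bool.noConfusion (show false = true from h)
    obtain ⟨w, hw, -⟩ := h3 (fun k' : Bool × Bool => cond k'.1 (cond k'.2 z m) (cond k'.2 m 1)) hu
    have hH : S (Bool × Bool) (fun k : Bool × Bool => cond k.1 (cond k.2 z (m * m)) (cond k.2 m 1)) w := by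
      refine scast _ _ _ w hw ?_
      rintro ⟨p, q⟩
      cases p <;> cases q
      · exact one_mul 1
      · exact one_mul m
      · rfl
      · exact one_mul z
    -- grouping 1 : parts by first coordinate give w = m * m
    have hB1 : ∀ y : Bool × Bool, y ∈ {y : Bool × Bool | y.1 = false} →
        y = (false, false) ∨ y = (false, true) := by
      rintro ⟨p, q⟩ h
      have h' : p = false := h
      revert h'
      cases p <;> cases q <;> decide
    have hB2 : ∀ y : Bool × Bool, y ∈ {y : Bool × Bool | y.1 = true} →
        y = (true, false) ∨ y = (true, true) := by
      rintro ⟨p, q⟩ h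
      have h' : p = true := h
      revert h'
      cases p <;> cases q <;> decide
    have grp1 : S Bool (fun i : Bool => if i then m * m else z) w := by
      refine group2 _ w hH (fun x => x.1) z (m * m) ?_ ?_
      · refine subpair {y : Bool × Bool | y.1 = false} (false, false) (false, true) rfl rfl
          (by decide) hB1 (fun k : Bool × Bool => cond k.1 (cond k.2 z (m * m)) (cond k.2 m 1)) z
          (scast _ _ _ z hm ?_)
        intro i
        cases i <;> rfl
      · refine subpair {y : Bool × Bool | y.1 = true} (true, false) (true, true) rfl rfl
          (by decide) hB2 (fun k : Bool × Bool => cond k.1 (cond k.2 z (m * m)) (cond k.2 m 1)) (m * m)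
          (scast _ _ _ (m * m) (zneutR (m * m)) ?_)
        intro i
        cases i <;> rfl
    have hwmm : w = m * m := hfun _ _ _ _ grp1 (zneutL (m * m))
    -- grouping 2 : parts by xor give w = 1
    have hC1 : ∀ y : Bool × Bool, y ∈ {y : Bool × Bool | xor y.1 y.2 = false} →
        y = (false, false) ∨ y = (true, true) := by
      rintro ⟨p, q⟩ h
      have h' : xor p q = false := h
      revert h'
      cases p <;> cases q <;> decide
    have hC2 : ∀ y : Bool × Bool, y ∈ {y : Bool × Bool | xor y.1 y.2 = true} →
        y = (false, true) ∨ y = (true, false) := by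
      rintro ⟨p, q⟩ h
      have h' : xor p q = true := h
      revert h'
      cases p <;> cases q <;> decide
    have grp2 : S Bool (fun i : Bool => if i then z else 1) w := by
      refine group2 _ w hH (fun x => xor x.1 x.2) 1 z ?_ ?_
      · refine subpair {y : Bool × Bool | xor y.1 y.2 = false} (false, false) (true, true) rfl rfl
          (by decide) hC1 (fun k : Bool × Bool => cond k.1 (cond k.2 z (m * m)) (cond k.2 m 1)) 1
          (scast _ _ _ 1 (zneutR 1) ?_)
        intro i
        cases i <;> rfl
      · refine subpair {y : Bool × Bool | xor y.1 y.2 = true} (false, true) (true, false) rfl rfl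
          (by decide) hC2 (fun k : Bool × Bool => cond k.1 (cond k.2 z (m * m)) (cond k.2 m 1)) z
          (scast _ _ _ z stepA ?_)
        intro i
        cases i <;> rfl
    have hw1 : w = 1 := hfun _ _ _ _ grp2 (zneutR 1)
    rw [← hwmm, hw1]
  -- totality of the induced addition
  have total : ∀ a b : X, ∃ s, S Bool (fun i : Bool => if i then b else a) s := by
    intro a b
    have ht : ∀ i : Bool, S {k : Bool // i ∈ {j : Bool | j = k}}
        (fun k => (fun k' : Bool => if k' then b * m else a) k.1)
        ((fun k' : Bool => if k' then b * m else a) i) := by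
      intro i
      refine sing_sum' _ _ _ ⟨i, rfl⟩ ?_ rfl
      rintro ⟨k, hk⟩
      exact Subtype.ext hk.symm
    obtain ⟨-, -, h3⟩ := hreord Bool Bool (fun i : Bool => if i then m else 1) z
      (fun k' : Bool => if k' then b * m else a) (fun k => {j : Bool | j = k})
      (fun k' : Bool => if k' then b * m else a) hm ht
    have hu : ∀ k : Bool, S {i : Bool // i ∈ {j : Bool | j = k}}
        (fun i => (fun i' : Bool => if i' then m else 1) i.1)
        ((fun k' : Bool => if k' then m else 1) k) := by
      intro k
      refine sing_sum' _ _ _ ⟨k, rfl⟩ ?_ rfl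
      rintro ⟨i, hi⟩
      exact Subtype.ext hi
    obtain ⟨R, hR, -⟩ := h3 (fun k' : Bool => if k' then m else 1) hu
    refine ⟨R, scast _ _ _ R hR ?_⟩
    intro k
    cases k
    · exact mul_one a
    · show b * m * m = b
      rw [mul_assoc, mm1, mul_one]
  choose add hadd using total
  have pin : ∀ a b s : X, S Bool (fun i : Bool => if i then b else a) s → add a b = s :=
    fun a b s h => hfun _ _ _ _ (hadd a b) h
  refine ⟨add, hadd, ?_, ?_, ?_, ?_, ?_, ?_, ?_⟩
  · -- associativity
    intro a b c
    obtain ⟨R4, hR4, -⟩ := gtrick (fun i : Bool => if i then (1 : X) else 1) (add 1 1) (hadd 1 1)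
      (fun k : Bool × Bool => cond k.1 (cond k.2 z c) (cond k.2 b a))
      (fun i => add ((fun k : Bool × Bool => cond k.1 (cond k.2 z c) (cond k.2 b a)) (!i, false))
        ((fun k : Bool × Bool => cond k.1 (cond k.2 z c) (cond k.2 b a)) (i, true)))
      (fun i => hadd _ _)
    have hF4 : S (Bool × Bool) (fun k : Bool × Bool => cond k.1 (cond k.2 z c) (cond k.2 b a)) R4 := by
      refine scast _ _ _ R4 hR4 ?_
      rintro ⟨p, q⟩
      cases p <;> cases q
      · exact mul_one a
      · exact mul_one b
      · exact mul_one c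
      · exact mul_one z
    have hB1 : ∀ y : Bool × Bool, y ∈ {y : Bool × Bool | y.1 = false} →
        y = (false, false) ∨ y = (false, true) := by
      rintro ⟨p, q⟩ h
      have h' : p = false := h
      revert h'
      cases p <;> cases q <;> decide
    have hB2 : ∀ y : Bool × Bool, y ∈ {y : Bool × Bool | y.1 = true} →
        y = (true, false) ∨ y = (true, true) := by
      rintro ⟨p, q⟩ h
      have h' : p = true := h
      revert h'
      cases p <;> cases q <;> decide
    have hC1 : ∀ y : Bool × Bool, y ∈ {y : Bool × Bool | xor y.1 y.2 = false} →
        y = (false, false) ∨ y = (true, true) := by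
      rintro ⟨p, q⟩ h
      have h' : xor p q = false := h
      revert h'
      cases p <;> cases q <;> decide
    have hC2 : ∀ y : Bool × Bool, y ∈ {y : Bool × Bool | xor y.1 y.2 = true} →
        y = (false, true) ∨ y = (true, false) := by
      rintro ⟨p, q⟩ h
      have h' : xor p q = true := h
      revert h'
      cases p <;> cases q <;> decide
    have grp1 : S Bool (fun i : Bool => if i then c else add a b) R4 := by
      refine group2 _ R4 hF4 (fun x => x.1) (add a b) c ?_ ?_
      · refine subpair {y : Bool × Bool | y.1 = false} (false, false) (false, true) rfl rfl
          (by decide) hB1 (fun k : Bool × Bool => cond k.1 (cond k.2 z c) (cond k.2 b a)) (add a b)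
          (scast _ _ _ _ (hadd a b) ?_)
        intro i
        cases i <;> rfl
      · refine subpair {y : Bool × Bool | y.1 = true} (true, false) (true, true) rfl rfl
          (by decide) hB2 (fun k : Bool × Bool => cond k.1 (cond k.2 z c) (cond k.2 b a)) c
          (scast _ _ _ _ (zneutR c) ?_)
        intro i
        cases i <;> rfl
    have grp2 : S Bool (fun i : Bool => if i then add b c else a) R4 := by
      refine group2 _ R4 hF4 (fun x => xor x.1 x.2) a (add b c) ?_ ?_
      · refine subpair {y : Bool × Bool | xor y.1 y.2 = false} (false, false) (true, true) rfl rfl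
          (by decide) hC1 (fun k : Bool × Bool => cond k.1 (cond k.2 z c) (cond k.2 b a)) a
          (scast _ _ _ _ (zneutR a) ?_)
        intro i
        cases i <;> rfl
      · refine subpair {y : Bool × Bool | xor y.1 y.2 = true} (false, true) (true, false) rfl rfl
          (by decide) hC2 (fun k : Bool × Bool => cond k.1 (cond k.2 z c) (cond k.2 b a)) (add b c)
          (scast _ _ _ _ (hadd b c) ?_)
        intro i
        cases i <;> rfl
    have e1 : add (add a b) c = R4 := pin _ _ _ grp1
    have e2 : add a (add b c) = R4 := pin _ _ _ grp2
    rw [e1, e2]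
  · -- commutativity
    intro a b
    exact (pin b a (add a b) (pswap a b (add a b) (hadd a b))).symm
  · -- left neutral
    intro a
    exact pin z a a (zneutL a)
  · -- right neutral
    intro a
    exact pin a z a (zneutR a)
  · -- additive inverses
    intro a
    have h1 : S Bool (fun i : Bool => if i then a * m else a) z := by
      have h := lmul Bool (fun i : Bool => if i then m else 1) z a hm
      rw [cmulz a] at h
      refine scast _ _ _ z h ?_
      intro i
      cases i
      · exact mul_one a
      · rfl
    exact ⟨a * m, pin a (a * m) z h1, pin (a * m) a z (pswap a (a * m) z h1)⟩
  · -- left distributivity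
    intro a b c
    have h := lmul Bool (fun i : Bool => if i then c else b) (add b c) a (hadd b c)
    refine (pin (a * b) (a * c) _ (scast _ _ _ _ h ?_)).symm
    intro i
    cases i <;> rfl
  · -- right distributivity
    intro a b c
    have h := rmul Bool (fun i : Bool => if i then b else a) (add a b) c (hadd a b)
    refine (pin (a * c) (b * c) _ (scast _ _ _ _ h ?_)).symm
    intro i
    cases i <;> rfl
end

section
/- Let X be a ring (with identity 1) and let Σ be a summation system on X satisfying: left reorderability; surjectivity; the empty family is summable with Σ() = 0; every singleton family sums to its sole member; and every two-entry family (a, b) is summable with Σ(a, b) = a + b, where + is the ring addition (so X with Σ is a reorderable ring whose induced addition and zero agree with the ring structure). Then for every t ∈ X, a family a : ℕ → X is summable with Σa = t if and only if the family k ↦ t − (a 0 + a 1 + ⋯ + a (k−1)) (k ∈ ℕ) is summable. -/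
section Aux

variable {X : Type*} [Ring X] (S : (I : Type) → (I → X) → X → Prop)

lemma sum_transport (hreord : LeftReorderable S)
    (hsingle : ∀ (I : Type) (i₀ : I), (∀ i, i = i₀) → ∀ a : I → X, S I a (a i₀))
    (I K : Type) (a : I → X) (x : X) (e : K ≃ I) (hS : S I a x) :
    S K (fun k => a (e k)) x := by
  have hτ : ∀ i : I, S {k : K // i ∈ ({e k} : Set I)} (fun k => (fun _ : K => (1:X)) k.1) 1 := by
    intro i
    have h := hsingle {k : K // i ∈ ({e k} : Set I)} ⟨e.symm i, by simp⟩
      (by rintro ⟨k, hk⟩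
          rw [Set.mem_singleton_iff] at hk
          apply Subtype.ext
          simp [hk]) (fun _ => (1:X))
    exact h
  obtain ⟨_, _, h3⟩ := hreord I K a x (fun _ => 1) (fun k => {e k}) (fun _ => 1) hS hτ
  obtain ⟨R, hR, hL⟩ := h3 (fun k => a (e k)) (by
    intro k
    exact hsingle {i : I // i ∈ ({e k} : Set I)} ⟨e k, rfl⟩
      (by rintro ⟨i, hi⟩
          rw [Set.mem_singleton_iff] at hi
          exact Subtype.ext hi) (fun i => a i.1))
  have hx : x = R := by
    apply hL
    have h1 : (fun i => (1:X) * a i) = a := by funext i; rw [one_mul]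
    rw [h1]; exact hS
  have h2 : (fun k => (1:X) * a (e k)) = (fun k => a (e k)) := by
    funext k; rw [one_mul]
  rw [h2] at hR
  rwa [hx]


lemma sum_empty (hreord : LeftReorderable S)
    (hempty : S PEmpty (fun i => i.elim) 0)
    (hsingle : ∀ (I : Type) (i₀ : I), (∀ i, i = i₀) → ∀ a : I → X, S I a (a i₀))
    (K : Type) [IsEmpty K] (f : K → X) : S K f 0 := by
  have h := sum_transport S hreord hsingle PEmpty K (fun i => i.elim) 0
    (Equiv.equivPEmpty K) hempty
  have : (fun k => (Equiv.equivPEmpty K k).elim) = f := by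
    funext k; exact (IsEmpty.false k).elim
  rwa [this] at h

lemma sum_zero (hreord : LeftReorderable S)
    (hempty : S PEmpty (fun i => i.elim) 0)
    (hsingle : ∀ (I : Type) (i₀ : I), (∀ i, i = i₀) → ∀ a : I → X, S I a (a i₀))
    (K : Type) : S K (fun _ => (0:X)) 0 := by
  obtain ⟨_, _, h3⟩ := hreord PEmpty K (fun i => i.elim) 0 (fun _ => 1)
    (fun _ => (∅ : Set PEmpty)) (fun i => i.elim) hempty (fun i => i.elim)
  haveI : IsEmpty {i : PEmpty // i ∈ (∅ : Set PEmpty)} := ⟨fun i => i.1.elim⟩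
  obtain ⟨R, hR, hL⟩ := h3 (fun _ => 0) (by
    intro k
    exact sum_empty S hreord hempty hsingle _ _)
  have h0 : (0:X) = R := by
    apply hL
    have : (fun i : PEmpty => (i.elim : X) * i.elim) = (fun i : PEmpty => (i.elim : X)) := by
      funext i; exact i.elim
    rw [this]; exact hempty
  have : (fun _ : K => (1:X) * 0) = (fun _ : K => (0:X)) := by
    funext k; rw [mul_zero]
  rw [this] at hR
  subst h0
  exact hR

lemma sum_delta (hreord : LeftReorderable S)
    (hempty : S PEmpty (fun i => i.elim) 0)
    (hsingle : ∀ (I : Type) (i₀ : I), (∀ i, i = i₀) → ∀ a : I → X, S I a (a i₀))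
    (c : X) : S ℕ (fun n => if n = 0 then c else 0) c := by
  have hbase : S PUnit (fun _ => c) c :=
    hsingle PUnit PUnit.unit (fun i => rfl) (fun _ => c)
  have hτ : ∀ i : PUnit, S {k : ℕ // i ∈ (if k = 0 then (Set.univ : Set PUnit) else ∅)}
      (fun k => (fun _ : ℕ => (1:X)) k.1) ((fun _ : PUnit => (1:X)) i) := by
    intro i
    exact hsingle _ ⟨0, by simp⟩
      (by rintro ⟨k, hk⟩
          apply Subtype.ext
          by_contra hne
          simp only [hne, if_neg] at hk
          exact hk) (fun _ => (1:X))
  obtain ⟨_, _, h3⟩ := hreord PUnit ℕ (fun _ => c) c (fun _ => 1)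
    (fun k => if k = 0 then Set.univ else ∅) (fun _ => 1) hbase hτ
  obtain ⟨R, hR, hL⟩ := h3 (fun k => if k = 0 then c else 0) (by
    intro k
    by_cases hk : k = 0
    · subst hk
      simp only [if_pos rfl]
      exact hsingle _ ⟨PUnit.unit, by simp⟩ (fun i => Subtype.ext rfl) _
    · simp only [if_neg hk]
      haveI : IsEmpty {i : PUnit // i ∈ (if k = 0 then (Set.univ : Set PUnit) else ∅)} :=
        ⟨by rintro ⟨i, hi⟩; simp only [if_neg hk] at hi; exact hi⟩
      exact sum_empty S hreord hempty hsingle _ _)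
  have hc : c = R := by
    apply hL
    have : (fun _ : PUnit => (1:X) * c) = (fun _ : PUnit => c) := by
      funext i; rw [one_mul]
    rw [this]; exact hbase
  have : (fun k : ℕ => (1:X) * (if k = 0 then c else 0)) = (fun k : ℕ => if k = 0 then c else 0) := by
    funext k; rw [one_mul]
  rw [this] at hR
  subst hc
  exact hR

lemma sum_split_s18 (hreord : LeftReorderable S)
    (hfun : ∀ (I : Type) (a : I → X) (x y : X), S I a x → S I a y → x = y)
    (hsingle : ∀ (I : Type) (i₀ : I), (∀ i, i = i₀) → ∀ a : I → X, S I a (a i₀))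
    (hpair : ∀ (I : Type) (i₀ i₁ : I), i₀ ≠ i₁ → (∀ i, i = i₀ ∨ i = i₁) →
      ∀ a : I → X, S I a (a i₀ + a i₁))
    (I : Type) (A : I → X) (x : X) (hA : S I A x) (P : Set I) :
    ∃ s₁ s₂, S {i // i ∈ P} (fun i => A i.1) s₁ ∧ S {i // i ∈ Pᶜ} (fun i => A i.1) s₂ ∧
      x = s₁ + s₂ := by
  classical
  have hτ : ∀ i : I, S {b : Bool // i ∈ (cond b P Pᶜ)}
      (fun b => (fun _ : Bool => (1:X)) b.1) ((fun _ : I => (1:X)) i) := by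
    intro i
    by_cases hi : i ∈ P
    · exact hsingle _ ⟨true, hi⟩
        (by rintro ⟨b, hb⟩
            apply Subtype.ext
            cases b with
            | true => rfl
            | false => exact absurd hi hb) (fun _ => (1:X))
    · exact hsingle _ ⟨false, hi⟩
        (by rintro ⟨b, hb⟩
            apply Subtype.ext
            cases b with
            | true => exact absurd hb hi
            | false => rfl) (fun _ => (1:X))
  obtain ⟨_, h2, h3⟩ := hreord I Bool A x (fun _ => 1) (fun b => cond b P Pᶜ)
    (fun _ => 1) hA hτ
  obtain ⟨s₁, hs₁⟩ := h2 true
  obtain ⟨s₂, hs₂⟩ := h2 false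
  obtain ⟨R, hR, hL⟩ := h3 (fun b => cond b s₁ s₂) (by
    intro b
    cases b with
    | true => exact hs₁
    | false => exact hs₂)
  have hx : x = R := by
    apply hL
    have : (fun i => (1:X) * A i) = A := by funext i; rw [one_mul]
    rw [this]; exact hA
  have hp := hpair Bool true false (by simp)
    (by intro b; cases b with
        | true => exact Or.inl rfl
        | false => exact Or.inr rfl) (fun b => (1:X) * cond b s₁ s₂)
  have hRval : R = 1 * s₁ + 1 * s₂ := hfun Bool _ _ _ hR hp
  exact ⟨s₁, s₂, hs₁, hs₂, by rw [hx, hRval, one_mul, one_mul]⟩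

lemma sum_tail (hreord : LeftReorderable S)
    (hfun : ∀ (I : Type) (a : I → X) (x y : X), S I a x → S I a y → x = y)
    (hsingle : ∀ (I : Type) (i₀ : I), (∀ i, i = i₀) → ∀ a : I → X, S I a (a i₀))
    (hpair : ∀ (I : Type) (i₀ i₁ : I), i₀ ≠ i₁ → (∀ i, i = i₀ ∨ i = i₁) →
      ∀ a : I → X, S I a (a i₀ + a i₁))
    (f : ℕ → X) (x : X) (hf : S ℕ f x) :
    ∃ s, S ℕ (fun n => f (n + 1)) s ∧ x = s + f 0 := by
  obtain ⟨s₁, s₂, hs₁, hs₂, hx⟩ := sum_split_s18 S hreord hfun hsingle hpair ℕ f x hf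
    {n : ℕ | n ≠ 0}
  -- s₂ = f 0
  have h0 : (0:ℕ) ∈ ({n : ℕ | n ≠ 0}ᶜ : Set ℕ) := by simp
  have hsing : S {i : ℕ // i ∈ ({n : ℕ | n ≠ 0}ᶜ : Set ℕ)} (fun i => f i.1) (f 0) := by
    have h := hsingle _ (⟨0, h0⟩ : {i : ℕ // i ∈ ({n : ℕ | n ≠ 0}ᶜ : Set ℕ)})
      (by rintro ⟨i, hi⟩
          apply Subtype.ext
          simpa using hi) (fun i => f i.1)
    exact h
  have hs2 : s₂ = f 0 := hfun _ _ _ _ hs₂ hsing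
  -- transport s₁
  have ht := sum_transport S hreord hsingle {i : ℕ // i ∈ ({n : ℕ | n ≠ 0} : Set ℕ)} ℕ
    (fun i => f i.1) s₁
    ⟨fun n => ⟨n + 1, Nat.succ_ne_zero n⟩, fun j => j.1 - 1, fun n => by simp,
      fun j => by apply Subtype.ext; exact Nat.succ_pred_eq_of_ne_zero j.2⟩ hs₁
  have heq2 : (fun k : ℕ => f (((⟨fun n => ⟨n + 1, Nat.succ_ne_zero n⟩, fun j => j.1 - 1,
      fun n => by simp, fun j => by apply Subtype.ext; exact Nat.succ_pred_eq_of_ne_zero j.2⟩ :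
      ℕ ≃ {i : ℕ // i ∈ ({n : ℕ | n ≠ 0} : Set ℕ)}) k) : {i : ℕ // i ∈ ({n : ℕ | n ≠ 0} : Set ℕ)}).1)
      = (fun n => f (n + 1)) := rfl
  rw [heq2] at ht
  exact ⟨s₁, ht, by rw [hx, hs2]⟩

lemma sum_tails (hreord : LeftReorderable S)
    (hfun : ∀ (I : Type) (a : I → X) (x y : X), S I a x → S I a y → x = y)
    (hsingle : ∀ (I : Type) (i₀ : I), (∀ i, i = i₀) → ∀ a : I → X, S I a (a i₀))
    (hpair : ∀ (I : Type) (i₀ i₁ : I), i₀ ≠ i₁ → (∀ i, i = i₀ ∨ i = i₁) →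
      ∀ a : I → X, S I a (a i₀ + a i₁))
    (a : ℕ → X) (t : X) (ha : S ℕ a t) :
    ∀ k, S ℕ (fun n => a (n + k)) (t - ∑ i ∈ Finset.range k, a i) := by
  intro k
  induction k with
  | zero => simpa using ha
  | succ k ih =>
    obtain ⟨s, hs, heq⟩ := sum_tail S hreord hfun hsingle hpair _ _ ih
    have h1 : (fun n => a (n + 1 + k)) = (fun n => a (n + (k + 1))) := by
      funext n; congr 1; omega
    rw [h1] at hs
    have h2 : s = t - ∑ i ∈ Finset.range (k + 1), a i := by
      have hk : a (0 + k) = a k := by norm_num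
      rw [hk] at heq
      rw [Finset.sum_range_succ, ← sub_sub]
      exact eq_sub_of_add_eq heq.symm
    rwa [h2] at hs

lemma sum_ones_double (hreord : LeftReorderable S)
    (hempty : S PEmpty (fun i => i.elim) 0)
    (hsingle : ∀ (I : Type) (i₀ : I), (∀ i, i = i₀) → ∀ a : I → X, S I a (a i₀))
    (hpair : ∀ (I : Type) (i₀ i₁ : I), i₀ ≠ i₁ → (∀ i, i = i₀ ∨ i = i₁) →
      ∀ a : I → X, S I a (a i₀ + a i₁))
    (m : ℕ) (h : ∃ y, S ℕ (fun n => if n < m then (1:X) else 0) y) :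
    ∃ y, S ℕ (fun n => if n < 2 * m then (1:X) else 0) y := by
  obtain ⟨y, hy⟩ := h
  have hτ : ∀ i : ℕ, S {k : ℕ // i ∈ (if k < 2 * m then ({k / 2} : Set ℕ) else ∅)}
      (fun k => (fun _ : ℕ => (1:X)) k.1)
      ((fun i : ℕ => if i < m then (1+1:X) else 0) i) := by
    intro i
    by_cases hi : i < m
    · simp only [if_pos hi]
      have hm0 : i ∈ (if 2 * i < 2 * m then ({(2 * i) / 2} : Set ℕ) else ∅) := by
        rw [if_pos (by omega)]
        simp only [Set.mem_singleton_iff]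
        omega
      have hm1 : i ∈ (if 2 * i + 1 < 2 * m then ({(2 * i + 1) / 2} : Set ℕ) else ∅) := by
        rw [if_pos (by omega)]
        simp only [Set.mem_singleton_iff]
        omega
      have hp := hpair {k : ℕ // i ∈ (if k < 2 * m then ({k / 2} : Set ℕ) else ∅)}
        ⟨2 * i, hm0⟩ ⟨2 * i + 1, hm1⟩
        (by intro hcontra
            rw [Subtype.mk_eq_mk] at hcontra
            omega)
        (by rintro ⟨k, hk⟩
            by_cases hk2 : k < 2 * m
            · rw [if_pos hk2] at hk
              simp only [Set.mem_singleton_iff] at hk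
              have : k = 2 * i ∨ k = 2 * i + 1 := by omega
              rcases this with h' | h'
              · left; exact Subtype.ext h'
              · right; exact Subtype.ext h'
            · rw [if_neg hk2] at hk
              exact absurd hk (Set.notMem_empty i))
        (fun k => (fun _ : ℕ => (1:X)) k.1)
      exact hp
    · simp only [if_neg hi]
      haveI : IsEmpty {k : ℕ // i ∈ (if k < 2 * m then ({k / 2} : Set ℕ) else ∅)} := by
        constructor
        rintro ⟨k, hk⟩
        by_cases hk2 : k < 2 * m
        · rw [if_pos hk2] at hk
          simp only [Set.mem_singleton_iff] at hk
          omega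
        · rw [if_neg hk2] at hk
          exact absurd hk (Set.notMem_empty i)
      exact sum_empty S hreord hempty hsingle _ _
  obtain ⟨_, _, h3⟩ := hreord ℕ ℕ (fun n => if n < m then (1:X) else 0) y
    (fun _ => 1) (fun k => if k < 2 * m then ({k / 2} : Set ℕ) else ∅)
    (fun i => if i < m then (1+1:X) else 0) hy hτ
  obtain ⟨R, hR, _⟩ := h3 (fun k => if k < 2 * m then (1:X) else 0) (by
    intro k
    by_cases hk : k < 2 * m
    · simp only [if_pos hk]
      have hmem : k / 2 ∈ (if k < 2 * m then ({k / 2} : Set ℕ) else ∅) := by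
        rw [if_pos hk]; exact rfl
      have hs := hsingle {i : ℕ // i ∈ (if k < 2 * m then ({k / 2} : Set ℕ) else ∅)}
        ⟨k / 2, hmem⟩
        (by rintro ⟨i, hi⟩
            rw [if_pos hk] at hi
            simp only [Set.mem_singleton_iff] at hi
            exact Subtype.ext hi)
        (fun i => if i.1 < m then (1:X) else 0)
      have hv : (if k / 2 < m then (1:X) else 0) = 1 := if_pos (by omega)
      rw [hv] at hs
      exact hs
    · simp only [if_neg hk]
      haveI : IsEmpty {i : ℕ // i ∈ (if k < 2 * m then ({k / 2} : Set ℕ) else ∅)} := by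
        constructor
        rintro ⟨i, hi⟩
        rw [if_neg hk] at hi
        exact absurd hi (Set.notMem_empty i)
      exact sum_empty S hreord hempty hsingle _ _)
  refine ⟨R, ?_⟩
  have : (fun k : ℕ => (1:X) * (if k < 2 * m then (1:X) else 0))
      = (fun k : ℕ => if k < 2 * m then (1:X) else 0) := by
    funext k; rw [one_mul]
  rwa [this] at hR

lemma sum_ones_pow (hreord : LeftReorderable S)
    (hempty : S PEmpty (fun i => i.elim) 0)
    (hsingle : ∀ (I : Type) (i₀ : I), (∀ i, i = i₀) → ∀ a : I → X, S I a (a i₀))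
    (hpair : ∀ (I : Type) (i₀ i₁ : I), i₀ ≠ i₁ → (∀ i, i = i₀ ∨ i = i₁) →
      ∀ a : I → X, S I a (a i₀ + a i₁)) :
    ∀ j : ℕ, ∃ y, S ℕ (fun n => if n < 2 ^ j then (1:X) else 0) y := by
  intro j
  induction j with
  | zero =>
    refine ⟨1, ?_⟩
    have h := sum_delta S hreord hempty hsingle (1:X)
    have : (fun n : ℕ => if n = 0 then (1:X) else 0)
        = (fun n : ℕ => if n < 2 ^ 0 then (1:X) else 0) := by
      funext n
      simp [Nat.lt_one_iff]
    rwa [this] at h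
  | succ j ih =>
    obtain ⟨y, hy⟩ := sum_ones_double S hreord hempty hsingle hpair (2 ^ j) ih
    refine ⟨y, ?_⟩
    have : (fun n : ℕ => if n < 2 * 2 ^ j then (1:X) else 0)
        = (fun n : ℕ => if n < 2 ^ (j + 1) then (1:X) else 0) := by
      funext n
      have : 2 * 2 ^ j = 2 ^ (j + 1) := by rw [pow_succ]; ring
      rw [this]
    rwa [this] at hy

lemma sum_le_ones (hreord : LeftReorderable S)
    (hfun : ∀ (I : Type) (a : I → X) (x y : X), S I a x → S I a y → x = y)
    (hempty : S PEmpty (fun i => i.elim) 0)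
    (hsingle : ∀ (I : Type) (i₀ : I), (∀ i, i = i₀) → ∀ a : I → X, S I a (a i₀))
    (hpair : ∀ (I : Type) (i₀ i₁ : I), i₀ ≠ i₁ → (∀ i, i = i₀ ∨ i = i₁) →
      ∀ a : I → X, S I a (a i₀ + a i₁)) (i : ℕ) :
    ∃ τ, S {k : ℕ // k ≤ i} (fun _ => (1:X)) τ := by
  obtain ⟨y, hy⟩ := sum_ones_pow S hreord hempty hsingle hpair (i + 1)
  obtain ⟨s₁, s₂, hs₁, hs₂, hx⟩ := sum_split_s18 S hreord hfun hsingle hpair ℕ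
    (fun n => if n < 2 ^ (i + 1) then (1:X) else 0) y hy {k : ℕ | k ≤ i}
  refine ⟨s₁, ?_⟩
  have hlt : i < 2 ^ (i + 1) := by
    calc i < 2 ^ i := Nat.lt_two_pow_self (n := i)
    _ ≤ 2 ^ (i + 1) := Nat.pow_le_pow_right (by norm_num) (by omega)
  have : (fun j : {k : ℕ // k ∈ ({k : ℕ | k ≤ i} : Set ℕ)} =>
      if j.1 < 2 ^ (i + 1) then (1:X) else 0) = (fun _ => (1:X)) := by
    funext j
    exact if_pos (by have := j.2; simp only [Set.mem_setOf_eq] at this; omega)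
  rw [this] at hs₁
  exact hs₁
end Aux

/-- Let `X` be a ring with a summation system `S` making it a
reorderable ring whose induced addition and zero agree with the ring structure (left
reorderability, surjectivity, `Σ() = 0`, singletons sum simply, and two-entry families
sum by ring addition).  Then for `t ∈ X`, a family `a : ℕ → X` is summable with sum
`t` iff the family `k ↦ t - (a 0 + ⋯ + a (k-1))` is summable. -/
theorem stmt_18 {X : Type*} [Ring X]
    (S : (I : Type) → (I → X) → X → Prop)
    (hfun : ∀ (I : Type) (a : I → X) (x y : X), S I a x → S I a y → x = y)
    (hreord : LeftReorderable S)
    (hsurj : ∀ x : X, ∃ (I : Type) (a : I → X), S I a x)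
    (hempty : S PEmpty (fun i => i.elim) 0)
    (hsingle : ∀ (I : Type) (i₀ : I), (∀ i, i = i₀) → ∀ a : I → X, S I a (a i₀))
    (hpair : ∀ (I : Type) (i₀ i₁ : I), i₀ ≠ i₁ → (∀ i, i = i₀ ∨ i = i₁) →
      ∀ a : I → X, S I a (a i₀ + a i₁)) :
    ∀ (a : ℕ → X) (t : X),
      S ℕ a t ↔ ∃ y, S ℕ (fun k => t - ∑ i ∈ Finset.range k, a i) y := by

  intro a t
  constructor
  · -- forward direction
    intro ha
    have hτ : ∀ i : ℕ, S {k : ℕ // i ∈ ({j : ℕ | k ≤ j} : Set ℕ)}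
        (fun k => (fun _ : ℕ => (1:X)) k.1)
        ((fun i : ℕ => Classical.choose (sum_le_ones S hreord hfun hempty hsingle hpair i)) i) := by
      intro i
      exact Classical.choose_spec (sum_le_ones S hreord hfun hempty hsingle hpair i)
    obtain ⟨_, _, h3⟩ := hreord ℕ ℕ a t (fun _ => 1) (fun k => {j : ℕ | k ≤ j})
      (fun i => Classical.choose (sum_le_ones S hreord hfun hempty hsingle hpair i)) ha hτ
    obtain ⟨R, hR, _⟩ := h3 (fun k => t - ∑ i ∈ Finset.range k, a i) (by
      intro k
      have htail := sum_tails S hreord hfun hsingle hpair a t ha k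
      have htr := sum_transport S hreord hsingle ℕ
        {i : ℕ // i ∈ ({j : ℕ | k ≤ j} : Set ℕ)} (fun n => a (n + k))
        (t - ∑ i ∈ Finset.range k, a i)
        ⟨fun i => i.1 - k, fun n => ⟨n + k, by simp only [Set.mem_setOf_eq]; omega⟩,
          fun i => by
            apply Subtype.ext
            have := i.2
            simp only [Set.mem_setOf_eq] at this
            simp only []
            omega,
          fun n => by simp⟩ htail
      have heq : (fun i : {i : ℕ // i ∈ ({j : ℕ | k ≤ j} : Set ℕ)} => a (i.1 - k + k))
          = (fun i : {i : ℕ // i ∈ ({j : ℕ | k ≤ j} : Set ℕ)} => a i.1) := by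
        funext i
        congr 1
        have := i.2
        simp only [Set.mem_setOf_eq] at this
        omega
      have htr' : S {i : ℕ // i ∈ ({j : ℕ | k ≤ j} : Set ℕ)}
          (fun i => a (i.1 - k + k)) (t - ∑ i ∈ Finset.range k, a i) := htr
      rw [heq] at htr'
      exact htr')
    refine ⟨R, ?_⟩
    have : (fun k : ℕ => (1:X) * (t - ∑ i ∈ Finset.range k, a i))
        = (fun k : ℕ => t - ∑ i ∈ Finset.range k, a i) := by
      funext k; rw [one_mul]
    rwa [this] at hR
  · -- backward direction
    rintro ⟨y, hb⟩
    set b : ℕ → X := fun k => t - ∑ i ∈ Finset.range k, a i with hbdef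
    set r : ℕ ⊕ ℕ → X := Sum.elim (fun _ => (1:X)) (fun _ => (-1:X)) with hrdef
    set ψ1 : ℕ ⊕ ℕ → Set ℕ := Sum.elim (fun k => ({k} : Set ℕ)) (fun k => ({k + 1} : Set ℕ))
      with hψ1def
    have hτ1 : ∀ i : ℕ, S {k : ℕ ⊕ ℕ // i ∈ ψ1 k} (fun k => r k.1)
        ((fun i : ℕ => if i = 0 then (1:X) else 0) i) := by
      intro i
      match i with
      | 0 =>
        simp only [if_pos rfl]
        have h := hsingle {k : ℕ ⊕ ℕ // (0:ℕ) ∈ ψ1 k} ⟨Sum.inl 0, rfl⟩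
          (by rintro ⟨k, hk⟩
              cases k with
              | inl k =>
                have hk' : (0:ℕ) = k := hk
                exact Subtype.ext (congrArg Sum.inl hk'.symm)
              | inr k =>
                have hk' : (0:ℕ) = k + 1 := hk
                omega)
          (fun k => r k.1)
        exact h
      | (j+1) =>
        simp only [if_neg (Nat.succ_ne_zero j)]
        have h := hpair {k : ℕ ⊕ ℕ // (j+1:ℕ) ∈ ψ1 k}
          ⟨Sum.inl (j+1), rfl⟩ ⟨Sum.inr j, rfl⟩
          (by intro hc
              have hc := congrArg Subtype.val hc
              exact Sum.inl_ne_inr hc)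
          (by rintro ⟨k, hk⟩
              cases k with
              | inl k =>
                have hk' : (j+1:ℕ) = k := hk
                left; exact Subtype.ext (congrArg Sum.inl hk'.symm)
              | inr k =>
                have hk' : (j+1:ℕ) = k + 1 := hk
                right; exact Subtype.ext (congrArg Sum.inr (by omega)))
          (fun k => r k.1)
        have h2 : S {k : ℕ ⊕ ℕ // (j+1:ℕ) ∈ ψ1 k} (fun k => r k.1) (1 + (-1)) := h
        rwa [add_neg_cancel] at h2
    obtain ⟨_, _, h3⟩ := hreord ℕ (ℕ ⊕ ℕ) b y r ψ1
      (fun i => if i = 0 then (1:X) else 0) hb hτ1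
    obtain ⟨R, hR, hL⟩ := h3 (Sum.elim (fun k => b k) (fun k => b (k + 1))) (by
      intro k
      cases k with
      | inl k =>
        have h := hsingle {i : ℕ // i ∈ ψ1 (Sum.inl k)} ⟨k, rfl⟩
          (by rintro ⟨i, hi⟩
              have hi' : i = k := hi
              exact Subtype.ext hi')
          (fun i => b i.1)
        exact h
      | inr k =>
        have h := hsingle {i : ℕ // i ∈ ψ1 (Sum.inr k)} ⟨k + 1, rfl⟩
          (by rintro ⟨i, hi⟩
              have hi' : i = k + 1 := hi
              exact Subtype.ext hi')
          (fun i => b i.1)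
        exact h)
    have hRt : t = R := by
      apply hL
      have hδ := sum_delta S hreord hempty hsingle t
      have heq : (fun n : ℕ => if n = 0 then t else 0)
          = (fun i : ℕ => (if i = 0 then (1:X) else 0) * b i) := by
        funext i
        by_cases hi : i = 0
        · subst hi
          simp [hbdef]
        · simp [hi]
      rwa [heq] at hδ
    subst hRt
    -- step 2 : regroup in pairs
    set c : ℕ ⊕ ℕ → X := fun k => r k * Sum.elim (fun k => b k) (fun k => b (k + 1)) k
      with hcdef
    set ψ2 : ℕ → Set (ℕ ⊕ ℕ) := fun k => {Sum.inl k, Sum.inr k} with hψ2def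
    have hτ2 : ∀ i : ℕ ⊕ ℕ, S {k : ℕ // i ∈ ψ2 k} (fun k => (fun _ : ℕ => (1:X)) k.1)
        ((fun _ : ℕ ⊕ ℕ => (1:X)) i) := by
      intro i
      cases i with
      | inl j =>
        exact hsingle {k : ℕ // Sum.inl j ∈ ψ2 k} ⟨j, Or.inl rfl⟩
          (by rintro ⟨k, hk⟩
              rcases hk with hk | hk
              · exact Subtype.ext (Sum.inl.inj hk).symm
              · have hk'' : Sum.inl j = Sum.inr k := hk
                exact (Sum.inl_ne_inr hk'').elim)
          (fun _ => (1:X))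
      | inr j =>
        exact hsingle {k : ℕ // Sum.inr j ∈ ψ2 k} ⟨j, Or.inr rfl⟩
          (by rintro ⟨k, hk⟩
              rcases hk with hk | hk
              · have hk'' : Sum.inr j = Sum.inl k := hk
                exact (Sum.inr_ne_inl hk'').elim
              · have hk'' : Sum.inr j = Sum.inr k := hk
                exact Subtype.ext (Sum.inr.inj hk'').symm)
          (fun _ => (1:X))
    obtain ⟨_, _, h3'⟩ := hreord (ℕ ⊕ ℕ) ℕ c t (fun _ => 1) ψ2 (fun _ => 1) hR hτ2
    obtain ⟨R2, hR2, hL2⟩ := h3' (fun k => (1:X) * b k + (-1) * b (k + 1)) (by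
      intro k
      have h := hpair {i : ℕ ⊕ ℕ // i ∈ ψ2 k} ⟨Sum.inl k, Or.inl rfl⟩ ⟨Sum.inr k, Or.inr rfl⟩
        (by intro hc'
            have hc' := congrArg Subtype.val hc'
            exact Sum.inl_ne_inr hc')
        (by rintro ⟨i, hi⟩
            rcases hi with hi | hi
            · left; exact Subtype.ext hi
            · right; exact Subtype.ext hi)
        (fun i => c i.1)
      exact h)
    have hR2t : t = R2 := by
      apply hL2
      have heq : (fun i : ℕ ⊕ ℕ => (1:X) * c i) = c := by
        funext i; rw [one_mul]
      rw [heq]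
      exact hR
    subst hR2t
    have heq : (fun k : ℕ => (1:X) * ((1:X) * b k + (-1) * b (k + 1))) = a := by
      funext k
      simp only [hbdef, Finset.sum_range_succ, one_mul, neg_one_mul]
      abel
    rwa [heq] at hR2
end

section
/- Let X be a ring (with identity 1) and let Σ be a summation system on X satisfying: left reorderability; surjectivity; the empty family is summable with Σ() = 0; every singleton family sums to its sole member; and every two-entry family (a, b) is summable with Σ(a, b) = a + b, where + is the ring addition (so X with Σ is a reorderable ring whose induced addition and zero agree with the ring structure). Assume X is an I₀-ring: every left ideal of X containing no nonzero idempotent is contained in the Jacobson radical J of X. Then J is closed under countable Σ-sums: for every summable family a : ℕ → X with a i ∈ J for all i ∈ ℕ, the sum Σa lies in J. -/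
section JacAux
variable {X : Type*} [Ring X]

private lemma jac_left_inv {z : X} (hz : z ∈ (⊥ : Ideal X).jacobson) :
    ∃ u : X, u * (1 - z) = 1 := by
  obtain ⟨w, hw⟩ := (Ideal.mem_jacobson_iff.mp hz) (-1)
  refine ⟨w, ?_⟩
  rw [Ideal.mem_bot, sub_eq_zero] at hw
  calc w * (1 - z) = w * (-1) * z + w := by noncomm_ring
    _ = 1 := hw

private lemma mem_jac_of {z : X} (h : ∀ c : X, ∃ u : X, u * (1 - c * z) = 1) :
    z ∈ (⊥ : Ideal X).jacobson := by
  rw [Ideal.mem_jacobson_iff]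
  intro y
  obtain ⟨u, hu⟩ := h (-y)
  refine ⟨u, ?_⟩
  rw [Ideal.mem_bot, sub_eq_zero]
  calc u * y * z + u = u * (1 - (-y) * z) := by noncomm_ring
    _ = 1 := hu

private lemma jac_mul_right {z : X} (hz : z ∈ (⊥ : Ideal X).jacobson) (c : X) :
    z * c ∈ (⊥ : Ideal X).jacobson := by
  apply mem_jac_of
  intro d
  have h1 : c * d * z ∈ (⊥ : Ideal X).jacobson := Ideal.mul_mem_left _ _ hz
  obtain ⟨v, hv⟩ := jac_left_inv h1
  have hvc : v * (c * d * z) = v - 1 := by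
    rw [mul_sub, mul_one] at hv
    rw [← hv]; abel
  refine ⟨1 + d * z * v * c, ?_⟩
  calc (1 + d * z * v * c) * (1 - d * (z * c))
      = 1 + d * z * v * c - d * (z * c) - d * (z * ((v * (c * d * z)) * c)) := by noncomm_ring
    _ = 1 + d * z * v * c - d * (z * c) - d * (z * ((v - 1) * c)) := by rw [hvc]
    _ = 1 := by noncomm_ring

private lemma jac_unit {z : X} (hz : z ∈ (⊥ : Ideal X).jacobson) :
    ∃ u : X, u * (1 - z) = 1 ∧ (1 - z) * u = 1 := by
  obtain ⟨u, hu⟩ := jac_left_inv hz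
  have huz : -(u * z) ∈ (⊥ : Ideal X).jacobson :=
    Submodule.neg_mem _ (Ideal.mul_mem_left _ u hz)
  obtain ⟨w, hw⟩ := jac_left_inv huz
  have hu' : 1 + u * z = u := by
    rw [mul_sub, mul_one] at hu
    rw [← hu]; abel
  have hwu : w * u = 1 := by rw [sub_neg_eq_add, hu'] at hw; exact hw
  have hweq : w = 1 - z := by
    calc w = w * (u * (1 - z)) := by rw [hu, mul_one]
      _ = (w * u) * (1 - z) := by rw [mul_assoc]
      _ = 1 - z := by rw [hwu, one_mul]
  exact ⟨u, hu, by rw [← hweq]; exact hwu⟩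

end JacAux

section SumAux
variable {X : Type*} [Ring X] {S : (I : Type) → (I → X) → X → Prop}

private lemma aux_empty (hreord : LeftReorderable S)
    (hempty : S PEmpty (fun i => i.elim) 0)
    (T : Type) (hT : T → False) (f : T → X) : S T f 0 := by
  obtain ⟨-, -, h3⟩ := hreord PEmpty T (fun i => i.elim) 0 f (fun _ => ∅)
      (fun i => i.elim) hempty (fun i => i.elim)
  obtain ⟨R, hR, huni⟩ := h3 (fun k => (hT k).elim) (fun k => (hT k).elim)
  have e1 : (fun i : PEmpty => (fun i : PEmpty => (i.elim : X)) i * (fun i : PEmpty => (i.elim : X)) i)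
      = (fun i : PEmpty => (i.elim : X)) := funext fun i => i.elim
  have h0 : (0 : X) = R := huni 0 (by rw [e1]; exact hempty)
  have e2 : (fun k => f k * (fun k => ((hT k).elim : X)) k) = f := funext fun k => (hT k).elim
  rw [e2] at hR
  rw [h0]
  exact hR

private lemma aux_transfer (hreord : LeftReorderable S)
    (hsingle : ∀ (I : Type) (i₀ : I), (∀ i, i = i₀) → ∀ a : I → X, S I a (a i₀))
    {I I' : Type} (E : I' ≃ I) {a : I → X} {x : X} (ha : S I a x) :
    S I' (fun i => a (E i)) x := by
  obtain ⟨-, -, h3⟩ := hreord I I' a x (fun _ => (1 : X)) (fun k => {E k}) (fun _ => (1 : X)) ha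
    (fun i => by
      have hall : ∀ k : {k : I' // i ∈ ({E k} : Set I)}, k = ⟨E.symm i, (E.apply_symm_apply i).symm⟩ := by
        rintro ⟨k, hk⟩
        have : i = E k := hk
        apply Subtype.ext
        simp only []
        rw [this, E.symm_apply_apply]
      exact hsingle _ _ hall (fun _ => (1 : X)))
  obtain ⟨R, hR, huni⟩ := h3 (fun k => a (E k))
    (fun k => by
      have hall : ∀ j : {i : I // i ∈ ({E k} : Set I)}, j = ⟨E k, rfl⟩ := by
        rintro ⟨j, hj⟩; exact Subtype.ext hj
      exact hsingle _ _ hall (fun j => a j.1))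
  have hxR : x = R := huni x (by simpa using ha)
  have hR' : S I' (fun k => 1 * a (E k)) R := hR
  rw [← hxR] at hR'
  simpa using hR'

private lemma aux_smul (hreord : LeftReorderable S)
    (hsingle : ∀ (I : Type) (i₀ : I), (∀ i, i = i₀) → ∀ a : I → X, S I a (a i₀))
    (hfun : ∀ (I : Type) (a : I → X) (x y : X), S I a x → S I a y → x = y)
    {I : Type} {a : I → X} {x : X} (ha : S I a x) (c : X) :
    S I (fun i => c * a i) (c * x) := by
  obtain ⟨h1, -, h3⟩ := hreord I PUnit a x (fun _ => c) (fun _ => (Set.univ : Set I)) (fun _ => c) ha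
    (fun i => by
      have hall : ∀ k : {k : PUnit // i ∈ (Set.univ : Set I)}, k = ⟨⟨⟩, trivial⟩ :=
        fun k => Subtype.ext rfl
      exact hsingle _ _ hall (fun _ => c))
  obtain ⟨R, hR, huni⟩ := h3 (fun _ => x)
    (fun k => by
      have := aux_transfer hreord hsingle
        (⟨fun p => p.1, fun i => ⟨i, trivial⟩, fun p => Subtype.ext rfl, fun i => rfl⟩ :
          {i : I // i ∈ (Set.univ : Set I)} ≃ I) ha
      exact this)
  have hRcx : R = c * x := by
    have hs : S PUnit (fun _ => c * x) (c * x) :=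
      hsingle PUnit ⟨⟩ (fun _ => rfl) (fun _ => c * x)
    exact hfun PUnit _ _ _ hR hs
  obtain ⟨L, hL⟩ := h1
  have : L = R := huni L hL
  rw [this, hRcx] at hL
  exact hL

private lemma aux_add (hreord : LeftReorderable S)
    (hsingle : ∀ (I : Type) (i₀ : I), (∀ i, i = i₀) → ∀ a : I → X, S I a (a i₀))
    (hpair : ∀ (I : Type) (i₀ i₁ : I), i₀ ≠ i₁ → (∀ i, i = i₀ ∨ i = i₁) →
      ∀ a : I → X, S I a (a i₀ + a i₁))
    (hfun : ∀ (I : Type) (a : I → X) (x y : X), S I a x → S I a y → x = y)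
    {I : Type} {a : I → X} {x : X} (ha : S I a x) (r r' : I → X) {y y' : X}
    (hy : S I (fun i => r i * a i) y) (hy' : S I (fun i => r' i * a i) y') :
    S I (fun i => (r i + r' i) * a i) (y + y') := by
  obtain ⟨h1, -, h3⟩ := hreord I (Bool × I) a x (fun k => bif k.1 then r k.2 else r' k.2)
      (fun k => ({k.2} : Set I)) (fun i => r i + r' i) ha
    (fun i => by
      have h := hpair {k : Bool × I // i ∈ ({k.2} : Set I)}
        ⟨(true, i), rfl⟩ ⟨(false, i), rfl⟩
        (by intro h; have := congrArg (fun p => p.1.1) h; simp at this)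
        (by
          rintro ⟨⟨bb, j⟩, hj⟩
          have hji : i = j := hj
          cases bb
          · right; apply Subtype.ext; simp only []; rw [hji]
          · left; apply Subtype.ext; simp only []; rw [hji])
        (fun k => bif k.1.1 then r k.1.2 else r' k.1.2)
      exact h)
  obtain ⟨R, hR, huni⟩ := h3 (fun k => a k.2)
    (fun k => by
      have hall : ∀ j : {i : I // i ∈ ({k.2} : Set I)}, j = ⟨k.2, rfl⟩ := by
        rintro ⟨j, hj⟩; exact Subtype.ext hj
      exact hsingle _ _ hall (fun j => a j.1))
  have hRfam : S (Bool × I) (fun k => (bif k.1 then r k.2 else r' k.2) * a k.2) R := hR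
  obtain ⟨-, -, h3'⟩ := hreord (Bool × I) Bool
      (fun k => (bif k.1 then r k.2 else r' k.2) * a k.2) R
      (fun _ => (1 : X)) (fun bb => {k : Bool × I | k.1 = bb}) (fun _ => (1 : X)) hRfam
    (fun k => by
      have hall : ∀ j : {bb : Bool // k ∈ {k' : Bool × I | k'.1 = bb}}, j = ⟨k.1, rfl⟩ := by
        rintro ⟨bb, h⟩
        exact Subtype.ext (show bb = k.1 from (show k.1 = bb from h).symm)
      exact hsingle _ _ hall (fun _ => (1 : X)))
  obtain ⟨R2, hR2, huni2⟩ := h3' (fun bb => bif bb then y else y')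
    (by
      intro bb
      cases bb
      · have h := aux_transfer hreord hsingle
          (⟨fun p => p.1.2, fun i => ⟨(false, i), rfl⟩,
            fun p => Subtype.ext (Prod.ext (p.2 : p.1.1 = false).symm rfl),
            fun i => rfl⟩ :
            {k : Bool × I // k ∈ {k' : Bool × I | k'.1 = false}} ≃ I) hy'
        have h2 : S {k : Bool × I // k ∈ {k' : Bool × I | k'.1 = false}}
            (fun p => r' p.1.2 * a p.1.2) y' := h
        have hfe : (fun p : {k : Bool × I // k ∈ {k' : Bool × I | k'.1 = false}} =>
            r' p.1.2 * a p.1.2)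
            = fun p => (bif p.1.1 then r p.1.2 else r' p.1.2) * a p.1.2 := by
          funext p
          have hp : p.1.1 = false := p.2
          rw [hp, Bool.cond_false]
        rw [hfe] at h2
        exact h2
      · have h := aux_transfer hreord hsingle
          (⟨fun p => p.1.2, fun i => ⟨(true, i), rfl⟩,
            fun p => Subtype.ext (Prod.ext (p.2 : p.1.1 = true).symm rfl),
            fun i => rfl⟩ :
            {k : Bool × I // k ∈ {k' : Bool × I | k'.1 = true}} ≃ I) hy
        have h2 : S {k : Bool × I // k ∈ {k' : Bool × I | k'.1 = true}}
            (fun p => r p.1.2 * a p.1.2) y := h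
        have hfe : (fun p : {k : Bool × I // k ∈ {k' : Bool × I | k'.1 = true}} =>
            r p.1.2 * a p.1.2)
            = fun p => (bif p.1.1 then r p.1.2 else r' p.1.2) * a p.1.2 := by
          funext p
          have hp : p.1.1 = true := p.2
          rw [hp, Bool.cond_true]
        rw [hfe] at h2
        exact h2)
  have hRR2 : R = R2 := huni2 R (by simpa using hRfam)
  have hR2val : R2 = y + y' := by
    have hp := hpair Bool true false (by simp)
      (fun bb => by cases bb
                    · exact Or.inr rfl
                    · exact Or.inl rfl)
      (fun bb => 1 * (bif bb then y else y'))
    have := hfun Bool _ _ _ hR2 hp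
    simpa using this
  obtain ⟨L, hL⟩ := h1
  have hLR : L = R := huni L hL
  have : S I (fun i => (r i + r' i) * a i) L := hL
  rw [hLR, hRR2, hR2val] at this
  exact this

private lemma aux_fin (hreord : LeftReorderable S)
    (hempty : S PEmpty (fun i => i.elim) 0)
    (hsingle : ∀ (I : Type) (i₀ : I), (∀ i, i = i₀) → ∀ a : I → X, S I a (a i₀))
    (hpair : ∀ (I : Type) (i₀ i₁ : I), i₀ ≠ i₁ → (∀ i, i = i₀ ∨ i = i₁) →
      ∀ a : I → X, S I a (a i₀ + a i₁)) :
    ∀ (m : ℕ) (c : ℕ → X) (T : Type) (E : T ≃ {n : ℕ // n < m}),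
    S T (fun k => c (E k).1) (∑ n ∈ Finset.range m, c n) := by
  intro m
  induction m with
  | zero =>
    intro c T E
    rw [Finset.range_zero, Finset.sum_empty]
    exact aux_empty hreord hempty T (fun k => absurd (E k).2 (Nat.not_lt_zero _)) _
  | succ m IH =>
    intro c T E
    have hBoolbase : S Bool (fun _ => (1 : X)) ((1 : X) + 1) :=
      hpair Bool true false (by simp) (fun b => by cases b
                                                   · exact Or.inr rfl
                                                   · exact Or.inl rfl) (fun _ => (1 : X))
    obtain ⟨-, -, h3⟩ := hreord Bool T (fun _ => (1 : X)) ((1 : X) + 1)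
        (fun k => c (E k).1)
        (fun k => ({bb : Bool | bb = decide ((E k).1 < m)} : Set Bool))
        (fun bb => bif bb then (∑ n ∈ Finset.range m, c n) else c m)
        hBoolbase
      (fun bb => by
        cases bb
        · have hmem : (false : Bool) ∈ {bb : Bool | bb = decide ((E (E.symm ⟨m, Nat.lt_succ_self m⟩)).1 < m)} := by
            simp only [Set.mem_setOf_eq, Equiv.apply_symm_apply]
            simp
          have hall : ∀ k : {k : T // (false : Bool) ∈ {bb : Bool | bb = decide ((E k).1 < m)}},
              k = ⟨E.symm ⟨m, Nat.lt_succ_self m⟩, hmem⟩ := by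
            rintro ⟨k, hk⟩
            have hk' : ¬ (E k).1 < m := by
              have : (false : Bool) = decide ((E k).1 < m) := hk
              exact of_decide_eq_false this.symm
            have hEk : (E k).1 = m := le_antisymm (Nat.le_of_lt_succ (E k).2) (Nat.le_of_not_lt hk')
            apply Subtype.ext
            have h2 : E k = ⟨m, Nat.lt_succ_self m⟩ := Subtype.ext hEk
            show k = E.symm ⟨m, Nat.lt_succ_self m⟩
            rw [← h2, E.symm_apply_apply]
          have hs := hsingle _ _ hall (fun k => c (E k.1).1)
          have hval : c (E (E.symm ⟨m, Nat.lt_succ_self m⟩)).1 = c m := by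
            rw [E.apply_symm_apply]
          rw [show ((⟨E.symm ⟨m, Nat.lt_succ_self m⟩, hmem⟩ :
              {k : T // (false : Bool) ∈ {bb : Bool | bb = decide ((E k).1 < m)}}).1)
              = E.symm ⟨m, Nat.lt_succ_self m⟩ from rfl] at hs
          rw [hval] at hs
          exact hs
        · exact IH c {k : T // (true : Bool) ∈ {bb : Bool | bb = decide ((E k).1 < m)}}
            { toFun := fun k => ⟨(E k.1).1, of_decide_eq_true (show (true : Bool) = _ from k.2).symm⟩
              invFun := fun n => ⟨E.symm ⟨n.1, Nat.lt_succ_of_lt n.2⟩, by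
                simp only [Set.mem_setOf_eq, Equiv.apply_symm_apply]
                exact (decide_eq_true n.2).symm⟩
              left_inv := fun k => by
                apply Subtype.ext
                have : (⟨(E k.1).1, Nat.lt_succ_of_lt (of_decide_eq_true (show (true : Bool) = _ from k.2).symm)⟩ :
                    {n : ℕ // n < m + 1}) = E k.1 := Subtype.ext rfl
                simp only []
                rw [this, E.symm_apply_apply]
              right_inv := fun n => by
                apply Subtype.ext
                simp only [Equiv.apply_symm_apply] })
    obtain ⟨R, hR, huni⟩ := h3 (fun _ => (1 : X))
      (fun k => by
        have hall : ∀ j : {bb : Bool // bb ∈ {bb : Bool | bb = decide ((E k).1 < m)}},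
            j = ⟨decide ((E k).1 < m), rfl⟩ := by
          rintro ⟨bb, h⟩; exact Subtype.ext h
        exact hsingle _ _ hall (fun _ => (1 : X)))
    have hR' : S T (fun k => c (E k).1 * 1) R := hR
    have hfe : (fun k : T => c (E k).1 * 1) = fun k => c (E k).1 := funext fun k => mul_one _
    rw [hfe] at hR'
    have hval : (∑ n ∈ Finset.range m, c n) * 1 + c m * 1 = R := by
      apply huni
      have hp := hpair Bool true false (by simp)
        (fun b => by cases b
                     · exact Or.inr rfl
                     · exact Or.inl rfl)
        (fun bb => (bif bb then (∑ n ∈ Finset.range m, c n) else c m) * (1 : X))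
      exact hp
    have hfin : (∑ n ∈ Finset.range (m+1), c n) = R := by
      rw [← hval, Finset.sum_range_succ]; simp
    rw [hfin]
    exact hR'

private lemma aux_selfmul (hreord : LeftReorderable S)
    (hsingle : ∀ (I : Type) (i₀ : I), (∀ i, i = i₀) → ∀ a : I → X, S I a (a i₀))
    (hfun : ∀ (I : Type) (a : I → X) (x y : X), S I a x → S I a y → x = y)
    {f : ℕ → X} {y : X} (hf : S ℕ f y) :
    S ℕ (fun i => f i * y) (y * y) := by
  obtain ⟨-, -, h3⟩ := hreord ℕ (ℕ × ℕ) f y (fun p => f p.1) (fun p => ({p.2} : Set ℕ))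
      (fun _ => y) hf
    (fun i => by
      exact aux_transfer hreord hsingle
        (⟨fun p => p.1.1, fun n => ⟨(n, i), rfl⟩,
          fun p => Subtype.ext (Prod.ext rfl (show i = p.1.2 from p.2)),
          fun n => rfl⟩ :
          {p : ℕ × ℕ // i ∈ ({p.2} : Set ℕ)} ≃ ℕ) hf)
  obtain ⟨R, hR, huni⟩ := h3 (fun p => f p.2)
    (fun p => by
      have hall : ∀ j : {i : ℕ // i ∈ ({p.2} : Set ℕ)}, j = ⟨p.2, rfl⟩ := by
        rintro ⟨j, hj⟩; exact Subtype.ext hj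
      exact hsingle _ _ hall (fun j => f j.1))
  have hyyR : y * y = R := huni (y * y) (aux_smul hreord hsingle hfun hf y)
  have hπ : S (ℕ × ℕ) (fun p => f p.1 * f p.2) R := hR
  obtain ⟨-, -, h3'⟩ := hreord (ℕ × ℕ) ℕ (fun p => f p.1 * f p.2) R
      (fun _ => (1 : X)) (fun n => {p : ℕ × ℕ | p.1 = n}) (fun _ => (1 : X)) hπ
    (fun p => by
      have hall : ∀ j : {n : ℕ // p ∈ {q : ℕ × ℕ | q.1 = n}}, j = ⟨p.1, rfl⟩ := by
        rintro ⟨n, h⟩; exact Subtype.ext (show n = p.1 from (show p.1 = n from h).symm)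
      exact hsingle _ _ hall (fun _ => (1 : X)))
  obtain ⟨R2, hR2, huni2⟩ := h3' (fun n => f n * y)
    (fun n => by
      have h := aux_transfer hreord hsingle
        (⟨fun p => p.1.2, fun j => ⟨(n, j), rfl⟩,
          fun p => Subtype.ext (Prod.ext (show p.1.1 = n from p.2).symm rfl),
          fun j => rfl⟩ :
          {p : ℕ × ℕ // p ∈ {q : ℕ × ℕ | q.1 = n}} ≃ ℕ)
        (aux_smul hreord hsingle hfun hf (f n))
      have h2 : S {p : ℕ × ℕ // p ∈ {q : ℕ × ℕ | q.1 = n}}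
          (fun p => f n * f p.1.2) (f n * y) := h
      have hfe : (fun p : {p : ℕ × ℕ // p ∈ {q : ℕ × ℕ | q.1 = n}} => f n * f p.1.2)
          = fun p => f p.1.1 * f p.1.2 := by
        funext p
        have hp : p.1.1 = n := p.2
        rw [hp]
      rw [hfe] at h2
      exact h2)
  have hRR2 : R = R2 := huni2 R (by simpa using hπ)
  have hR2' : S ℕ (fun n => 1 * (f n * y)) R2 := hR2
  rw [← hRR2, ← hyyR] at hR2'
  simpa using hR2'

private lemma aux_tail (hreord : LeftReorderable S)
    (hempty : S PEmpty (fun i => i.elim) 0)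
    (hsingle : ∀ (I : Type) (i₀ : I), (∀ i, i = i₀) → ∀ a : I → X, S I a (a i₀))
    (hpair : ∀ (I : Type) (i₀ i₁ : I), i₀ ≠ i₁ → (∀ i, i = i₀ ∨ i = i₁) →
      ∀ a : I → X, S I a (a i₀ + a i₁))
    (hfun : ∀ (I : Type) (a : I → X) (x y : X), S I a x → S I a y → x = y)
    {b : ℕ → X} {e : X} (hb : S ℕ b e) (k : ℕ) :
    S {i : ℕ // i ∈ {j : ℕ | decide (k ≤ j) = true}} (fun i => b i.1)
      (e - ∑ n ∈ Finset.range k, b n) := by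
  obtain ⟨-, h2, h3⟩ := hreord ℕ Bool b e (fun _ => (1 : X))
      (fun bb => {j : ℕ | decide (k ≤ j) = bb}) (fun _ => (1 : X)) hb
    (fun i => by
      have hall : ∀ j : {bb : Bool // i ∈ {j : ℕ | decide (k ≤ j) = bb}},
          j = ⟨decide (k ≤ i), rfl⟩ := by
        rintro ⟨bb, h⟩; exact Subtype.ext (show bb = decide (k ≤ i) from (show decide (k ≤ i) = bb from h).symm)
      exact hsingle _ _ hall (fun _ => (1 : X)))
  obtain ⟨s1, hs1⟩ := h2 true
  obtain ⟨s0, hs0⟩ := h2 false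
  have hs0' : s0 = ∑ n ∈ Finset.range k, b n := by
    have hfin := aux_fin hreord hempty hsingle hpair k b
      {i : ℕ // i ∈ {j : ℕ | decide (k ≤ j) = (false : Bool)}}
      ⟨fun j => ⟨j.1, Nat.lt_of_not_le (of_decide_eq_false j.2)⟩,
       fun n => ⟨n.1, decide_eq_false (Nat.not_le_of_lt n.2)⟩,
       fun j => Subtype.ext rfl, fun n => Subtype.ext rfl⟩
    exact hfun _ _ _ _ hs0 hfin
  obtain ⟨R, hR, huni⟩ := h3 (fun bb => bif bb then s1 else s0)
    (fun bb => by cases bb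
                  · exact hs0
                  · exact hs1)
  have hRval : R = 1 * s1 + 1 * s0 := by
    have hp := hpair Bool true false (by simp)
      (fun b => by cases b
                   · exact Or.inr rfl
                   · exact Or.inl rfl)
      (fun bb => 1 * (bif bb then s1 else s0))
    exact hfun Bool _ _ _ hR hp
  have heR : e = R := huni e (by simpa using hb)
  have hs1val : s1 = e - ∑ n ∈ Finset.range k, b n := by
    rw [heR, hRval, one_mul, one_mul, hs0']
    abel
  rw [← hs1val]
  exact hs1

private lemma idem_zero_aux (hreord : LeftReorderable S)
    (hempty : S PEmpty (fun i => i.elim) 0)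
    (hsingle : ∀ (I : Type) (i₀ : I), (∀ i, i = i₀) → ∀ a : I → X, S I a (a i₀))
    (hpair : ∀ (I : Type) (i₀ i₁ : I), i₀ ≠ i₁ → (∀ i, i = i₀ ∨ i = i₁) →
      ∀ a : I → X, S I a (a i₀ + a i₁))
    (hfun : ∀ (I : Type) (a : I → X) (x y : X), S I a x → S I a y → x = y)
    {b : ℕ → X} {e : X}
    (hmem : ∀ i, b i ∈ (⊥ : Ideal X).jacobson)
    (hb : S ℕ b e) (hbe : ∀ i, b i * e = b i) : e = 0 := by
  have hσJ : ∀ n, (∑ i ∈ Finset.range n, b i) ∈ (⊥ : Ideal X).jacobson :=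
    fun n => Ideal.sum_mem _ (fun i _ => hmem i)
  choose v hv1 hv2 using fun n => jac_unit (hσJ n)
  have hσe : ∀ n, (∑ i ∈ Finset.range n, b i) * e = ∑ i ∈ Finset.range n, b i := fun n => by
    rw [Finset.sum_mul]
    exact Finset.sum_congr rfl fun i _ => hbe i
  have hvσ : ∀ n, v n * (∑ i ∈ Finset.range n, b i) = v n - 1 := fun n => by
    have h := hv1 n
    rw [mul_sub, mul_one] at h
    rw [← h]; abel
  have hve : ∀ n, v n * e = e + (v n - 1) := fun n => by
    have h1 : v n = 1 + v n * (∑ i ∈ Finset.range n, b i) := by rw [hvσ n]; abel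
    conv_lhs => rw [h1]
    rw [add_mul, one_mul, mul_assoc, hσe n, hvσ n]
  have hvτ : ∀ n, v n * (e - ∑ i ∈ Finset.range n, b i) = e := fun n => by
    rw [mul_sub, hve n, hvσ n]; abel
  have keyid : ∀ n, (v (n+1) - v n) * (e - ∑ i ∈ Finset.range n, b i) = v (n+1) * b n := fun n => by
    have hsp : e - ∑ i ∈ Finset.range n, b i
        = b n + (e - ∑ i ∈ Finset.range (n+1), b i) := by
      rw [Finset.sum_range_succ]; abel
    rw [sub_mul, hvτ n, hsp, mul_add, hvτ (n+1)]
    abel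
  obtain ⟨hc1, -, hc3⟩ := hreord ℕ ℕ b e (fun n => v (n+1) - v n)
      (fun n => {j : ℕ | decide (n ≤ j) = true}) (fun i => v (i+1) - v 0) hb
    (fun i => by
      have hfin := aux_fin hreord hempty hsingle hpair (i+1) (fun n => v (n+1) - v n)
        {n : ℕ // i ∈ {j : ℕ | decide (n ≤ j) = true}}
        ⟨fun k => ⟨k.1, Nat.lt_succ_of_le (of_decide_eq_true k.2)⟩,
         fun n => ⟨n.1, decide_eq_true (Nat.le_of_lt_succ n.2)⟩,
         fun k => Subtype.ext rfl, fun n => Subtype.ext rfl⟩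
      rw [Finset.sum_range_sub] at hfin
      exact hfin)
  obtain ⟨R, hR, huni⟩ := hc3 (fun k => e - ∑ i ∈ Finset.range k, b i)
    (fun k => aux_tail hreord hempty hsingle hpair hfun hb k)
  have hR2 : S ℕ (fun n => (v (n+1) - v n) * (e - ∑ i ∈ Finset.range n, b i)) R := hR
  have hkey : (fun n => (v (n+1) - v n) * (e - ∑ i ∈ Finset.range n, b i))
      = fun n => v (n+1) * b n := funext keyid
  rw [hkey] at hR2
  obtain ⟨Lw, hLw⟩ := hc1
  have hLwR : Lw = R := huni Lw hLw
  have hB : S ℕ (fun i => (v (i+1) - v 0) * b i) R := by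
    have h : S ℕ (fun i => (v (i+1) - v 0) * b i) Lw := hLw
    rwa [hLwR] at h
  have hBneg : S ℕ (fun i => (-(v (i+1) - v 0)) * b i) (-R) := by
    have h := aux_smul hreord hsingle hfun hB (-1)
    have h' : S ℕ (fun i => (-1 : X) * ((v (i+1) - v 0) * b i)) ((-1) * R) := h
    have h2 : (fun i => (-1 : X) * ((v (i+1) - v 0) * b i))
        = fun i => (-(v (i+1) - v 0)) * b i := funext fun i => by
      rw [neg_one_mul, ← neg_mul]
    rw [h2, neg_one_mul] at h'
    exact h'
  have hadd := aux_add hreord hsingle hpair hfun hb (fun i => v (i+1))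
    (fun i => -(v (i+1) - v 0)) hR2 hBneg
  have h0 : S ℕ (fun i => v 0 * b i) 0 := by
    have h2 : (fun i => (v (i+1) + -(v (i+1) - v 0)) * b i) = fun i => v 0 * b i :=
      funext fun i => by congr 1; abel
    have h3 : R + -R = (0 : X) := by abel
    have h' : S ℕ (fun i => (v (i+1) + -(v (i+1) - v 0)) * b i) (R + -R) := hadd
    rwa [h2, h3] at h'
  have h4 : S ℕ (fun i => v 0 * b i) (v 0 * e) := aux_smul hreord hsingle hfun hb (v 0)
  have h5 : v 0 * e = 0 := hfun ℕ _ _ _ h4 h0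
  calc e = 1 * e := (one_mul e).symm
    _ = ((1 - ∑ i ∈ Finset.range 0, b i) * v 0) * e := by rw [hv2 0]
    _ = (1 - ∑ i ∈ Finset.range 0, b i) * (v 0 * e) := by rw [mul_assoc]
    _ = 0 := by rw [h5, mul_zero]

private lemma idem_zero (hreord : LeftReorderable S)
    (hempty : S PEmpty (fun i => i.elim) 0)
    (hsingle : ∀ (I : Type) (i₀ : I), (∀ i, i = i₀) → ∀ a : I → X, S I a (a i₀))
    (hpair : ∀ (I : Type) (i₀ i₁ : I), i₀ ≠ i₁ → (∀ i, i = i₀ ∨ i = i₁) →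
      ∀ a : I → X, S I a (a i₀ + a i₁))
    (hfun : ∀ (I : Type) (a : I → X) (x y : X), S I a x → S I a y → x = y)
    {b0 : ℕ → X} {e : X}
    (hmem : ∀ i, b0 i ∈ (⊥ : Ideal X).jacobson)
    (hb0 : S ℕ b0 e) (he : e * e = e) : e = 0 := by
  have hb : S ℕ (fun i => b0 i * e) e := by
    have h := aux_selfmul hreord hsingle hfun hb0
    rwa [he] at h
  exact idem_zero_aux hreord hempty hsingle hpair hfun
    (fun i => jac_mul_right (hmem i) e) hb
    (fun i => by rw [mul_assoc, he])

end SumAux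

/-- Let `X` be a reorderable ring (left reorderability,
surjectivity, `Σ() = 0`, singletons sum simply, two-entry families sum by ring
addition) which is an `I₀`-ring: every left ideal without nonzero idempotents is
contained in the Jacobson radical `J`.  Then `J` is closed under countable `Σ`-sums. -/
theorem stmt_19 {X : Type*} [Ring X]
    (S : (I : Type) → (I → X) → X → Prop)
    (hfun : ∀ (I : Type) (a : I → X) (x y : X), S I a x → S I a y → x = y)
    (hreord : LeftReorderable S)
    (hsurj : ∀ x : X, ∃ (I : Type) (a : I → X), S I a x)
    (hempty : S PEmpty (fun i => i.elim) 0)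
    (hsingle : ∀ (I : Type) (i₀ : I), (∀ i, i = i₀) → ∀ a : I → X, S I a (a i₀))
    (hpair : ∀ (I : Type) (i₀ i₁ : I), i₀ ≠ i₁ → (∀ i, i = i₀ ∨ i = i₁) →
      ∀ a : I → X, S I a (a i₀ + a i₁))
    (hI0 : ∀ L : Ideal X, (∀ e ∈ L, e * e = e → e = 0) →
      L ≤ (⊥ : Ideal X).jacobson) :
    ∀ (a : ℕ → X) (x : X), S ℕ a x → (∀ i, a i ∈ (⊥ : Ideal X).jacobson) →
      x ∈ (⊥ : Ideal X).jacobson := by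
  intro a x hx haJ
  let L : Ideal X :=
    { carrier := {z | ∃ r : ℕ → X, S ℕ (fun i => r i * a i) z}
      add_mem' := by
        rintro y y' ⟨r, hr⟩ ⟨r', hr'⟩
        exact ⟨fun i => r i + r' i, aux_add hreord hsingle hpair hfun hx r r' hr hr'⟩
      zero_mem' := by
        refine ⟨fun _ => 0, ?_⟩
        show S ℕ (fun i => (0 : X) * a i) 0
        have h := aux_smul hreord hsingle hfun hx 0
        rwa [zero_mul] at h
      smul_mem' := by
        rintro c z ⟨r, hr⟩
        refine ⟨fun i => c * r i, ?_⟩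
        show S ℕ (fun i => (c * r i) * a i) (c * z)
        have h := aux_smul hreord hsingle hfun hr c
        have h2 : (fun i => c * (r i * a i)) = fun i => (c * r i) * a i :=
          funext fun i => (mul_assoc _ _ _).symm
        rw [h2] at h
        exact h }
  have hidem : ∀ e ∈ L, e * e = e → e = 0 := by
    rintro e ⟨r, hr⟩ he
    exact idem_zero hreord hempty hsingle hpair hfun
      (fun i => Ideal.mul_mem_left _ _ (haJ i)) hr he
  have hxL : x ∈ L := by
    refine ⟨fun _ => 1, ?_⟩
    simpa using hx
  exact hI0 L hidem hxL
end
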